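/- arXiv:1709.07907 — 12 statements merged into one kernel-verified Lean document; each statement's English description precedes it below -/
import Mathlib

section
/- Let X be a finite simple graph on n vertices with adjacency matrix A, and let A = ∑_{r=1}^d θ_r E_r be its spectral decomposition. Then the time average of the mixing matrix converges: (1/T) ∫_0^T (exp(itA) ∘ conj(exp(itA))) dt tends (entrywise) to ∑_{r=1}^d E_r ∘ E_r as T → ∞. -/
open scoped Matrix

lemma exp_spectral {V : Type*} [Fintype V] [DecidableEq V] {d : ℕ}
    (P : Fin d → Matrix V V ℂ)
    (horth : ∀ r s, P r * P s = if r = s then P r else 0)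
    (hsum : ∑ r, P r = 1) (c : Fin d → ℂ) :
    NormedSpace.exp (∑ r, c r • P r) = ∑ r, Complex.exp (c r) • P r := by
  have hpow : ∀ n : ℕ, (∑ r, c r • P r) ^ n = ∑ r, (c r) ^ n • P r := by
    intro n
    induction n with
    | zero => simpa using hsum.symm
    | succ n ih =>
      rw [pow_succ, ih, Finset.sum_mul_sum]
      rw [Finset.sum_congr rfl fun r _ => Finset.sum_eq_single r
        (fun s _ hs => by
          rw [Matrix.smul_mul, Matrix.mul_smul, horth, if_neg (Ne.symm hs)]
          simp)
        (by simp)]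
      refine Finset.sum_congr rfl fun r _ => ?_
      rw [Matrix.smul_mul, Matrix.mul_smul, horth, if_pos rfl, smul_smul, ← pow_succ]
  rw [NormedSpace.exp_eq_tsum (𝕂 := ℂ)]
  have h1 : ∀ n : ℕ, ((n.factorial : ℂ)⁻¹) • (∑ r, c r • P r) ^ n
      = ∑ r, (((n.factorial : ℂ)⁻¹) * (c r) ^ n) • P r := by
    intro n
    rw [hpow, Finset.smul_sum]
    simp [smul_smul]
  simp_rw [h1]
  have h2 : ∀ r : Fin d, HasSum (fun n : ℕ => (((n.factorial : ℂ)⁻¹) * (c r) ^ n) • P r)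
      (Complex.exp (c r) • P r) := by
    intro r
    have := (NormedSpace.exp_series_hasSum_exp' (𝕂 := ℂ) (c r)).smul_const (P r)
    simpa [Complex.exp_eq_exp_ℂ, smul_eq_mul] using this
  exact (hasSum_sum fun r _ => h2 r).tsum_eq

lemma avg_osc_zero {δ : ℝ} (hδ : δ ≠ 0) :
    Filter.Tendsto (fun T : ℝ => (T : ℂ)⁻¹ *
      ∫ t in (0:ℝ)..T, Complex.exp ((Complex.I * δ) * t)) Filter.atTop (nhds 0) := by
  set z : ℂ := Complex.I * δ with hzdef
  have hz : z ≠ 0 := by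
    simp [hzdef, Complex.I_ne_zero, Complex.ofReal_eq_zero, hδ]
  have hval : ∀ T : ℝ, (∫ t in (0:ℝ)..T, Complex.exp (z * t))
      = (Complex.exp (z * T) - 1) / z := by
    intro T
    rw [integral_exp_mul_complex hz]
    simp
  apply squeeze_zero_norm' (a := fun T : ℝ => (2 / ‖z‖) * T⁻¹)
  · filter_upwards [Filter.eventually_gt_atTop (0:ℝ)] with T hT
    have habs : ‖Complex.exp (z * T)‖ = 1 := by
      have : z * T = ((δ * T : ℝ) : ℂ) * Complex.I := by
        rw [hzdef]; push_cast; ring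
      rw [this, Complex.norm_exp_ofReal_mul_I]
    calc ‖(T:ℂ)⁻¹ * ∫ t in (0:ℝ)..T, Complex.exp (z * t)‖
        = T⁻¹ * (‖Complex.exp (z * T) - 1‖ / ‖z‖) := by
          rw [hval T, norm_mul, norm_div, norm_inv, Complex.norm_real, Real.norm_eq_abs,
            abs_of_pos hT]
      _ ≤ T⁻¹ * (2 / ‖z‖) := by
          gcongr
          refine (norm_sub_le _ _).trans ?_
          rw [habs, norm_one]
          norm_num
      _ = 2 / ‖z‖ * T⁻¹ := mul_comm _ _
  · simpa using (tendsto_inv_atTop_zero (𝕜 := ℝ)).const_mul (2 / ‖z‖)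

/-- Let `X` be a finite simple graph with adjacency matrix `A` and
spectral decomposition `A = ∑ θ r • E r`.  Then, entrywise, the time average
`(1/T) ∫_0^T exp(itA) ∘ conj (exp(itA)) dt` tends to `∑ r, E r ⊙ E r` as `T → ∞`. -/
theorem average_mixing_matrix_limit {V : Type*} [Fintype V] [DecidableEq V]
    (G : SimpleGraph V) [DecidableRel G.Adj]
    (A : Matrix V V ℝ) (hA : A = G.adjMatrix ℝ)
    (d : ℕ) (θ : Fin d → ℝ) (hθ : Function.Injective θ)
    (E : Fin d → Matrix V V ℝ)
    (hsymm : ∀ r, (E r).IsSymm)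
    (horth : ∀ r s, E r * E s = if r = s then E r else 0)
    (hsum : ∑ r, E r = 1)
    (hdecomp : A = ∑ r, θ r • E r)
    (u v : V) :
    Filter.Tendsto
      (fun T : ℝ => (T : ℂ)⁻¹ *
        ∫ t in (0:ℝ)..T,
          ((NormedSpace.exp (((t : ℂ) * Complex.I) • A.map (Complex.ofReal)))
            ⊙ ((NormedSpace.exp (((t : ℂ) * Complex.I) • A.map (Complex.ofReal))).map
                (starRingEnd ℂ))) u v)
      Filter.atTop
      (nhds (((∑ r, E r ⊙ E r) u v : ℝ) : ℂ)) := by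
  classical
  set P : Fin d → Matrix V V ℂ := fun r => (E r).map Complex.ofReal with hPdef
  have hPorth : ∀ r s, P r * P s = if r = s then P r else 0 := by
    intro r s
    have h0 := horth r s
    ext i j
    have h1 : ((E r * E s) i j : ℂ) = (if r = s then P r else 0) i j := by
      rw [h0]
      split <;> simp [hPdef, Matrix.map_apply]
    rw [← h1, Matrix.mul_apply, Matrix.mul_apply]
    push_cast
    simp [hPdef, Matrix.map_apply]
  have hPsum : ∑ r, P r = 1 := by
    ext i j
    have h1 := congrFun (congrFun hsum i) j
    simp only [Matrix.sum_apply] at h1 ⊢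
    simp only [hPdef, Matrix.map_apply]
    rw [← Complex.ofReal_sum, h1]
    by_cases h : i = j <;> simp [Matrix.one_apply, h]
  have hexp : ∀ t : ℝ, NormedSpace.exp (((t : ℂ) * Complex.I) • A.map (Complex.ofReal))
      = ∑ r, Complex.exp (((t : ℂ) * Complex.I) * θ r) • P r := by
    intro t
    have hM : ((t : ℂ) * Complex.I) • A.map (Complex.ofReal)
        = ∑ r, (((t : ℂ) * Complex.I) * θ r) • P r := by
      ext i j
      simp only [Matrix.smul_apply, Matrix.map_apply, Matrix.sum_apply, hdecomp, hPdef,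
        smul_eq_mul]
      push_cast
      rw [Finset.mul_sum]
      refine Finset.sum_congr rfl fun r _ => ?_
      ring
    rw [hM, exp_spectral P hPorth hPsum]
  -- entrywise formula for the integrand
  have hent : ∀ t : ℝ,
      ((NormedSpace.exp (((t : ℂ) * Complex.I) • A.map (Complex.ofReal)))
            ⊙ ((NormedSpace.exp (((t : ℂ) * Complex.I) • A.map (Complex.ofReal))).map
                (starRingEnd ℂ))) u v
      = ∑ r, ∑ s, (((E r u v : ℝ) : ℂ) * ((E s u v : ℝ) : ℂ)) *
          Complex.exp ((Complex.I * ((θ r - θ s : ℝ) : ℂ)) * t) := by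
    intro t
    rw [Matrix.hadamard_apply, Matrix.map_apply, hexp t]
    simp only [Matrix.sum_apply, Matrix.smul_apply, smul_eq_mul, map_sum, map_mul, hPdef,
      Matrix.map_apply, Complex.conj_ofReal]
    simp_rw [← Complex.exp_conj, map_mul, Complex.conj_I, Complex.conj_ofReal]
    rw [Finset.sum_mul_sum]
    refine Finset.sum_congr rfl fun r _ => Finset.sum_congr rfl fun s _ => ?_
    rw [mul_mul_mul_comm, ← Complex.exp_add]
    have h : (↑t * Complex.I * ↑(θ r)) + ↑t * -Complex.I * ↑(θ s)
        = Complex.I * ((θ r - θ s : ℝ) : ℂ) * ↑t := by push_cast; ring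
    rw [h, mul_comm]
  -- rewrite the averaged integral as a finite sum of averaged oscillatory integrals
  have hintg : ∀ (r s : Fin d) (T : ℝ), IntervalIntegrable
      (fun t : ℝ => Complex.exp ((Complex.I * ((θ r - θ s : ℝ) : ℂ)) * t))
      MeasureTheory.volume 0 T := by
    intro r s T
    exact (Complex.continuous_exp.comp
      (continuous_const.mul Complex.continuous_ofReal)).intervalIntegrable 0 T
  have hfun : ∀ T : ℝ,
      (T : ℂ)⁻¹ * ∫ t in (0:ℝ)..T,
          ((NormedSpace.exp (((t : ℂ) * Complex.I) • A.map (Complex.ofReal)))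
            ⊙ ((NormedSpace.exp (((t : ℂ) * Complex.I) • A.map (Complex.ofReal))).map
                (starRingEnd ℂ))) u v
      = ∑ r, ∑ s, (((E r u v : ℝ) : ℂ) * ((E s u v : ℝ) : ℂ)) *
          ((T : ℂ)⁻¹ * ∫ t in (0:ℝ)..T,
            Complex.exp ((Complex.I * ((θ r - θ s : ℝ) : ℂ)) * t)) := by
    intro T
    have hc1 : ∀ r : Fin d, IntervalIntegrable
        (fun t : ℝ => ∑ s, (((E r u v : ℝ) : ℂ) * ((E s u v : ℝ) : ℂ)) *
          Complex.exp ((Complex.I * ((θ r - θ s : ℝ) : ℂ)) * t)) MeasureTheory.volume 0 T := by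
      intro r
      refine Continuous.intervalIntegrable ?_ 0 T
      exact continuous_finset_sum _ fun s _ => continuous_const.mul
        (Complex.continuous_exp.comp (continuous_const.mul Complex.continuous_ofReal))
    rw [intervalIntegral.integral_congr (fun t _ => hent t)]
    rw [intervalIntegral.integral_finset_sum (fun r _ => hc1 r)]
    rw [Finset.mul_sum]
    refine Finset.sum_congr rfl fun r _ => ?_
    rw [intervalIntegral.integral_finset_sum (fun s _ => (hintg r s T).const_mul _)]
    rw [Finset.mul_sum]
    refine Finset.sum_congr rfl fun s _ => ?_
    rw [intervalIntegral.integral_const_mul]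
    ring
  -- limits of the individual terms
  have hterm : ∀ r s : Fin d, Filter.Tendsto
      (fun T : ℝ => (((E r u v : ℝ) : ℂ) * ((E s u v : ℝ) : ℂ)) *
          ((T : ℂ)⁻¹ * ∫ t in (0:ℝ)..T,
            Complex.exp ((Complex.I * ((θ r - θ s : ℝ) : ℂ)) * t)))
      Filter.atTop
      (nhds (if r = s then ((E r u v : ℝ) : ℂ) * ((E s u v : ℝ) : ℂ) else 0)) := by
    intro r s
    by_cases h : r = s
    · subst h
      rw [if_pos rfl]
      apply Filter.Tendsto.congr' _ tendsto_const_nhds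
      filter_upwards [Filter.eventually_ne_atTop (0:ℝ)] with T hT
      have : ∀ t : ℝ, Complex.exp ((Complex.I * ((θ r - θ r : ℝ) : ℂ)) * t) = 1 := by
        intro t; simp
      simp only [this, intervalIntegral.integral_const, sub_zero, Complex.real_smul,
        smul_eq_mul, mul_one]
      rw [inv_mul_cancel₀ (Complex.ofReal_ne_zero.mpr hT), mul_one]
    · rw [if_neg h]
      have hδ : θ r - θ s ≠ 0 := sub_ne_zero_of_ne (fun he => h (hθ he))
      have := (avg_osc_zero hδ).const_mul (((E r u v : ℝ) : ℂ) * ((E s u v : ℝ) : ℂ))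
      simpa using this
  -- conclude
  have hlim : (((∑ r, E r ⊙ E r) u v : ℝ) : ℂ)
      = ∑ r, ∑ s, (if r = s then ((E r u v : ℝ) : ℂ) * ((E s u v : ℝ) : ℂ) else 0) := by
    simp only [Finset.sum_ite_eq, Finset.mem_univ, if_true, Matrix.sum_apply,
      Matrix.hadamard_apply]
    push_cast
    simp [pow_two]
  rw [hlim]
  exact Filter.Tendsto.congr (fun T => (hfun T).symm)
    (tendsto_finset_sum _ fun r _ => tendsto_finset_sum _ fun s _ => hterm r s)
end

section
/- For every n ≥ 3, the average mixing matrix of the star graph K_{1,n} (the complete bipartite graph with one center vertex and n leaves, on n+1 vertices) has full rank n+1. -/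
open scoped Matrix Classical

/-- The adjacency matrix of the star graph `K_{1,n}`. -/
noncomputable def starAdjMatrix (n : ℕ) :
    Matrix (Fin 1 ⊕ Fin n) (Fin 1 ⊕ Fin n) ℝ :=
  (completeBipartiteGraph (Fin 1) (Fin n)).adjMatrix ℝ

section Aux

lemma had_sum_sum {d : ℕ} {ι : Type*} [Fintype ι]
    (c e : Fin d → ℝ) (E : Fin d → Matrix ι ι ℝ) :
    (∑ r, c r • E r) ⊙ (∑ t, e t • E t)
      = ∑ r, ∑ t, (c r * e t) • (E r ⊙ E t) := by
  ext i j
  simp only [Matrix.hadamard_apply, Matrix.sum_apply, Matrix.smul_apply, smul_eq_mul]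
  rw [Finset.sum_mul_sum]
  exact Finset.sum_congr rfl fun r _ => Finset.sum_congr rfl fun t _ => by ring

lemma star_cube (n : ℕ) : starAdjMatrix n * starAdjMatrix n * starAdjMatrix n
    = (n : ℝ) • starAdjMatrix n := by
  ext u v
  cases u <;> cases v <;>
    simp [Matrix.mul_apply, Fintype.sum_sum_type, starAdjMatrix]

/-- The explicit average mixing matrix of the star. -/
noncomputable def starM (n : ℕ) : Matrix (Fin 1 ⊕ Fin n) (Fin 1 ⊕ Fin n) ℝ :=
  Matrix.of fun u v =>
    match u, v with
    | .inl _, .inl _ => 1/2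
    | .inl _, .inr _ => 1/(2*(n:ℝ))
    | .inr _, .inl _ => 1/(2*(n:ℝ))
    | .inr i, .inr j => (if i = j then 1 - 2/(n:ℝ) else 0) + 3/(2*(n:ℝ)^2)

@[simp] lemma starM_ll (n : ℕ) (a b : Fin 1) : starM n (.inl a) (.inl b) = 1/2 := rfl
@[simp] lemma starM_lr (n : ℕ) (a : Fin 1) (j : Fin n) :
    starM n (.inl a) (.inr j) = 1/(2*(n:ℝ)) := rfl
@[simp] lemma starM_rl (n : ℕ) (a : Fin 1) (j : Fin n) :
    starM n (.inr j) (.inl a) = 1/(2*(n:ℝ)) := rfl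
@[simp] lemma starM_rr (n : ℕ) (i j : Fin n) :
    starM n (.inr i) (.inr j) = (if i = j then 1 - 2/(n:ℝ) else 0) + 3/(2*(n:ℝ)^2) := rfl

set_option maxHeartbeats 1000000 in
lemma starM_quadform (n : ℕ) (x : (Fin 1 ⊕ Fin n) → ℝ) :
    star x ⬝ᵥ starM n *ᵥ x
      = (1/2)*(x (.inl 0))^2 + (1/(n:ℝ))*(x (.inl 0))*(∑ i, x (.inr i))
        + (1 - 2/(n:ℝ))*(∑ i, (x (.inr i))^2)
        + (3/(2*(n:ℝ)^2))*(∑ i, x (.inr i))^2 := by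
  have hv1 : ∀ a : Fin 1, (starM n *ᵥ x) (.inl a)
      = (1/2)*(x (.inl 0)) + (1/(2*(n:ℝ)))*(∑ i, x (.inr i)) := by
    intro a
    simp [Matrix.mulVec, dotProduct, Fintype.sum_sum_type, Fin.sum_univ_one,
      Finset.mul_sum]
  have hv2 : ∀ i : Fin n, (starM n *ᵥ x) (.inr i)
      = (1/(2*(n:ℝ)))*(x (.inl 0)) + (1 - 2/(n:ℝ))*(x (.inr i))
        + (3/(2*(n:ℝ)^2))*(∑ j, x (.inr j)) := by
    intro i
    simp [Matrix.mulVec, dotProduct, Fintype.sum_sum_type, Fin.sum_univ_one,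
      add_mul, ite_mul, Finset.sum_add_distrib, Finset.sum_ite_eq, Finset.mul_sum]
    ring
  rw [show star x = x from star_trivial x]
  rw [dotProduct]
  rw [Fintype.sum_sum_type]
  rw [Fin.sum_univ_one, hv1]
  have h3 : ∑ i, x (.inr i) * ((starM n *ᵥ x) (.inr i))
      = ∑ i, ((1/(2*(n:ℝ)))*(x (.inl 0))*(x (.inr i)) + (1 - 2/(n:ℝ))*(x (.inr i))^2
          + (3/(2*(n:ℝ)^2))*(∑ j, x (.inr j))*(x (.inr i))) := by
    refine Finset.sum_congr rfl fun i _ => ?_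
    rw [hv2 i]; ring
  rw [h3, Finset.sum_add_distrib, Finset.sum_add_distrib, ← Finset.mul_sum,
    ← Finset.mul_sum, ← Finset.mul_sum]
  ring

set_option maxHeartbeats 1000000 in
lemma starM_posDef (n : ℕ) (hn : 3 ≤ n) : (starM n).PosDef := by
  have hn' : (3:ℝ) ≤ n := by exact_mod_cast hn
  have hnpos : (0:ℝ) < n := by linarith
  rw [Matrix.posDef_iff_dotProduct_mulVec]
  constructor
  · ext u v
    cases u <;> cases v <;>
      simp [Matrix.conjTranspose_apply, eq_comm]
  · intro x hx
    rw [starM_quadform n x]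
    set x0 : ℝ := x (.inl 0) with hx0def
    set S : ℝ := ∑ i, x (.inr i) with hSdef
    set T : ℝ := ∑ i, (x (.inr i))^2 with hTdef
    have hT0 : 0 ≤ T := Finset.sum_nonneg fun i _ => sq_nonneg _
    have hCS : S^2 ≤ n * T := by
      have := sq_sum_le_card_mul_sum_sq (s := (Finset.univ : Finset (Fin n)))
        (f := fun i => x (.inr i))
      simpa [hSdef, hTdef] using this
    have hsplit : (1/2)*x0^2 + (1/(n:ℝ))*x0*S + (1 - 2/(n:ℝ))*T + (3/(2*(n:ℝ)^2))*S^2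
        = ((n:ℝ)^2*x0^2 + 2*n*x0*S + 2*n*(n-2)*T + 3*S^2)/(2*(n:ℝ)^2) := by
      field_simp
    rw [hsplit]
    apply div_pos ?_ (by positivity)
    have hxsplit : x0 ≠ 0 ∨ 0 < T := by
      by_contra h
      push_neg at h
      obtain ⟨h1, h2⟩ := h
      have hT : T = 0 := le_antisymm h2 hT0
      apply hx
      funext u
      cases u with
      | inl a =>
        have : a = 0 := Subsingleton.elim _ _
        rw [this]; exact h1
      | inr i =>
        have hi : (x (.inr i))^2 ≤ T := by
          rw [hTdef]
          exact Finset.single_le_sum (f := fun j => (x (.inr j))^2)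
            (fun j _ => sq_nonneg (x (.inr j))) (Finset.mem_univ i)
        rw [hT] at hi
        have h2 : (x (.inr i))^2 = 0 := le_antisymm hi (sq_nonneg _)
        exact pow_eq_zero_iff (n := 2) (by norm_num) |>.mp h2
    rcases hT0.lt_or_eq with hT | hT
    · nlinarith [sq_nonneg ((n:ℝ)*x0 + S), sq_nonneg S,
        mul_pos (mul_pos (by linarith : (0:ℝ) < 2*n) (by linarith : (0:ℝ) < n-2)) hT]
    · have hTz : T = 0 := hT.symm
      have hS : S = 0 := by nlinarith [sq_nonneg S]
      have hx0 : x0 ≠ 0 := by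
        rcases hxsplit with h | h
        · exact h
        · exfalso; rw [hTz] at h; exact lt_irrefl 0 h
      have hx02 : 0 < x0^2 := by positivity
      rw [hTz, hS]
      have h9 : 0 < (n:ℝ)^2 * x0^2 := by positivity
      nlinarith

end Aux

set_option maxHeartbeats 1000000 in
/-- For every `n ≥ 3`, the average mixing matrix of the star `K_{1,n}`
(on `n + 1` vertices) has full rank `n + 1`. -/
theorem rank_avgMixing_star (n : ℕ) (hn : 3 ≤ n)
    (d : ℕ) (θ : Fin d → ℝ) (hθ : Function.Injective θ)
    (E : Fin d → Matrix (Fin 1 ⊕ Fin n) (Fin 1 ⊕ Fin n) ℝ)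
    (hsymm : ∀ r, (E r).IsSymm)
    (horth : ∀ r s, E r * E s = if r = s then E r else 0)
    (hsum : ∑ r, E r = 1)
    (hdecomp : starAdjMatrix n = ∑ r, θ r • E r) :
    (∑ r, E r ⊙ E r).rank = n + 1 := by
  have hn' : (3:ℝ) ≤ n := by exact_mod_cast hn
  have hnpos : (0:ℝ) < n := by linarith
  have hn0 : (n:ℝ) ≠ 0 := ne_of_gt hnpos
  set A := starAdjMatrix n with hAdef
  set s : ℝ := Real.sqrt n with hsdef
  have hs2 : s^2 = n := Real.sq_sqrt (le_of_lt hnpos)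
  have hspos : 0 < s := Real.sqrt_pos.2 hnpos
  have hs0 : s ≠ 0 := ne_of_gt hspos
  -- spectral relations
  have hAE : ∀ r, A * E r = θ r • E r := by
    intro r
    rw [hdecomp, Finset.sum_mul]
    simp only [smul_mul_assoc, horth, smul_ite, smul_zero]
    simp
  have hEA : ∀ r, E r * A = θ r • E r := by
    intro r
    rw [hdecomp, Finset.mul_sum]
    simp only [mul_smul_comm, horth, smul_ite, smul_zero]
    simp
  have hA2 : A * A = ∑ r, (θ r ^ 2) • E r := by
    nth_rewrite 1 [hdecomp]
    rw [Finset.sum_mul]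
    refine Finset.sum_congr rfl fun r _ => ?_
    rw [smul_mul_assoc, hEA r, smul_smul, sq]
  -- eigenvalues
  have hval : ∀ r, E r ≠ 0 → θ r = 0 ∨ θ r = s ∨ θ r = -s := by
    intro r hEr
    have h1 : (A * A * A) * E r = (θ r ^ 3) • E r := by
      simp only [mul_assoc, Matrix.mul_smul, hAE, smul_smul]
      ring_nf
    have h2 : (A * A * A) * E r = ((n:ℝ) * θ r) • E r := by
      rw [star_cube, smul_mul_assoc, hAE, smul_smul]
    have h3 : (θ r ^ 3 - n * θ r) • E r = 0 := by
      rw [sub_smul, ← h1, h2, sub_self]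
    have h5 : θ r ^ 3 - n * θ r = 0 :=
      (smul_eq_zero.mp h3).resolve_right hEr
    have h6 : θ r * ((θ r - s) * (θ r + s)) = 0 := by
      linear_combination h5 - θ r * hs2
    rcases mul_eq_zero.mp h6 with h | h
    · exact Or.inl h
    rcases mul_eq_zero.mp h with h | h
    · exact Or.inr (Or.inl (by linarith [sub_eq_zero.mp h]))
    · exact Or.inr (Or.inr (by linarith [eq_neg_of_add_eq_zero_left h]))
  -- the three spectral projections as polynomials in A
  set c1 : Fin d → ℝ := fun r => θ r ^ 2 / (2*n) + s * θ r / (2*n) with hc1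
  set c2 : Fin d → ℝ := fun r => θ r ^ 2 / (2*n) - s * θ r / (2*n) with hc2
  set c3 : Fin d → ℝ := fun r => 1 - θ r ^ 2 / n with hc3
  have hP : (1/(2*(n:ℝ))) • (A*A) + (s/(2*(n:ℝ))) • A = ∑ r, c1 r • E r := by
    rw [hA2]; nth_rewrite 1 [hdecomp]
    rw [Finset.smul_sum, Finset.smul_sum, ← Finset.sum_add_distrib]
    refine Finset.sum_congr rfl fun r _ => ?_
    rw [smul_smul, smul_smul, ← add_smul, hc1]
    congr 1
    ring
  have hQ : (1/(2*(n:ℝ))) • (A*A) - (s/(2*(n:ℝ))) • A = ∑ r, c2 r • E r := by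
    rw [hA2]; nth_rewrite 1 [hdecomp]
    rw [Finset.smul_sum, Finset.smul_sum, ← Finset.sum_sub_distrib]
    refine Finset.sum_congr rfl fun r _ => ?_
    rw [smul_smul, smul_smul, ← sub_smul, hc2]
    congr 1
    ring
  have hR : (1 : Matrix (Fin 1 ⊕ Fin n) (Fin 1 ⊕ Fin n) ℝ) - (1/(n:ℝ)) • (A*A)
      = ∑ r, c3 r • E r := by
    rw [hA2, ← hsum, Finset.smul_sum, ← Finset.sum_sub_distrib]
    refine Finset.sum_congr rfl fun r _ => ?_
    rw [smul_smul, hc3, sub_smul, one_smul]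
    congr 2
    ring
  -- the key combinatorial identity
  have key : ∀ r t : Fin d,
      (c1 r * c1 t + c2 r * c2 t + c3 r * c3 t) • (E r ⊙ E t)
        = if r = t then E r ⊙ E r else 0 := by
    intro r t
    by_cases hEr : E r = 0
    · split <;> simp [hEr]
    by_cases hEt : E t = 0
    · split
      · next h => subst h; simp [hEt]
      · simp [hEt]
    by_cases hrt : r = t
    · subst hrt
      rw [if_pos rfl]
      have hc : c1 r * c1 r + c2 r * c2 r + c3 r * c3 r = 1 := by
        rcases hval r hEr with h | h | h <;>
          · simp only [hc1, hc2, hc3, h]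
            rw [← hs2]
            field_simp
            try ring
      rw [hc, one_smul]
    · rw [if_neg hrt]
      have hne : θ r ≠ θ t := fun h => hrt (hθ h)
      have hc : c1 r * c1 t + c2 r * c2 t + c3 r * c3 t = 0 := by
        rcases hval r hEr with h | h | h <;> rcases hval t hEt with h' | h' | h' <;>
          first
          | (exact absurd (h.trans h'.symm) hne)
          | (simp only [hc1, hc2, hc3, h, h']
             rw [← hs2]
             field_simp
             try ring)
      rw [hc, zero_smul]
  -- sum of Hadamard squares equals the explicit matrix
  have hMsum : (∑ r, c1 r • E r) ⊙ (∑ r, c1 r • E r)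
      + (∑ r, c2 r • E r) ⊙ (∑ r, c2 r • E r)
      + (∑ r, c3 r • E r) ⊙ (∑ r, c3 r • E r)
      = ∑ r, E r ⊙ E r := by
    rw [had_sum_sum, had_sum_sum, had_sum_sum,
      ← Finset.sum_add_distrib, ← Finset.sum_add_distrib]
    refine Finset.sum_congr rfl fun r _ => ?_
    rw [← Finset.sum_add_distrib, ← Finset.sum_add_distrib]
    have h4 : ∀ t, (c1 r * c1 t) • (E r ⊙ E t) + (c2 r * c2 t) • (E r ⊙ E t)
        + (c3 r * c3 t) • (E r ⊙ E t) = if r = t then E r ⊙ E r else 0 := by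
      intro t
      rw [← add_smul, ← add_smul]
      exact key r t
    rw [Finset.sum_congr rfl fun t _ => h4 t]
    simp
  -- identify with starM
  have hM : ∑ r, E r ⊙ E r = starM n := by
    rw [← hMsum, ← hP, ← hQ, ← hR]
    have hAll : ∀ (a b : Fin 1), A (.inl a) (.inl b) = 0 := by
      intro a b; rw [hAdef]; simp [starAdjMatrix]
    have hAlr : ∀ (a : Fin 1) (j : Fin n), A (.inl a) (.inr j) = 1 := by
      intro a j; rw [hAdef]; simp [starAdjMatrix]
    have hArl : ∀ (a : Fin 1) (j : Fin n), A (.inr j) (.inl a) = 1 := by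
      intro a j; rw [hAdef]; simp [starAdjMatrix]
    have hArr : ∀ (i j : Fin n), A (.inr i) (.inr j) = 0 := by
      intro i j; rw [hAdef]; simp [starAdjMatrix]
    have hA2ll : ∀ (a b : Fin 1), (A*A) (.inl a) (.inl b) = n := by
      intro a b; rw [hAdef]; simp [Matrix.mul_apply, Fintype.sum_sum_type, starAdjMatrix]
    have hA2lr : ∀ (a : Fin 1) (j : Fin n), (A*A) (.inl a) (.inr j) = 0 := by
      intro a j; rw [hAdef]; simp [Matrix.mul_apply, Fintype.sum_sum_type, starAdjMatrix]
    have hA2rl : ∀ (a : Fin 1) (j : Fin n), (A*A) (.inr j) (.inl a) = 0 := by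
      intro a j; rw [hAdef]; simp [Matrix.mul_apply, Fintype.sum_sum_type, starAdjMatrix]
    have hA2rr : ∀ (i j : Fin n), (A*A) (.inr i) (.inr j) = 1 := by
      intro i j; rw [hAdef]; simp [Matrix.mul_apply, Fintype.sum_sum_type, starAdjMatrix]
    ext u v
    cases u with
    | inl a =>
      cases v with
      | inl b =>
        have hab : a = b := Subsingleton.elim a b
        subst hab
        simp only [Matrix.hadamard_apply, Matrix.add_apply, Matrix.sub_apply,
          Matrix.smul_apply, Matrix.one_apply_eq, hAll, hA2ll, starM_ll, smul_eq_mul]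
        rw [← hs2]
        field_simp
        ring
      | inr j =>
        simp only [Matrix.hadamard_apply, Matrix.add_apply, Matrix.sub_apply,
          Matrix.smul_apply, hAlr, hA2lr, starM_lr, smul_eq_mul,
          Matrix.one_apply_ne (by simp : (Sum.inl a : Fin 1 ⊕ Fin n) ≠ Sum.inr j)]
        rw [← hs2]
        field_simp
        ring
    | inr i =>
      cases v with
      | inl a =>
        simp only [Matrix.hadamard_apply, Matrix.add_apply, Matrix.sub_apply,
          Matrix.smul_apply, hArl, hA2rl, starM_rl, smul_eq_mul,
          Matrix.one_apply_ne (by simp : (Sum.inr i : Fin 1 ⊕ Fin n) ≠ Sum.inl a)]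
        rw [← hs2]
        field_simp
        ring
      | inr j =>
        by_cases hij : i = j
        · subst hij
          simp only [Matrix.hadamard_apply, Matrix.add_apply, Matrix.sub_apply,
            Matrix.smul_apply, hArr, hA2rr, starM_rr, smul_eq_mul,
            Matrix.one_apply_eq, if_pos rfl, if_true]
          rw [← hs2]
          field_simp
          ring
        · simp only [Matrix.hadamard_apply, Matrix.add_apply, Matrix.sub_apply,
            Matrix.smul_apply, hArr, hA2rr, starM_rr, smul_eq_mul,
            Matrix.one_apply_ne (by simp [hij] : (Sum.inr i : Fin 1 ⊕ Fin n) ≠ Sum.inr j),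
            if_neg hij]
          rw [← hs2]
          field_simp
          ring
  rw [hM]
  have hpd := starM_posDef n hn
  rw [Matrix.rank_of_isUnit _ hpd.isUnit]
  simp only [Fintype.card_sum, Fintype.card_fin]
  omega
end

section
/- Let A be the adjacency matrix of a finite simple graph X on n vertices and let B be the 2n × 2n block matrix [[A, I],[I, 0]] (the adjacency matrix of the rooted product X(K_2)). Then for every real number x ≠ 0, the characteristic polynomial of B evaluated at x equals x^n times the characteristic polynomial of A evaluated at x − 1/x. -/
open scoped Matrix

lemma charpoly_eval_eq_det {n : Type*} [Fintype n] [DecidableEq n]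
    (M : Matrix n n ℝ) (x : ℝ) :
    M.charpoly.eval x = (x • (1 : Matrix n n ℝ) - M).det := by
  rw [Matrix.charpoly, ← Polynomial.coe_evalRingHom, RingHom.map_det]
  congr 1
  ext i j
  simp [Matrix.charmatrix_apply, Matrix.one_apply, Matrix.diagonal_apply,
    apply_ite (Polynomial.eval x)]

/-- If `A` is the adjacency matrix of a graph on `n` vertices and
`B = [[A, I], [I, 0]]` is the adjacency matrix of the rooted product `X(K₂)`, then for every
nonzero real `x`, `φ(B, x) = xⁿ · φ(A, x − 1/x)`. -/
theorem charpoly_rootedProduct {V : Type*} [Fintype V] [DecidableEq V]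
    (G : SimpleGraph V) [DecidableRel G.Adj]
    (A : Matrix V V ℝ) (hA : A = G.adjMatrix ℝ)
    (B : Matrix (V ⊕ V) (V ⊕ V) ℝ) (hB : B = Matrix.fromBlocks A 1 1 0)
    (x : ℝ) (hx : x ≠ 0) :
    B.charpoly.eval x = x ^ (Fintype.card V) * A.charpoly.eval (x - 1 / x) := by
  rw [charpoly_eval_eq_det, charpoly_eval_eq_det, hB]
  have h1 : x • (1 : Matrix (V ⊕ V) (V ⊕ V) ℝ) - Matrix.fromBlocks A 1 1 0 =
      Matrix.fromBlocks (x • 1 - A) (-1) (-1) (x • 1) := by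
    rw [← Matrix.fromBlocks_one, Matrix.fromBlocks_smul]
    ext i j
    cases i <;> cases j <;> simp
  rw [h1]
  have hD : Invertible (x • (1 : Matrix V V ℝ)) :=
    ⟨x⁻¹ • 1,
      by rw [smul_mul_smul_comm, inv_mul_cancel₀ hx, one_mul, one_smul],
      by rw [smul_mul_smul_comm, mul_inv_cancel₀ hx, one_mul, one_smul]⟩
  rw [Matrix.det_fromBlocks₂₂]
  have hinv : (⅟(x • (1 : Matrix V V ℝ))) = x⁻¹ • 1 := by
    apply invOf_eq_right_inv
    rw [smul_mul_smul_comm, mul_inv_cancel₀ hx, one_mul, one_smul]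
  rw [hinv]
  congr 1
  · simp [Matrix.det_smul]
  · congr 1
    have h2 : (-1 : Matrix V V ℝ) * (x⁻¹ • 1) * (-1) = x⁻¹ • 1 := by
      simp
    rw [h2, sub_smul, one_div]
    abel
end

section
/- Let X be a finite simple graph on n vertices whose adjacency matrix A has n distinct eigenvalues, and let B = [[A, I],[I, 0]] be the adjacency matrix of the rooted product X(K_2). Then B has 2n distinct eigenvalues, and a real number μ is an eigenvalue of B if and only if μ² − λμ − 1 = 0 for some eigenvalue λ of A. -/
open scoped Matrix

lemma mem_spectrum_iff_eigvec {n : Type*} [Fintype n] [DecidableEq n]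
    (M : Matrix n n ℝ) (μ : ℝ) :
    μ ∈ spectrum ℝ M ↔ ∃ v : n → ℝ, v ≠ 0 ∧ M.mulVec v = μ • v := by
  rw [spectrum.mem_iff, Matrix.isUnit_iff_isUnit_det, isUnit_iff_ne_zero, not_not,
    ← Matrix.exists_mulVec_eq_zero_iff]
  have hmv : ∀ v : n → ℝ, (algebraMap ℝ (Matrix n n ℝ) μ - M) *ᵥ v = μ • v - M *ᵥ v := by
    intro v
    rw [Matrix.sub_mulVec, Algebra.algebraMap_eq_smul_one, Matrix.smul_mulVec,
      Matrix.one_mulVec]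
  constructor
  · rintro ⟨v, hv, h⟩
    rw [hmv, sub_eq_zero] at h
    exact ⟨v, hv, h.symm⟩
  · rintro ⟨v, hv, h⟩
    exact ⟨v, hv, by rw [hmv, sub_eq_zero, h]⟩

lemma key_iff {V : Type*} [Fintype V] [DecidableEq V] (A : Matrix V V ℝ) (μ : ℝ) :
    μ ∈ spectrum ℝ (Matrix.fromBlocks A 1 1 (0 : Matrix V V ℝ)) ↔
      ∃ lam ∈ spectrum ℝ A, μ ^ 2 - lam * μ - 1 = 0 := by
  rw [mem_spectrum_iff_eigvec]
  constructor
  · rintro ⟨v, hv, h⟩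
    set x := v ∘ Sum.inl with hx
    set y := v ∘ Sum.inr with hy
    have hvxy : v = Sum.elim x y := (Sum.elim_comp_inl_inr v).symm
    rw [hvxy, Matrix.fromBlocks_mulVec] at h
    have h1 : ∀ i, (A *ᵥ x) i + y i = μ * x i := by
      intro i
      have := congrFun h (Sum.inl i)
      simpa [Matrix.one_mulVec] using this
    have h2 : ∀ i, x i = μ * y i := by
      intro i
      have := congrFun h (Sum.inr i)
      simpa [Matrix.one_mulVec, Matrix.zero_mulVec] using this
    have hyne : y ≠ 0 := by
      intro hy0
      apply hv
      rw [hvxy]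
      funext j
      cases j with
      | inl i => simp [h2 i, show y i = 0 from congrFun hy0 i]
      | inr i => simpa using congrFun hy0 i
    have hμ : μ ≠ 0 := by
      intro h0
      apply hyne
      funext i
      have h1i := h1 i
      have hx0 : x = 0 := funext fun j => by simp [h2 j, h0]
      rw [hx0, Matrix.mulVec_zero, h0] at h1i
      simpa using h1i
    refine ⟨(μ ^ 2 - 1) / μ, ?_, by field_simp; ring⟩
    rw [mem_spectrum_iff_eigvec]
    refine ⟨y, hyne, ?_⟩
    funext i
    have hxy : (A *ᵥ x) i = μ * (A *ᵥ y) i := by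
      have : x = μ • y := funext h2
      rw [this, Matrix.mulVec_smul]
      simp
    have h1i := h1 i
    rw [hxy, h2 i] at h1i
    simp only [Pi.smul_apply, smul_eq_mul]
    rw [div_mul_eq_mul_div, eq_div_iff hμ]
    linear_combination h1i
  · rintro ⟨lam, hlam, hq⟩
    have hμ : μ ≠ 0 := by
      intro h0
      rw [h0] at hq
      norm_num at hq
    rw [mem_spectrum_iff_eigvec] at hlam
    obtain ⟨y, hy, hAy⟩ := hlam
    refine ⟨Sum.elim (μ • y) y, ?_, ?_⟩
    · intro h0
      obtain ⟨i, hi⟩ := Function.ne_iff.mp hy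
      exact hi (by simpa using congrFun h0 (Sum.inr i))
    · rw [Matrix.fromBlocks_mulVec]
      funext j
      cases j with
      | inl i =>
        have : (A *ᵥ (μ • y)) i = μ * (lam * y i) := by
          rw [Matrix.mulVec_smul, hAy]
          simp [mul_assoc]
        simp only [Sum.elim_comp_inl, Sum.elim_comp_inr, Sum.elim_inl, Pi.add_apply,
          Pi.smul_apply, smul_eq_mul, this, Matrix.one_mulVec]
        linear_combination (-(y i)) * hq
      | inr i =>
        simp [Sum.elim_comp_inl, Sum.elim_comp_inr, Matrix.one_mulVec, Matrix.zero_mulVec]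

noncomputable def rr1 (l : ℝ) : ℝ := (l + Real.sqrt (l ^ 2 + 4)) / 2
noncomputable def rr2 (l : ℝ) : ℝ := (l - Real.sqrt (l ^ 2 + 4)) / 2

lemma sqrt_gt_abs (l : ℝ) : |l| < Real.sqrt (l ^ 2 + 4) := by
  have := Real.sqrt_lt_sqrt (sq_nonneg l) (by linarith : l ^ 2 < l ^ 2 + 4)
  rwa [Real.sqrt_sq_eq_abs] at this

lemma rr1_pos (l : ℝ) : 0 < rr1 l := by
  have h1 := sqrt_gt_abs l
  have h2 := neg_abs_le l
  unfold rr1; linarith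

lemma rr2_neg (l : ℝ) : rr2 l < 0 := by
  have h1 := sqrt_gt_abs l
  have h2 := le_abs_self l
  unfold rr2; linarith

lemma quad_fact (l μ : ℝ) : μ ^ 2 - l * μ - 1 = (μ - rr1 l) * (μ - rr2 l) := by
  have hs : (Real.sqrt (l ^ 2 + 4)) ^ 2 = l ^ 2 + 4 := Real.sq_sqrt (by positivity)
  unfold rr1 rr2
  linear_combination (1 / 4 : ℝ) * hs

lemma root_iff (l μ : ℝ) : μ ^ 2 - l * μ - 1 = 0 ↔ μ = rr1 l ∨ μ = rr2 l := by
  rw [quad_fact, mul_eq_zero, sub_eq_zero, sub_eq_zero]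

lemma rr1_root (l : ℝ) : (rr1 l) ^ 2 - l * rr1 l - 1 = 0 := by rw [quad_fact]; ring
lemma rr2_root (l : ℝ) : (rr2 l) ^ 2 - l * rr2 l - 1 = 0 := by rw [quad_fact]; ring

lemma rr1_inj : Function.Injective rr1 := by
  intro a b h
  have ha := rr1_root a
  have hb := rr1_root b
  rw [h] at ha
  have hz : (a - b) * rr1 b = 0 := by linear_combination hb - ha
  rcases mul_eq_zero.mp hz with h' | h'
  · linarith [sub_eq_zero.mp h']
  · exact absurd h' (ne_of_gt (rr1_pos b))

lemma rr2_inj : Function.Injective rr2 := by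
  intro a b h
  have ha := rr2_root a
  have hb := rr2_root b
  rw [h] at ha
  have hz : (a - b) * rr2 b = 0 := by linear_combination hb - ha
  rcases mul_eq_zero.mp hz with h' | h'
  · linarith [sub_eq_zero.mp h']
  · exact absurd h' (ne_of_lt (rr2_neg b))

/-- If the adjacency matrix `A` of a graph on `n` vertices has `n` distinct
eigenvalues, then `B = [[A, I], [I, 0]]` has `2n` distinct eigenvalues, and a real `μ` is an
eigenvalue of `B` iff `μ² − λμ − 1 = 0` for some eigenvalue `λ` of `A`. -/
theorem spectrum_rootedProduct {V : Type*} [Fintype V] [DecidableEq V]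
    (G : SimpleGraph V) [DecidableRel G.Adj]
    (A : Matrix V V ℝ) (hA : A = G.adjMatrix ℝ)
    (hsimple : (spectrum ℝ A).ncard = Fintype.card V)
    (B : Matrix (V ⊕ V) (V ⊕ V) ℝ) (hB : B = Matrix.fromBlocks A 1 1 0) :
    (spectrum ℝ B).ncard = 2 * Fintype.card V ∧
      ∀ μ : ℝ, μ ∈ spectrum ℝ B ↔ ∃ lam ∈ spectrum ℝ A, μ ^ 2 - lam * μ - 1 = 0 := by
  subst hB
  refine ⟨?_, fun μ => key_iff A μ⟩
  have hfin : (spectrum ℝ A).Finite := A.finite_spectrum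
  have hset : spectrum ℝ (Matrix.fromBlocks A 1 1 (0 : Matrix V V ℝ)) =
      rr1 '' spectrum ℝ A ∪ rr2 '' spectrum ℝ A := by
    ext μ
    rw [key_iff]
    simp only [Set.mem_union, Set.mem_image]
    constructor
    · rintro ⟨l, hl, hq⟩
      rcases (root_iff l μ).mp hq with h | h
      · exact Or.inl ⟨l, hl, h.symm⟩
      · exact Or.inr ⟨l, hl, h.symm⟩
    · rintro (⟨l, hl, h⟩ | ⟨l, hl, h⟩)
      · exact ⟨l, hl, (root_iff l μ).mpr (Or.inl h.symm)⟩
      · exact ⟨l, hl, (root_iff l μ).mpr (Or.inr h.symm)⟩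
  have hdisj : Disjoint (rr1 '' spectrum ℝ A) (rr2 '' spectrum ℝ A) := by
    rw [Set.disjoint_left]
    rintro μ ⟨a, -, rfl⟩ ⟨b, -, hb⟩
    have := rr1_pos a
    have := rr2_neg b
    linarith [hb]
  rw [hset, Set.ncard_union_eq hdisj (hfin.image _) (hfin.image _),
    Set.ncard_image_of_injective _ rr1_inj, Set.ncard_image_of_injective _ rr2_inj, hsimple]
  ring
end

section
/- Let X be a finite simple graph on n vertices whose adjacency matrix A has n distinct eigenvalues λ_1,…,λ_n, with F_i the orthogonal projection onto the λ_i-eigenspace. Let B = [[A, I],[I, 0]] and let N = ∑_{i=1}^n (2/(λ_i² + 4)) (F_i ∘ F_i). Then the average mixing matrix of B is the block matrix M̂(B) = [[M̂(A) − N, N],[N, M̂(A) − N]]. -/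
open scoped Matrix
open Matrix

private lemma qroot (l : ℝ) :
    0 < (l + Real.sqrt (l ^ 2 + 4)) / 2 ∧
      ((l + Real.sqrt (l ^ 2 + 4)) / 2) ^ 2 = l * ((l + Real.sqrt (l ^ 2 + 4)) / 2) + 1 := by
  have h : Real.sqrt (l ^ 2 + 4) ^ 2 = l ^ 2 + 4 := Real.sq_sqrt (by positivity)
  have h0 : 0 ≤ Real.sqrt (l ^ 2 + 4) := Real.sqrt_nonneg _
  constructor
  · nlinarith [sq_nonneg (Real.sqrt (l ^ 2 + 4) + l)]
  · nlinarith

private lemma fromBlocks_hadamard' {l m α : Type*} [Mul α]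
    (A A' : Matrix l l α) (B B' : Matrix l m α) (C C' : Matrix m l α) (D D' : Matrix m m α) :
    fromBlocks A B C D ⊙ fromBlocks A' B' C' D' =
      fromBlocks (A ⊙ A') (B ⊙ B') (C ⊙ C') (D ⊙ D') := by
  ext (i | i) (j | j) <;> rfl

private lemma smul_hadamard_smul' {l m : Type*} (x y : ℝ) (M N : Matrix l m ℝ) :
    (x • M) ⊙ (y • N) = (x * y) • (M ⊙ N) := by
  rw [Matrix.smul_hadamard, Matrix.hadamard_smul, smul_smul]

private lemma sum_fromBlocks {ι l m : Type*} [Fintype ι]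
    (f : ι → Matrix l l ℝ) (g : ι → Matrix l m ℝ) (h : ι → Matrix m l ℝ) (k : ι → Matrix m m ℝ) :
    ∑ i, Matrix.fromBlocks (f i) (g i) (h i) (k i) =
      Matrix.fromBlocks (∑ i, f i) (∑ i, g i) (∑ i, h i) (∑ i, k i) := by
  ext (x | x) (y | y) <;> simp [Matrix.sum_apply]

private lemma block_mul {l : Type*} [Fintype l] (M N : Matrix l l ℝ)
    (a b d a' b' d' : ℝ) :
    Matrix.fromBlocks (a • M) (b • M) (b • M) (d • M) *
      Matrix.fromBlocks (a' • N) (b' • N) (b' • N) (d' • N) =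
      Matrix.fromBlocks ((a * a' + b * b') • (M * N)) ((a * b' + b * d') • (M * N))
        ((b * a' + d * b') • (M * N)) ((b * b' + d * d') • (M * N)) := by
  rw [Matrix.fromBlocks_multiply]
  simp only [Matrix.smul_mul, Matrix.mul_smul, smul_smul, add_smul]
  congr 1 <;> ring_nf

private lemma block_add {l : Type*} (M : Matrix l l ℝ) (a b d a' b' d' : ℝ) :
    Matrix.fromBlocks (a • M) (b • M) (b • M) (d • M) +
      Matrix.fromBlocks (a' • M) (b' • M) (b' • M) (d' • M) =
      Matrix.fromBlocks ((a + a') • M) ((b + b') • M) ((b + b') • M) ((d + d') • M) := by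
  rw [Matrix.fromBlocks_add]
  simp only [add_smul]

private lemma block_smul {l : Type*} (M : Matrix l l ℝ) (c a b d : ℝ) :
    c • Matrix.fromBlocks (a • M) (b • M) (b • M) (d • M) =
      Matrix.fromBlocks ((c * a) • M) ((c * b) • M) ((c * b) • M) ((c * d) • M) := by
  rw [Matrix.fromBlocks_smul]
  simp only [smul_smul]

private lemma block_eq {l m : Type*} (M : Matrix l l ℝ) (N : Matrix l m ℝ) (P : Matrix m l ℝ)
    (Q : Matrix m m ℝ) {a a' b b' c c' d d' : ℝ}
    (ha : a = a') (hb : b = b') (hc : c = c') (hd : d = d') :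
    Matrix.fromBlocks (a • M) (b • N) (c • P) (d • Q) =
      Matrix.fromBlocks (a' • M) (b' • N) (c' • P) (d' • Q) := by
  rw [ha, hb, hc, hd]

private lemma spectral_unique {n ι κ : Type*} [Fintype n] [DecidableEq n]
    [Fintype ι] [DecidableEq ι] [Fintype κ] [DecidableEq κ]
    {μ : ι → ℝ} (hμ : Function.Injective μ)
    {θ : κ → ℝ} (hθ : Function.Injective θ)
    {E : ι → Matrix n n ℝ} {G : κ → Matrix n n ℝ}
    (hEorth : ∀ r s, E r * E s = if r = s then E r else 0)
    (hGorth : ∀ r s, G r * G s = if r = s then G r else 0)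
    (hEsum : ∑ r, E r = 1) (hGsum : ∑ t, G t = 1)
    (hBE : ∑ r, μ r • E r = ∑ t, θ t • G t) :
    ∑ r, E r ⊙ E r = ∑ t, G t ⊙ G t := by
  have hEB : ∀ r, E r * (∑ s, μ s • E s) = μ r • E r := by
    intro r
    rw [Finset.mul_sum]
    rw [Finset.sum_eq_single r]
    · rw [Matrix.mul_smul, hEorth, if_pos rfl]
    · intro s _ hs
      rw [Matrix.mul_smul, hEorth, if_neg (Ne.symm hs), smul_zero]
    · intro h; exact absurd (Finset.mem_univ r) h
  have hBG : ∀ t, (∑ u, θ u • G u) * G t = θ t • G t := by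
    intro t
    rw [Finset.sum_mul]
    rw [Finset.sum_eq_single t]
    · rw [Matrix.smul_mul, hGorth, if_pos rfl]
    · intro u _ hu
      rw [Matrix.smul_mul, hGorth, if_neg hu, smul_zero]
    · intro h; exact absurd (Finset.mem_univ t) h
  have key : ∀ r t, μ r ≠ θ t → E r * G t = 0 := by
    intro r t hrt
    have h1 : E r * ((∑ u, θ u • G u) * G t) = θ t • (E r * G t) := by
      rw [hBG, Matrix.mul_smul]
    rw [← hBE, ← Matrix.mul_assoc, hEB, Matrix.smul_mul] at h1
    have h2 : (μ r - θ t) • (E r * G t) = 0 := by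
      rw [sub_smul, h1, sub_self]
    rcases smul_eq_zero.mp h2 with h | h
    · exact absurd (sub_eq_zero.mp h) hrt
    · exact h
  have hmatch : ∀ r t, μ r = θ t → E r = G t := by
    intro r t hrt
    have h1 : E r = E r * G t := by
      calc E r = E r * ∑ u, G u := by rw [hGsum, Matrix.mul_one]
        _ = ∑ u, E r * G u := Finset.mul_sum _ _ _
        _ = E r * G t := by
            apply Finset.sum_eq_single_of_mem t (Finset.mem_univ t)
            intro u _ hu
            exact key r u (fun h => hu (hθ (h.symm.trans hrt)))
    have h2 : G t = E r * G t := by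
      calc G t = (∑ s, E s) * G t := by rw [hEsum, Matrix.one_mul]
        _ = ∑ s, E s * G t := Finset.sum_mul _ _ _
        _ = E r * G t := by
            apply Finset.sum_eq_single_of_mem r (Finset.mem_univ r)
            intro s _ hs
            exact key s t (fun h => hs (hμ (h.trans hrt.symm)))
    rw [h1, ← h2]
  have hEzero : ∀ r, (∀ t, μ r ≠ θ t) → E r = 0 := by
    intro r hr
    calc E r = E r * ∑ u, G u := by rw [hGsum, Matrix.mul_one]
      _ = ∑ u, E r * G u := Finset.mul_sum _ _ _
      _ = 0 := Finset.sum_eq_zero fun u _ => key r u (hr u)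
  have hGzero : ∀ t, (∀ r, μ r ≠ θ t) → G t = 0 := by
    intro t ht
    calc G t = (∑ s, E s) * G t := by rw [hEsum, Matrix.one_mul]
      _ = ∑ s, E s * G t := Finset.sum_mul _ _ _
      _ = 0 := Finset.sum_eq_zero fun s _ => key s t (ht s)
  have step1 : ∀ r, E r ⊙ E r = ∑ t, if μ r = θ t then G t ⊙ G t else 0 := by
    intro r
    by_cases h : ∃ t, μ r = θ t
    · obtain ⟨t0, ht0⟩ := h
      rw [Finset.sum_eq_single_of_mem t0 (Finset.mem_univ t0)]
      · rw [if_pos ht0, hmatch r t0 ht0]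
      · intro t _ ht
        exact if_neg fun h' => ht (hθ (h'.symm.trans ht0))
    · push_neg at h
      rw [hEzero r h, Matrix.zero_hadamard]
      exact (Finset.sum_eq_zero fun t _ => if_neg (h t)).symm
  have step2 : ∀ t, (∑ r, if μ r = θ t then G t ⊙ G t else 0) = G t ⊙ G t := by
    intro t
    by_cases h : ∃ r, μ r = θ t
    · obtain ⟨r0, hr0⟩ := h
      rw [Finset.sum_eq_single_of_mem r0 (Finset.mem_univ r0)]
      · rw [if_pos hr0]
      · intro r _ hr
        exact if_neg fun h' => hr (hμ (h'.trans hr0.symm))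
    · push_neg at h
      rw [hGzero t h, Matrix.zero_hadamard]
      exact Finset.sum_eq_zero fun r _ => if_neg (h r)
  calc ∑ r, E r ⊙ E r = ∑ r, ∑ t, if μ r = θ t then G t ⊙ G t else 0 :=
        Finset.sum_congr rfl fun r _ => step1 r
    _ = ∑ t, ∑ r, if μ r = θ t then G t ⊙ G t else 0 := Finset.sum_comm
    _ = ∑ t, G t ⊙ G t := Finset.sum_congr rfl fun t _ => step2 t

private lemma block_add' {l : Type*} (M : Matrix l l ℝ) (a b d a' b' d' : ℝ) :
    Matrix.fromBlocks (a • M) (b • M) (b • M) (d • M) +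
      Matrix.fromBlocks (a' • M) (b' • M) (b' • M) (d' • M) =
      Matrix.fromBlocks ((a + a') • M) ((b + b') • M) ((b + b') • M) ((d + d') • M) := by
  rw [Matrix.fromBlocks_add]; simp only [add_smul]

private lemma block_smul' {l : Type*} (M : Matrix l l ℝ) (c a b d : ℝ) :
    c • Matrix.fromBlocks (a • M) (b • M) (b • M) (d • M) =
      Matrix.fromBlocks ((c * a) • M) ((c * b) • M) ((c * b) • M) ((c * d) • M) := by
  rw [Matrix.fromBlocks_smul]; simp only [smul_smul]

private lemma bool_sum_one {l : Type*} (M : Matrix l l ℝ) (x : ℝ) (hx : x ≠ 0) :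
    Matrix.fromBlocks ((x ^ 2 / (x ^ 2 + 1)) • M) ((x / (x ^ 2 + 1)) • M)
        ((x / (x ^ 2 + 1)) • M) ((1 / (x ^ 2 + 1)) • M) +
      Matrix.fromBlocks (((-x⁻¹) ^ 2 / ((-x⁻¹) ^ 2 + 1)) • M)
        ((-x⁻¹ / ((-x⁻¹) ^ 2 + 1)) • M) ((-x⁻¹ / ((-x⁻¹) ^ 2 + 1)) • M)
        ((1 / ((-x⁻¹) ^ 2 + 1)) • M) = Matrix.fromBlocks M 0 0 M := by
  have h1 : x ^ 2 + 1 ≠ 0 := by positivity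
  have h2 : (-x⁻¹) ^ 2 + 1 ≠ 0 := by positivity
  rw [block_add']
  have e1 : x ^ 2 / (x ^ 2 + 1) + (-x⁻¹) ^ 2 / ((-x⁻¹) ^ 2 + 1) = 1 := by
    field_simp; ring
  have e2 : x / (x ^ 2 + 1) + -x⁻¹ / ((-x⁻¹) ^ 2 + 1) = 0 := by
    field_simp; ring
  have e3 : 1 / (x ^ 2 + 1) + 1 / ((-x⁻¹) ^ 2 + 1) = 1 := by
    field_simp; ring
  rw [e1, e2, e3, one_smul, zero_smul]

private lemma bool_sum_eigen {l : Type*} (M : Matrix l l ℝ) (x lm : ℝ) (hx : x ≠ 0)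
    (hlm : lm = (x ^ 2 - 1) / x) :
    x • Matrix.fromBlocks ((x ^ 2 / (x ^ 2 + 1)) • M) ((x / (x ^ 2 + 1)) • M)
        ((x / (x ^ 2 + 1)) • M) ((1 / (x ^ 2 + 1)) • M) +
      (-x⁻¹) • Matrix.fromBlocks (((-x⁻¹) ^ 2 / ((-x⁻¹) ^ 2 + 1)) • M)
        ((-x⁻¹ / ((-x⁻¹) ^ 2 + 1)) • M) ((-x⁻¹ / ((-x⁻¹) ^ 2 + 1)) • M)
        ((1 / ((-x⁻¹) ^ 2 + 1)) • M) = Matrix.fromBlocks (lm • M) M M (0 : Matrix l l ℝ) := by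
  have h1 : x ^ 2 + 1 ≠ 0 := by positivity
  have h2 : (-x⁻¹) ^ 2 + 1 ≠ 0 := by positivity
  rw [block_smul', block_smul', block_add']
  have e1 : x * (x ^ 2 / (x ^ 2 + 1)) + -x⁻¹ * ((-x⁻¹) ^ 2 / ((-x⁻¹) ^ 2 + 1)) = lm := by
    rw [hlm]; field_simp; ring
  have e2 : x * (x / (x ^ 2 + 1)) + -x⁻¹ * (-x⁻¹ / ((-x⁻¹) ^ 2 + 1)) = 1 := by
    field_simp; ring
  have e3 : x * (1 / (x ^ 2 + 1)) + -x⁻¹ * (1 / ((-x⁻¹) ^ 2 + 1)) = 0 := by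
    field_simp; ring
  rw [e1, e2, e3, one_smul, zero_smul]

private lemma bool_sum_had {l : Type*} (M : Matrix l l ℝ) (x lm : ℝ) (hx : x ≠ 0)
    (hlm : lm = (x ^ 2 - 1) / x) :
    Matrix.fromBlocks ((x ^ 2 / (x ^ 2 + 1) * (x ^ 2 / (x ^ 2 + 1))) • M)
        ((x / (x ^ 2 + 1) * (x / (x ^ 2 + 1))) • M)
        ((x / (x ^ 2 + 1) * (x / (x ^ 2 + 1))) • M)
        ((1 / (x ^ 2 + 1) * (1 / (x ^ 2 + 1))) • M) +
      Matrix.fromBlocks (((-x⁻¹) ^ 2 / ((-x⁻¹) ^ 2 + 1) * ((-x⁻¹) ^ 2 / ((-x⁻¹) ^ 2 + 1))) • M)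
        ((-x⁻¹ / ((-x⁻¹) ^ 2 + 1) * (-x⁻¹ / ((-x⁻¹) ^ 2 + 1))) • M)
        ((-x⁻¹ / ((-x⁻¹) ^ 2 + 1) * (-x⁻¹ / ((-x⁻¹) ^ 2 + 1))) • M)
        ((1 / ((-x⁻¹) ^ 2 + 1) * (1 / ((-x⁻¹) ^ 2 + 1))) • M) =
      Matrix.fromBlocks ((1 - 2 / (lm ^ 2 + 4)) • M) ((2 / (lm ^ 2 + 4)) • M)
        ((2 / (lm ^ 2 + 4)) • M) ((1 - 2 / (lm ^ 2 + 4)) • M) := by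
  have h1 : x ^ 2 + 1 ≠ 0 := by positivity
  have h2 : (-x⁻¹) ^ 2 + 1 ≠ 0 := by positivity
  have h3 : lm ^ 2 + 4 ≠ 0 := by positivity
  rw [block_add']
  have e1 : x ^ 2 / (x ^ 2 + 1) * (x ^ 2 / (x ^ 2 + 1)) +
      (-x⁻¹) ^ 2 / ((-x⁻¹) ^ 2 + 1) * ((-x⁻¹) ^ 2 / ((-x⁻¹) ^ 2 + 1)) = 1 - 2 / (lm ^ 2 + 4) := by
    rw [hlm] at h3 ⊢; field_simp; ring
  have e2 : x / (x ^ 2 + 1) * (x / (x ^ 2 + 1)) +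
      -x⁻¹ / ((-x⁻¹) ^ 2 + 1) * (-x⁻¹ / ((-x⁻¹) ^ 2 + 1)) = 2 / (lm ^ 2 + 4) := by
    rw [hlm] at h3 ⊢; field_simp; ring
  have e3 : 1 / (x ^ 2 + 1) * (1 / (x ^ 2 + 1)) +
      1 / ((-x⁻¹) ^ 2 + 1) * (1 / ((-x⁻¹) ^ 2 + 1)) = 1 - 2 / (lm ^ 2 + 4) := by
    rw [hlm] at h3 ⊢; field_simp; ring
  rw [e1, e2, e3]

private lemma block_idem {l : Type*} [Fintype l] (M : Matrix l l ℝ) (hM : M * M = M) (z : ℝ) :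
    Matrix.fromBlocks ((z ^ 2 / (z ^ 2 + 1)) • M) ((z / (z ^ 2 + 1)) • M)
        ((z / (z ^ 2 + 1)) • M) ((1 / (z ^ 2 + 1)) • M) *
      Matrix.fromBlocks ((z ^ 2 / (z ^ 2 + 1)) • M) ((z / (z ^ 2 + 1)) • M)
        ((z / (z ^ 2 + 1)) • M) ((1 / (z ^ 2 + 1)) • M) =
      Matrix.fromBlocks ((z ^ 2 / (z ^ 2 + 1)) • M) ((z / (z ^ 2 + 1)) • M)
        ((z / (z ^ 2 + 1)) • M) ((1 / (z ^ 2 + 1)) • M) := by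
  rw [block_mul, hM]
  have h1 : z ^ 2 + 1 ≠ 0 := by positivity
  have e1 : z ^ 2 / (z ^ 2 + 1) * (z ^ 2 / (z ^ 2 + 1)) + z / (z ^ 2 + 1) * (z / (z ^ 2 + 1)) =
      z ^ 2 / (z ^ 2 + 1) := by field_simp
  have e2 : z ^ 2 / (z ^ 2 + 1) * (z / (z ^ 2 + 1)) + z / (z ^ 2 + 1) * (1 / (z ^ 2 + 1)) =
      z / (z ^ 2 + 1) := by field_simp
  have e3 : z / (z ^ 2 + 1) * (z ^ 2 / (z ^ 2 + 1)) + 1 / (z ^ 2 + 1) * (z / (z ^ 2 + 1)) =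
      z / (z ^ 2 + 1) := by field_simp
  have e4 : z / (z ^ 2 + 1) * (z / (z ^ 2 + 1)) + 1 / (z ^ 2 + 1) * (1 / (z ^ 2 + 1)) =
      1 / (z ^ 2 + 1) := by field_simp
  rw [e1, e2, e3, e4]

private lemma block_orth {l : Type*} [Fintype l] (M N : Matrix l l ℝ) (x y : ℝ) (hx : x ≠ 0)
    (hy : y = -x⁻¹) :
    Matrix.fromBlocks ((x ^ 2 / (x ^ 2 + 1)) • M) ((x / (x ^ 2 + 1)) • M)
        ((x / (x ^ 2 + 1)) • M) ((1 / (x ^ 2 + 1)) • M) *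
      Matrix.fromBlocks ((y ^ 2 / (y ^ 2 + 1)) • N) ((y / (y ^ 2 + 1)) • N)
        ((y / (y ^ 2 + 1)) • N) ((1 / (y ^ 2 + 1)) • N) = 0 := by
  subst hy
  rw [block_mul]
  have h1 : x ^ 2 + 1 ≠ 0 := by positivity
  have h2 : (-x⁻¹) ^ 2 + 1 ≠ 0 := by positivity
  have e1 : x ^ 2 / (x ^ 2 + 1) * ((-x⁻¹) ^ 2 / ((-x⁻¹) ^ 2 + 1)) +
      x / (x ^ 2 + 1) * (-x⁻¹ / ((-x⁻¹) ^ 2 + 1)) = 0 := by field_simp; ring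
  have e2 : x ^ 2 / (x ^ 2 + 1) * (-x⁻¹ / ((-x⁻¹) ^ 2 + 1)) +
      x / (x ^ 2 + 1) * (1 / ((-x⁻¹) ^ 2 + 1)) = 0 := by field_simp; ring
  have e3 : x / (x ^ 2 + 1) * ((-x⁻¹) ^ 2 / ((-x⁻¹) ^ 2 + 1)) +
      1 / (x ^ 2 + 1) * (-x⁻¹ / ((-x⁻¹) ^ 2 + 1)) = 0 := by field_simp; ring
  have e4 : x / (x ^ 2 + 1) * (-x⁻¹ / ((-x⁻¹) ^ 2 + 1)) +
      1 / (x ^ 2 + 1) * (1 / ((-x⁻¹) ^ 2 + 1)) = 0 := by field_simp; ring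
  rw [e1, e2, e3, e4, zero_smul, Matrix.fromBlocks_zero]
/-- If `A` (adjacency matrix of a graph on `n` vertices) has `n` distinct
eigenvalues `λ i` with rank-one spectral projections `F i`, and
`N = ∑ (2/(λ i² + 4)) • (F i ⊙ F i)`, then the average mixing matrix of
`B = [[A, I], [I, 0]]` is the block matrix `[[M̂(A) − N, N], [N, M̂(A) − N]]`. -/
theorem avgMixing_rootedProduct {V : Type*} [Fintype V] [DecidableEq V]
    (G : SimpleGraph V) [DecidableRel G.Adj]
    (A : Matrix V V ℝ) (hA : A = G.adjMatrix ℝ)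
    (lam : V → ℝ) (hlam : Function.Injective lam)
    (F : V → Matrix V V ℝ)
    (hFsymm : ∀ i, (F i).IsSymm)
    (hForth : ∀ i j, F i * F j = if i = j then F i else 0)
    (hFne : ∀ i, F i ≠ 0)
    (hFsum : ∑ i, F i = 1)
    (hAdecomp : A = ∑ i, lam i • F i)
    (B : Matrix (V ⊕ V) (V ⊕ V) ℝ) (hB : B = Matrix.fromBlocks A 1 1 0)
    (m : ℕ) (μ : Fin m → ℝ) (hμ : Function.Injective μ)
    (E : Fin m → Matrix (V ⊕ V) (V ⊕ V) ℝ)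
    (hEsymm : ∀ r, (E r).IsSymm)
    (hEorth : ∀ r s, E r * E s = if r = s then E r else 0)
    (hEsum : ∑ r, E r = 1)
    (hBdecomp : B = ∑ r, μ r • E r) :
    ∑ r, E r ⊙ E r =
      Matrix.fromBlocks
        ((∑ i, F i ⊙ F i) - ∑ i, (2 / (lam i ^ 2 + 4)) • (F i ⊙ F i))
        (∑ i, (2 / (lam i ^ 2 + 4)) • (F i ⊙ F i))
        (∑ i, (2 / (lam i ^ 2 + 4)) • (F i ⊙ F i))
        ((∑ i, F i ⊙ F i) - ∑ i, (2 / (lam i ^ 2 + 4)) • (F i ⊙ F i)) := by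
  classical
  obtain ⟨tt, httpos, httsq⟩ :
      ∃ tt : V → ℝ, (∀ i, 0 < tt i) ∧ ∀ i, tt i ^ 2 = lam i * tt i + 1 :=
    ⟨fun i => (lam i + Real.sqrt (lam i ^ 2 + 4)) / 2,
      fun i => (qroot (lam i)).1, fun i => (qroot (lam i)).2⟩
  have httne : ∀ i, tt i ≠ 0 := fun i => ne_of_gt (httpos i)
  have hlval : ∀ i, lam i = (tt i ^ 2 - 1) / tt i := by
    intro i
    rw [eq_div_iff (httne i)]
    linarith [httsq i]
  set θ : V × Bool → ℝ := fun p => cond p.2 (tt p.1) (-(tt p.1)⁻¹) with hθf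
  set Gm : V × Bool → Matrix (V ⊕ V) (V ⊕ V) ℝ := fun p =>
    Matrix.fromBlocks ((θ p ^ 2 / (θ p ^ 2 + 1)) • F p.1) ((θ p / (θ p ^ 2 + 1)) • F p.1)
      ((θ p / (θ p ^ 2 + 1)) • F p.1) ((1 / (θ p ^ 2 + 1)) • F p.1) with hGmf
  -- injectivity of θ
  have keytt : ∀ {a b : V}, tt a = tt b → a = b := by
    intro a b hab
    apply hlam
    rw [hlval a, hlval b, hab]
  have hθinj : Function.Injective θ := by
    rintro ⟨i, bi⟩ ⟨j, bj⟩ h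
    simp only [hθf] at h
    cases bi <;> cases bj <;> simp only [cond_true, cond_false] at h
    · have h' : tt i = tt j := inv_injective (neg_injective h)
      rw [keytt h']
    · exfalso
      have h1 : 0 < tt j := httpos j
      have h2 : 0 < (tt i)⁻¹ := inv_pos.mpr (httpos i)
      rw [← h] at h1
      linarith
    · exfalso
      have h1 : 0 < tt i := httpos i
      have h2 : 0 < (tt j)⁻¹ := inv_pos.mpr (httpos j)
      rw [h] at h1
      linarith
    · rw [keytt h]
  -- orthogonality of the projections Gm
  have hGorth : ∀ p q, Gm p * Gm q = if p = q then Gm p else 0 := by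
    rintro ⟨i, bi⟩ ⟨j, bj⟩
    by_cases hij : i = j
    · subst hij
      by_cases hb : bi = bj
      · subst hb
        rw [if_pos rfl]
        simp only [hGmf]
        exact block_idem (F i) (by rw [hForth, if_pos rfl]) (θ (i, bi))
      · rw [if_neg (by simp [hb])]
        simp only [hGmf, hθf]
        cases bi <;> cases bj <;> simp only [cond_true, cond_false]
        · exact absurd rfl hb
        · refine block_orth (F i) (F i) (-(tt i)⁻¹) (tt i) (by simp [httne i]) ?_
          rw [inv_neg, inv_inv, neg_neg]
        · exact block_orth (F i) (F i) (tt i) (-(tt i)⁻¹) (httne i) rfl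
        · exact absurd rfl hb
    · rw [if_neg (by simp [hij])]
      simp only [hGmf]
      rw [block_mul, hForth, if_neg hij]
      simp
  -- the projections sum to the identity
  have hGsum : ∑ p, Gm p = 1 := by
    rw [Fintype.sum_prod_type]
    have h1 : ∀ i, (∑ b, Gm (i, b)) = Matrix.fromBlocks (F i) 0 0 (F i) := by
      intro i
      rw [Fintype.sum_bool]
      simp only [hGmf, hθf, cond_true, cond_false]
      exact bool_sum_one (F i) (tt i) (httne i)
    rw [Finset.sum_congr rfl fun i _ => h1 i]
    rw [sum_fromBlocks (fun i => F i) (fun _ => 0) (fun _ => 0) (fun i => F i)]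
    rw [hFsum]
    simp [Matrix.fromBlocks_one]
  -- the spectral decomposition of B
  have hBGsum : ∑ p, θ p • Gm p = B := by
    rw [Fintype.sum_prod_type]
    have h1 : ∀ i, (∑ b, θ (i, b) • Gm (i, b)) =
        Matrix.fromBlocks (lam i • F i) (F i) (F i) 0 := by
      intro i
      rw [Fintype.sum_bool]
      simp only [hGmf, hθf, cond_true, cond_false]
      exact bool_sum_eigen (F i) (tt i) (lam i) (httne i) (hlval i)
    rw [Finset.sum_congr rfl fun i _ => h1 i]
    rw [sum_fromBlocks (fun i => lam i • F i) (fun i => F i) (fun i => F i) (fun _ => 0)]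
    rw [hFsum, ← hAdecomp, hB]
    simp
  -- apply uniqueness of the spectral decomposition
  rw [spectral_unique hμ hθinj hEorth hGorth hEsum hGsum (by rw [← hBdecomp, hBGsum])]
  -- compute the sum of Schur squares of the Gm
  have hGG : ∀ p, Gm p ⊙ Gm p =
      Matrix.fromBlocks ((θ p ^ 2 / (θ p ^ 2 + 1) * (θ p ^ 2 / (θ p ^ 2 + 1))) • (F p.1 ⊙ F p.1))
        ((θ p / (θ p ^ 2 + 1) * (θ p / (θ p ^ 2 + 1))) • (F p.1 ⊙ F p.1))
        ((θ p / (θ p ^ 2 + 1) * (θ p / (θ p ^ 2 + 1))) • (F p.1 ⊙ F p.1))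
        ((1 / (θ p ^ 2 + 1) * (1 / (θ p ^ 2 + 1))) • (F p.1 ⊙ F p.1)) := by
    intro p
    simp only [hGmf]
    rw [fromBlocks_hadamard', smul_hadamard_smul', smul_hadamard_smul', smul_hadamard_smul']
  calc ∑ p, Gm p ⊙ Gm p = ∑ i, ∑ b, Gm (i, b) ⊙ Gm (i, b) := Fintype.sum_prod_type _
    _ = ∑ i, Matrix.fromBlocks ((1 - 2 / (lam i ^ 2 + 4)) • (F i ⊙ F i))
          ((2 / (lam i ^ 2 + 4)) • (F i ⊙ F i)) ((2 / (lam i ^ 2 + 4)) • (F i ⊙ F i))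
          ((1 - 2 / (lam i ^ 2 + 4)) • (F i ⊙ F i)) := by
        refine Finset.sum_congr rfl fun i _ => ?_
        rw [Fintype.sum_bool, hGG, hGG]
        simp only [hθf, cond_true, cond_false]
        exact bool_sum_had (F i ⊙ F i) (tt i) (lam i) (httne i) (hlval i)
    _ = Matrix.fromBlocks (∑ i, (1 - 2 / (lam i ^ 2 + 4)) • (F i ⊙ F i))
          (∑ i, (2 / (lam i ^ 2 + 4)) • (F i ⊙ F i)) (∑ i, (2 / (lam i ^ 2 + 4)) • (F i ⊙ F i))
          (∑ i, (1 - 2 / (lam i ^ 2 + 4)) • (F i ⊙ F i)) :=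
        sum_fromBlocks _ _ _ _
    _ = _ := by
        have h2 : ∑ i, (1 - 2 / (lam i ^ 2 + 4)) • (F i ⊙ F i) =
            (∑ i, F i ⊙ F i) - ∑ i, (2 / (lam i ^ 2 + 4)) • (F i ⊙ F i) := by
          rw [← Finset.sum_sub_distrib]
          refine Finset.sum_congr rfl fun i _ => ?_
          rw [sub_smul, one_smul]
        rw [h2]
end

section
/- Let A be a real symmetric n × n matrix with n distinct eigenvalues λ_1,…,λ_n, with F_i the orthogonal projection onto the λ_i-eigenspace, and let N = ∑_{i=1}^n (2/(λ_i² + 4)) (F_i ∘ F_i). Then N and the average mixing matrix M̂ = ∑_{i=1}^n F_i ∘ F_i have the same kernel. -/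
open scoped Matrix

lemma swap4 {n : ℕ} (f : Fin n → Fin n → Fin n → Fin n → ℝ) :
    ∑ j, ∑ k, ∑ l, ∑ m, f j k l m = ∑ l, ∑ m, ∑ j, ∑ k, f j k l m := by
  calc ∑ j, ∑ k, ∑ l, ∑ m, f j k l m
      = ∑ j, ∑ l, ∑ k, ∑ m, f j k l m :=
        Finset.sum_congr rfl fun j _ => Finset.sum_comm
    _ = ∑ l, ∑ j, ∑ k, ∑ m, f j k l m := Finset.sum_comm
    _ = ∑ l, ∑ j, ∑ m, ∑ k, f j k l m :=
        Finset.sum_congr rfl fun l _ => Finset.sum_congr rfl fun j _ =>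
          Finset.sum_comm
    _ = ∑ l, ∑ m, ∑ j, ∑ k, f j k l m :=
        Finset.sum_congr rfl fun l _ => Finset.sum_comm

open Matrix in
/-- Sum-of-squares identity for the quadratic form of `F ⊙ F` when `F` is a symmetric
idempotent. -/
lemma hadamard_quadform_sos {n : ℕ} (F : Matrix (Fin n) (Fin n) ℝ)
    (hF : F.IsSymm) (hFF : F * F = F) (x : Fin n → ℝ) :
    x ⬝ᵥ (F ⊙ F) *ᵥ x = ∑ l, ∑ m, (∑ j, F l j * F m j * x j) ^ 2 := by
  have hentry : ∀ j k, F j k = ∑ l, F l j * F l k := by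
    intro j k
    have := congrFun (congrFun hFF j) k
    simp only [Matrix.mul_apply] at this
    rw [← this]
    congr 1
    ext l
    rw [← hF.apply j l]
  simp only [dotProduct, Matrix.mulVec, dotProduct,
    Matrix.hadamard_apply]
  have lhs_eq : ∑ j, x j * ∑ k, F j k * F j k * x k
      = ∑ j, ∑ k, ∑ l, ∑ m, (F l j * F m j * x j) * (F l k * F m k * x k) := by
    apply Finset.sum_congr rfl; intro j _
    rw [Finset.mul_sum]
    apply Finset.sum_congr rfl; intro k _
    rw [hentry j k, Finset.sum_mul_sum, Finset.sum_mul, Finset.mul_sum]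
    apply Finset.sum_congr rfl; intro l _
    rw [Finset.sum_mul, Finset.mul_sum]
    apply Finset.sum_congr rfl; intro m _
    ring
  rw [lhs_eq, swap4]
  apply Finset.sum_congr rfl; intro l _
  apply Finset.sum_congr rfl; intro m _
  rw [sq, Finset.sum_mul_sum]

open Matrix in
lemma hadamard_posSemidef {n : ℕ} (F : Matrix (Fin n) (Fin n) ℝ)
    (hF : F.IsSymm) (hFF : F * F = F) : (F ⊙ F).PosSemidef := by
  refine Matrix.PosSemidef.of_dotProduct_mulVec_nonneg ?_ ?_
  · ext j k
    simp only [Matrix.conjTranspose_apply, Matrix.hadamard_apply, star_trivial]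
    rw [hF.apply j k]
  · intro x
    have hx : star x = x := rfl
    rw [hx, hadamard_quadform_sos F hF hFF x]
    positivity

open Matrix in
lemma sum_mulVec' {n N : ℕ} (M : Fin N → Matrix (Fin n) (Fin n) ℝ)
    (x : Fin n → ℝ) : (∑ i, M i) *ᵥ x = ∑ i, M i *ᵥ x := by
  ext j
  simp only [Matrix.mulVec, dotProduct, Matrix.sum_apply, Finset.sum_apply, Finset.sum_mul]
  rw [Finset.sum_comm]

open Matrix in
/-- Kernel of a positive combination of PSD matrices is the intersection of kernels. -/
lemma pos_comb_kernel {n N : ℕ} (M : Fin N → Matrix (Fin n) (Fin n) ℝ)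
    (hM : ∀ i, (M i).PosSemidef) (c : Fin N → ℝ) (hc : ∀ i, 0 < c i)
    (x : Fin n → ℝ) :
    (∑ i, c i • M i) *ᵥ x = 0 ↔ ∀ i, M i *ᵥ x = 0 := by
  constructor
  · intro h
    have hq : ∑ i, c i * (x ⬝ᵥ M i *ᵥ x) = 0 := by
      have h0 : x ⬝ᵥ (∑ i, c i • M i) *ᵥ x = 0 := by rw [h, dotProduct_zero]
      have dps : ∀ (v : Fin N → Fin n → ℝ), x ⬝ᵥ (∑ i, v i) = ∑ i, x ⬝ᵥ v i := by
        intro v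
        simp only [dotProduct, Finset.sum_apply, Finset.mul_sum]
        exact Finset.sum_comm
      rw [← h0, sum_mulVec', dps]
      apply Finset.sum_congr rfl; intro i _
      rw [Matrix.smul_mulVec, dotProduct_smul, smul_eq_mul]
    have hterm : ∀ i ∈ Finset.univ, c i * (x ⬝ᵥ M i *ᵥ x) = 0 := by
      apply (Finset.sum_eq_zero_iff_of_nonneg ?_).mp hq
      intro i _
      have h1 := (hM i).dotProduct_mulVec_nonneg x
      rw [show star x = x from rfl] at h1
      exact mul_nonneg (hc i).le h1
    intro i
    have hqi : x ⬝ᵥ M i *ᵥ x = 0 := by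
      have := hterm i (Finset.mem_univ i)
      exact (mul_eq_zero.mp this).resolve_left (hc i).ne'
    have h2 := (hM i).dotProduct_mulVec_zero_iff x
    rw [show star x = x from rfl] at h2
    exact h2.mp hqi
  · intro h
    rw [sum_mulVec']
    apply Finset.sum_eq_zero
    intro i _
    rw [Matrix.smul_mulVec, h i, smul_zero]

/-- For a real symmetric `n × n` matrix `A` with `n` distinct eigenvalues
`λ i` and spectral projections `F i`, the matrix `N = ∑ (2/(λ i² + 4)) • (F i ⊙ F i)` has the
same kernel as the average mixing matrix `M̂ = ∑ F i ⊙ F i`. -/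
theorem kernel_N_eq_kernel_avgMixing {n : ℕ}
    (A : Matrix (Fin n) (Fin n) ℝ) (hA : A.IsSymm)
    (lam : Fin n → ℝ) (hlam : Function.Injective lam)
    (F : Fin n → Matrix (Fin n) (Fin n) ℝ)
    (hFsymm : ∀ i, (F i).IsSymm)
    (hForth : ∀ i j, F i * F j = if i = j then F i else 0)
    (hFne : ∀ i, F i ≠ 0)
    (hFsum : ∑ i, F i = 1)
    (hAdecomp : A = ∑ i, lam i • F i) :
    ∀ x : Fin n → ℝ,
      (∑ i, (2 / (lam i ^ 2 + 4)) • (F i ⊙ F i)) *ᵥ x = 0 ↔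
        (∑ i, F i ⊙ F i) *ᵥ x = 0 := by
  intro x
  have hpos : ∀ i, (0:ℝ) < 2 / (lam i ^ 2 + 4) := by
    intro i; positivity
  have hidem : ∀ i, F i * F i = F i := by
    intro i; simpa using hForth i i
  have hpsd : ∀ i, (F i ⊙ F i).PosSemidef := fun i =>
    hadamard_posSemidef (F i) (hFsymm i) (hidem i)
  rw [pos_comb_kernel _ hpsd _ hpos x]
  have h1 := pos_comb_kernel (fun i => F i ⊙ F i) hpsd (fun _ => 1)
    (fun _ => one_pos) x
  simp only [one_smul] at h1
  rw [h1]
end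

section
/- Let X be a finite simple graph with adjacency matrix A and spectral decomposition A = ∑_{r=1}^d θ_r E_r, and let M̂ be its average mixing matrix. For vertices u and v with standard basis vectors e_u, e_v, one has M̂e_u = M̂e_v if and only if u and v are strongly cospectral, i.e., for every r, E_r e_u = E_r e_v or E_r e_u = −E_r e_v. -/
open scoped Matrix

open Finset in
/-- For a graph `X` with adjacency matrix `A = ∑ θ r • E r` and average
mixing matrix `M̂ = ∑ E r ⊙ E r`, two vertices `u, v` satisfy `M̂ e_u = M̂ e_v` iff they are
strongly cospectral, i.e. `E r e_u = ± E r e_v` for every `r`. -/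
theorem avgMixing_columns_eq_iff_stronglyCospectral {V : Type*} [Fintype V] [DecidableEq V]
    (G : SimpleGraph V) [DecidableRel G.Adj]
    (A : Matrix V V ℝ) (hA : A = G.adjMatrix ℝ)
    (d : ℕ) (θ : Fin d → ℝ) (hθ : Function.Injective θ)
    (E : Fin d → Matrix V V ℝ)
    (hsymm : ∀ r, (E r).IsSymm)
    (horth : ∀ r s, E r * E s = if r = s then E r else 0)
    (hsum : ∑ r, E r = 1)
    (hdecomp : A = ∑ r, θ r • E r)
    (u v : V) :
    (∑ r, E r ⊙ E r) *ᵥ Pi.single u 1 = (∑ r, E r ⊙ E r) *ᵥ Pi.single v 1 ↔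
      ∀ r, E r *ᵥ Pi.single u 1 = E r *ᵥ Pi.single v 1 ∨
        E r *ᵥ Pi.single u 1 = -(E r *ᵥ Pi.single v 1) := by
  classical
  -- idempotence entrywise, with symmetry
  have hidem : ∀ (r : Fin d) (i j : V), ∑ w, E r w i * E r w j = E r i j := by
    intro r i j
    have h1 : E r * E r = E r := by simpa using horth r r
    have h2 : (E r * E r) i j = E r i j := by rw [h1]
    rw [Matrix.mul_apply] at h2
    rw [← h2]
    refine Finset.sum_congr rfl fun w _ => ?_
    rw [(hsymm r).apply i w]
  constructor
  · intro h r
    set a : Fin d → ℝ := fun r => E r u u with ha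
    set b : Fin d → ℝ := fun r => E r v v with hb
    set c : Fin d → ℝ := fun r => E r u v with hc
    -- the three coordinate identities
    have key : ∀ w : V, ∑ s, E s w u ^ 2 = ∑ s, E s w v ^ 2 := by
      intro w
      have := congrFun h w
      simpa [Matrix.mulVec_single, Matrix.sum_apply, Matrix.hadamard_apply, sq] using this
    have h1 : ∑ s, a s ^ 2 = ∑ s, c s ^ 2 := by
      have := key u
      simpa [ha, hc, sq, (hsymm _).apply] using this
    have h2 : ∑ s, c s ^ 2 = ∑ s, b s ^ 2 := by
      have := key v
      simpa [hb, hc, sq, (hsymm _).apply] using this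
    -- Cauchy–Schwarz termwise
    have hcs : ∀ s, c s ^ 2 ≤ a s * b s := by
      intro s
      have := Finset.sum_mul_sq_le_sq_mul_sq Finset.univ
        (fun w => E s w u) (fun w => E s w v)
      calc c s ^ 2 = (∑ w, E s w u * E s w v) ^ 2 := by rw [hidem s u v]
        _ ≤ (∑ w, E s w u ^ 2) * ∑ w, E s w v ^ 2 := this
        _ = a s * b s := by
            rw [show ∑ w, E s w u ^ 2 = a s by
                  simpa [sq] using hidem s u u,
                show ∑ w, E s w v ^ 2 = b s by
                  simpa [sq] using hidem s v v]
    -- a = b termwise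
    have hab : ∀ s, a s = b s := by
      have hle : ∑ s, (a s - b s) ^ 2 ≤ 0 := by
        have : ∑ s, (a s - b s) ^ 2
            = ∑ s, a s ^ 2 + ∑ s, b s ^ 2 - 2 * ∑ s, a s * b s := by
          have e : ∑ s, (a s - b s) ^ 2
              = ∑ s, (a s ^ 2 + b s ^ 2 - 2 * (a s * b s)) :=
            Finset.sum_congr rfl fun s _ => by ring
          rw [e, Finset.sum_sub_distrib, Finset.sum_add_distrib, ← Finset.mul_sum]
        rw [this, h1, h2]
        have : ∑ s, c s ^ 2 ≤ ∑ s, a s * b s :=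
          Finset.sum_le_sum fun s _ => hcs s
        linarith
      intro s
      have hz : ∑ s, (a s - b s) ^ 2 = 0 :=
        le_antisymm hle (Finset.sum_nonneg fun s _ => sq_nonneg _)
      have := (Finset.sum_eq_zero_iff_of_nonneg
        (fun s _ => sq_nonneg (a s - b s))).1 hz s (Finset.mem_univ s)
      have := pow_eq_zero_iff (n := 2) (by norm_num) |>.1 this
      linarith [this]
    -- c s ^ 2 = a s ^ 2 termwise
    have hca : c r ^ 2 = a r ^ 2 := by
      have hsumeq : ∑ s, c s ^ 2 = ∑ s, a s * b s := by
        have h3 : ∑ s, a s * b s = ∑ s, b s ^ 2 :=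
          Finset.sum_congr rfl fun s _ => by rw [hab s]; ring
        rw [h3, h2]
      have := (Finset.sum_eq_sum_iff_of_le (fun s _ => hcs s)).1 hsumeq r
        (Finset.mem_univ r)
      rw [this, ← hab r]; ring
    -- conclude
    have habr := hab r
    rcases (Commute.sq_eq_sq_iff_eq_or_eq_neg (Commute.all _ _)).1 hca with hcr | hcr
    · left
      have hz : ∑ w, (E r w u - E r w v) ^ 2 = 0 := by
        have expand : ∑ w, (E r w u - E r w v) ^ 2
            = (∑ w, E r w u * E r w u) + (∑ w, E r w v * E r w v)
              - 2 * ∑ w, E r w u * E r w v := by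
          have e : ∑ w, (E r w u - E r w v) ^ 2
              = ∑ w, (E r w u * E r w u + E r w v * E r w v
                - 2 * (E r w u * E r w v)) :=
            Finset.sum_congr rfl fun w _ => by ring
          rw [e, Finset.sum_sub_distrib, Finset.sum_add_distrib, ← Finset.mul_sum]
        rw [expand, hidem r u u, hidem r v v, hidem r u v]
        have : E r u u = E r v v := habr
        have hc' : E r u v = E r u u := hcr
        rw [hc']; linarith
      funext w
      have := (Finset.sum_eq_zero_iff_of_nonneg
        (fun w _ => sq_nonneg (E r w u - E r w v))).1 hz w (Finset.mem_univ w)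
      have := pow_eq_zero_iff (n := 2) (by norm_num) |>.1 this
      simp only [Matrix.mulVec_single_one, Matrix.col_apply]
      linarith
    · right
      have hz : ∑ w, (E r w u + E r w v) ^ 2 = 0 := by
        have expand : ∑ w, (E r w u + E r w v) ^ 2
            = (∑ w, E r w u * E r w u) + (∑ w, E r w v * E r w v)
              + 2 * ∑ w, E r w u * E r w v := by
          have e : ∑ w, (E r w u + E r w v) ^ 2
              = ∑ w, (E r w u * E r w u + E r w v * E r w v
                + 2 * (E r w u * E r w v)) :=
            Finset.sum_congr rfl fun w _ => by ring
          rw [e, Finset.sum_add_distrib, Finset.sum_add_distrib, ← Finset.mul_sum]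
        rw [expand, hidem r u u, hidem r v v, hidem r u v]
        have : E r u u = E r v v := habr
        have hc' : E r u v = -E r u u := hcr
        rw [hc']; linarith
      funext w
      have := (Finset.sum_eq_zero_iff_of_nonneg
        (fun w _ => sq_nonneg (E r w u + E r w v))).1 hz w (Finset.mem_univ w)
      have := pow_eq_zero_iff (n := 2) (by norm_num) |>.1 this
      simp only [Matrix.mulVec_single_one, Matrix.col_apply, Pi.neg_apply]
      linarith
  · intro h
    funext w
    simp only [Matrix.mulVec_single_one, Matrix.col_apply, Matrix.sum_apply, Matrix.hadamard_apply]
    refine Finset.sum_congr rfl fun r _ => ?_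
    rcases h r with hr | hr
    · have := congrFun hr w
      simp only [Matrix.mulVec_single_one, Matrix.col_apply] at this
      rw [this]
    · have := congrFun hr w
      simp only [Matrix.mulVec_single_one, Matrix.col_apply, Pi.neg_apply] at this
      rw [this]; ring
end

section
/- Let X be a finite simple graph on n vertices whose adjacency matrix A has n distinct eigenvalues, and let B = [[A, I],[I, 0]] be the adjacency matrix of the rooted product X(K_2). Then rank(M̂(B)) ≤ 2·rank(M̂(A)); equivalently, the kernel of M̂(B) has dimension at least twice the dimension of the kernel of M̂(A). -/
open scoped Matrix
open Matrix Module

section Aux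
variable {n : Type*} [Fintype n] [DecidableEq n]
set_option linter.unusedSectionVars false

lemma my_sum_mulVec {ι κ : Type*} [Fintype κ] (s : Finset ι) (M : ι → Matrix κ κ ℝ)
    (x : κ → ℝ) : (∑ r ∈ s, M r) *ᵥ x = ∑ r ∈ s, (M r *ᵥ x) := by
  ext a
  simp only [Matrix.mulVec, dotProduct, Matrix.sum_apply, Finset.sum_mul, Finset.sum_apply]
  rw [Finset.sum_comm]

lemma unused_sum_mulVec {ι : Type*} (s : Finset ι) (M : ι → Matrix n n ℝ) (x : n → ℝ) :
    (∑ r ∈ s, M r) *ᵥ x = ∑ r ∈ s, (M r *ᵥ x) := by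
  ext a
  simp [Matrix.mulVec, dotProduct, Matrix.sum_apply, Finset.sum_mul]
  rw [Finset.sum_comm]

lemma my_vecMulVec_mulVec (u v x : n → ℝ) :
    vecMulVec u v *ᵥ x = (v ⬝ᵥ x) • u := by
  ext a
  simp [Matrix.mulVec, dotProduct, vecMulVec_apply, Finset.mul_sum, Finset.sum_mul]
  ring_nf

lemma my_rank_add_le (M N : Matrix n n ℝ) : (M + N).rank ≤ M.rank + N.rank := by
  have h : LinearMap.range (M + N).mulVecLin ≤
      LinearMap.range M.mulVecLin ⊔ LinearMap.range N.mulVecLin := by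
    rintro x ⟨y, rfl⟩
    have : (M + N).mulVecLin y = M.mulVecLin y + N.mulVecLin y := by
      simp [Matrix.mulVecLin_apply, Matrix.add_mulVec]
    rw [this]
    exact Submodule.add_mem_sup (LinearMap.mem_range_self _ _) (LinearMap.mem_range_self _ _)
  calc (M + N).rank ≤ finrank ℝ ↥(LinearMap.range M.mulVecLin ⊔ LinearMap.range N.mulVecLin) :=
        Submodule.finrank_mono h
    _ ≤ M.rank + N.rank := Submodule.finrank_add_le_finrank_add_finrank _ _

lemma my_rank_add_orth (M N : Matrix n n ℝ) (hM : M * M = M) (hN : N * N = N)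
    (hMN : M * N = 0) (hNM : N * M = 0) : (M + N).rank = M.rank + N.rank := by
  refine le_antisymm (my_rank_add_le M N) ?_
  have hsub : LinearMap.range M.mulVecLin ⊔ LinearMap.range N.mulVecLin ≤
      LinearMap.range (M + N).mulVecLin := by
    refine sup_le ?_ ?_
    · rintro x ⟨y, rfl⟩
      refine ⟨M *ᵥ y, ?_⟩
      simp only [Matrix.mulVecLin_apply, Matrix.add_mulVec, Matrix.mulVec_mulVec]
      rw [Matrix.add_mul, hM, hNM]
      simp
    · rintro x ⟨y, rfl⟩
      refine ⟨N *ᵥ y, ?_⟩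
      simp only [Matrix.mulVecLin_apply, Matrix.add_mulVec, Matrix.mulVec_mulVec]
      rw [Matrix.add_mul, hN, hMN]
      simp
  have hinf : LinearMap.range M.mulVecLin ⊓ LinearMap.range N.mulVecLin = ⊥ := by
    rw [Submodule.eq_bot_iff]
    rintro x ⟨⟨y, hy⟩, ⟨z, hz⟩⟩
    have h1 : M *ᵥ x = x := by
      rw [← hy]; simp only [Matrix.mulVecLin_apply, Matrix.mulVec_mulVec, hM]
    have h2 : M *ᵥ x = 0 := by
      rw [← hz]; simp only [Matrix.mulVecLin_apply, Matrix.mulVec_mulVec, hMN, Matrix.zero_mulVec]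
    rw [h1] at h2; exact h2
  have := Submodule.finrank_sup_add_finrank_inf_eq
    (LinearMap.range M.mulVecLin) (LinearMap.range N.mulVecLin)
  rw [hinf] at this
  simp only [finrank_bot, add_zero] at this
  calc M.rank + N.rank
      = finrank ℝ ↥(LinearMap.range M.mulVecLin ⊔ LinearMap.range N.mulVecLin) := this.symm
    _ ≤ (M + N).rank := Submodule.finrank_mono hsub

lemma my_rank_one_vecMulVec (M : Matrix n n ℝ) (h : M.rank = 1) :
    ∃ u v : n → ℝ, M = vecMulVec u v := by
  have h1 : finrank ℝ ↥(LinearMap.range M.mulVecLin) = 1 := h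
  obtain ⟨v₀, hv₀ne, hv₀⟩ := finrank_eq_one_iff'.mp h1
  choose c hc using hv₀
  refine ⟨fun i => (v₀ : n → ℝ) i,
    fun j => c ⟨M.mulVecLin (Pi.single j 1), LinearMap.mem_range_self _ _⟩, ?_⟩
  ext i j
  have h2 := congrFun (congrArg (Subtype.val)
    (hc ⟨M.mulVecLin (Pi.single j 1), LinearMap.mem_range_self _ _⟩)) i
  simp only [SetLike.val_smul, Pi.smul_apply, smul_eq_mul] at h2
  rw [vecMulVec_apply]
  have h3 : M.mulVecLin (Pi.single j 1) i = M i j := by simp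
  rw [← h3, ← h2]
  ring

lemma my_symm_idem_vecMulVec (M : Matrix n n ℝ) (hs : M.IsSymm) (hi : M * M = M)
    (hne : M ≠ 0) (h : M.rank = 1) : ∃ w : n → ℝ, M = vecMulVec w w := by
  obtain ⟨u, v, rfl⟩ := my_rank_one_vecMulVec M h
  have hsym : ∀ i j, u j * v i = u i * v j := by
    intro i j
    have := congrFun (congrFun hs i) j
    simpa [Matrix.transpose_apply, vecMulVec_apply] using this
  have hne' : ∃ a b, u a * v b ≠ 0 := by
    by_contra hcon
    push_neg at hcon
    exact hne (by ext a b; simpa [vecMulVec_apply] using hcon a b)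
  obtain ⟨a₀, b₀, hab⟩ := hne'
  have hua : u a₀ ≠ 0 := fun h0 => hab (by simp [h0])
  have hvb : v b₀ ≠ 0 := fun h0 => hab (by simp [h0])
  set t := u b₀ / v b₀ with ht
  clear_value t
  have hu : ∀ a, u a = t * v a := by
    intro a
    rw [ht, div_mul_eq_mul_div, eq_div_iff hvb]
    linarith [hsym a b₀]
  have htne : t ≠ 0 := by
    intro h0
    exact hua (by rw [hu a₀, h0, zero_mul])
  have hidem := congrFun (congrFun hi b₀) b₀
  have hS : t * (t * (∑ k, v k * v k)) * (v b₀ * v b₀) = t * (v b₀ * v b₀) := by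
    have h3 : (vecMulVec u v * vecMulVec u v) b₀ b₀ = (vecMulVec u v) b₀ b₀ := hidem
    rw [Matrix.mul_apply] at h3
    simp only [vecMulVec_apply] at h3
    calc t * (t * (∑ k, v k * v k)) * (v b₀ * v b₀)
        = ∑ k, (u b₀ * v k) * (u k * v b₀) := by
          rw [Finset.mul_sum, Finset.mul_sum, Finset.sum_mul]
          exact Finset.sum_congr rfl fun k _ => by rw [hu b₀, hu k]; ring
      _ = u b₀ * v b₀ := h3
      _ = t * (v b₀ * v b₀) := by rw [hu b₀]; ring
  have hvbsq : v b₀ * v b₀ ≠ 0 := mul_ne_zero hvb hvb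
  have h4 := mul_right_cancel₀ hvbsq hS
  have htS : t * (∑ k, v k * v k) = 1 :=
    mul_left_cancel₀ htne (by rw [mul_one]; exact h4)
  have hSnonneg : (0:ℝ) ≤ ∑ k, v k * v k :=
    Finset.sum_nonneg fun k _ => mul_self_nonneg (v k)
  have htpos : 0 < t := by nlinarith [htS, hSnonneg]
  refine ⟨fun a => Real.sqrt t * v a, ?_⟩
  ext i j
  rw [vecMulVec_apply, vecMulVec_apply, hu i]
  have hss : Real.sqrt t * Real.sqrt t = t := Real.mul_self_sqrt htpos.le
  linear_combination (-(v i * v j)) * hss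

lemma my_conj_vecMulVec (w : n → ℝ) (R : Matrix n n ℝ) :
    vecMulVec w w * R * vecMulVec w w = (w ⬝ᵥ (R *ᵥ w)) • vecMulVec w w := by
  ext i j
  simp only [Matrix.mul_apply, vecMulVec_apply, Matrix.smul_apply, smul_eq_mul,
    dotProduct, Matrix.mulVec, Finset.sum_mul, Finset.mul_sum]
  rw [Finset.sum_comm]
  refine Finset.sum_congr rfl fun b _ => ?_
  refine Finset.sum_congr rfl fun a _ => by ring

lemma my_hadamard_fromBlocks (A A' B B' C C' D D' : Matrix n n ℝ) :
    (fromBlocks A B C D) ⊙ (fromBlocks A' B' C' D') =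
      fromBlocks (A ⊙ A') (B ⊙ B') (C ⊙ C') (D ⊙ D') := by
  ext i j
  cases i <;> cases j <;> simp [Matrix.hadamard_apply]

lemma my_fromBlocks_zero : (fromBlocks (0 : Matrix n n ℝ) (0 : Matrix n n ℝ) (0 : Matrix n n ℝ) (0 : Matrix n n ℝ)) = 0 := by
  ext i j
  cases i <;> cases j <;> simp

end Aux

/-- If `A` (adjacency matrix of a graph on `n` vertices) has `n` distinct
eigenvalues and `B = [[A, I], [I, 0]]` is the adjacency matrix of the rooted product
`X(K₂)`, then `rank M̂(B) ≤ 2 · rank M̂(A)`. -/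
theorem rank_avgMixing_rootedProduct_le {V : Type*} [Fintype V] [DecidableEq V]
    (G : SimpleGraph V) [DecidableRel G.Adj]
    (A : Matrix V V ℝ) (hA : A = G.adjMatrix ℝ)
    (lam : V → ℝ) (hlam : Function.Injective lam)
    (F : V → Matrix V V ℝ)
    (hFsymm : ∀ i, (F i).IsSymm)
    (hForth : ∀ i j, F i * F j = if i = j then F i else 0)
    (hFne : ∀ i, F i ≠ 0)
    (hFsum : ∑ i, F i = 1)
    (hAdecomp : A = ∑ i, lam i • F i)
    (B : Matrix (V ⊕ V) (V ⊕ V) ℝ) (hB : B = Matrix.fromBlocks A 1 1 0)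
    (m : ℕ) (μ : Fin m → ℝ) (hμ : Function.Injective μ)
    (E : Fin m → Matrix (V ⊕ V) (V ⊕ V) ℝ)
    (hEsymm : ∀ r, (E r).IsSymm)
    (hEorth : ∀ r s, E r * E s = if r = s then E r else 0)
    (hEsum : ∑ r, E r = 1)
    (hBdecomp : B = ∑ r, μ r • E r) :
    (∑ r, E r ⊙ E r).rank ≤ 2 * (∑ i, F i ⊙ F i).rank := by
  classical
  -- basic spectral relations
  have hFidem : ∀ i, F i * F i = F i := fun i => by simpa using hForth i i
  have hFA : ∀ j, F j * A = lam j • F j := by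
    intro j
    rw [hAdecomp, Finset.mul_sum]
    rw [Finset.sum_congr rfl (fun i _ => by
      rw [mul_smul_comm, hForth j i] : ∀ i ∈ Finset.univ, F j * (lam i • F i)
        = lam i • (if j = i then F j else 0))]
    simp
  have hAF : ∀ j, A * F j = lam j • F j := by
    intro j
    rw [hAdecomp, Finset.sum_mul]
    rw [Finset.sum_congr rfl (fun i _ => by
      rw [smul_mul_assoc, hForth i j] : ∀ i ∈ Finset.univ, (lam i • F i) * F j
        = lam i • (if i = j then F i else 0))]
    simp
  have hBE : ∀ r, B * E r = μ r • E r := by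
    intro r
    rw [hBdecomp, Finset.sum_mul]
    rw [Finset.sum_congr rfl (fun s _ => by
      rw [smul_mul_assoc, hEorth s r] : ∀ s ∈ Finset.univ, (μ s • E s) * E r
        = μ s • (if s = r then E s else 0))]
    simp
  have hEB : ∀ r, E r * B = μ r • E r := by
    intro r
    rw [hBdecomp, Finset.mul_sum]
    rw [Finset.sum_congr rfl (fun s _ => by
      rw [mul_smul_comm, hEorth r s] : ∀ s ∈ Finset.univ, E r * (μ s • E s)
        = μ s • (if r = s then E r else 0))]
    simp
  -- each F i has rank one
  have hGidem : ∀ s : Finset V, (∑ i ∈ s, F i) * (∑ j ∈ s, F j) = ∑ i ∈ s, F i := by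
    intro s
    rw [Finset.sum_mul]
    refine Finset.sum_congr rfl fun i hi => ?_
    rw [Finset.mul_sum]
    rw [Finset.sum_congr rfl (fun j _ => hForth i j)]
    simp [Finset.sum_ite_eq, hi]
  have hFG0 : ∀ (a : V) (s : Finset V), a ∉ s → F a * (∑ i ∈ s, F i) = 0 := by
    intro a s ha
    rw [Finset.mul_sum]
    rw [Finset.sum_congr rfl (fun j _ => hForth a j)]
    simp [Finset.sum_ite_eq, ha]
  have hGF0 : ∀ (a : V) (s : Finset V), a ∉ s → (∑ i ∈ s, F i) * F a = 0 := by
    intro a s ha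
    rw [Finset.sum_mul]
    rw [Finset.sum_congr rfl (fun j _ => hForth j a)]
    simp [Finset.sum_ite_eq', ha]
  have hranksum : ∀ s : Finset V, (∑ i ∈ s, F i).rank = ∑ i ∈ s, (F i).rank := by
    intro s
    induction s using Finset.induction_on with
    | empty => simp
    | @insert a s ha ih =>
      rw [Finset.sum_insert ha, Finset.sum_insert ha, ← ih]
      exact my_rank_add_orth _ _ (hFidem a) (hGidem s) (hFG0 a s ha) (hGF0 a s ha)
  have hcard : ∑ i, (F i).rank = Fintype.card V := by
    rw [← hranksum Finset.univ, hFsum, Matrix.rank_one]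
  have hrankpos : ∀ i, 1 ≤ (F i).rank := by
    intro i
    rcases Nat.eq_zero_or_pos (F i).rank with h0 | h1
    · exfalso
      apply hFne i
      have hr : LinearMap.range (F i).mulVecLin = ⊥ := Submodule.finrank_eq_zero.mp h0
      have hz := LinearMap.range_eq_bot.mp hr
      ext a b
      have h3 : (F i).mulVecLin (Pi.single b 1) = 0 := by rw [hz]; rfl
      have h4 := congrFun h3 a
      simp only [Matrix.mulVecLin_apply, Matrix.mulVec_single, mul_one] at h4
      simpa using h4
    · exact h1
  have hrank1 : ∀ i, (F i).rank = 1 := by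
    intro i
    have he := Finset.add_sum_erase Finset.univ (fun j => (F j).rank) (Finset.mem_univ i)
    have hle : (Finset.univ.erase i).card • 1 ≤ ∑ j ∈ Finset.univ.erase i, (F j).rank :=
      Finset.card_nsmul_le_sum _ _ _ (fun j _ => hrankpos j)
    have hc : (Finset.univ.erase i).card = Fintype.card V - 1 := by
      rw [Finset.card_erase_of_mem (Finset.mem_univ i), Finset.card_univ]
    have hcV : 1 ≤ Fintype.card V := Fintype.card_pos_iff.mpr ⟨i⟩
    have h1 := hrankpos i
    simp only [smul_eq_mul, mul_one] at hle
    rw [hc] at hle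
    have he' : (F i).rank + ∑ j ∈ Finset.univ.erase i, (F j).rank = ∑ j, (F j).rank := he
    omega
  choose w hw using fun i =>
    my_symm_idem_vecMulVec (F i) (hFsymm i) (hFidem i) (hFne i) (hrank1 i)
  -- structure of the spectral idempotents of B
  have key : ∀ r : Fin m, E r = 0 ∨ ∃ (i : V) (a b c : ℝ),
      E r = fromBlocks (a • F i) (b • F i) (b • F i) (c • F i) := by
    intro r
    obtain ⟨P, Q, Q', R, hEr⟩ : ∃ P Q Q' R, E r = fromBlocks P Q Q' R :=
      ⟨_, _, _, _, (fromBlocks_toBlocks (E r)).symm⟩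
    have h1 := hBE r
    rw [hB, hEr, fromBlocks_multiply, Matrix.fromBlocks_smul] at h1
    simp only [Matrix.one_mul, Matrix.zero_mul, Matrix.mul_one, Matrix.mul_zero,
      add_zero, zero_add] at h1
    rw [fromBlocks_inj] at h1
    obtain ⟨e1, e2, e3, e4⟩ := h1
    have h2 := hEB r
    rw [hB, hEr, fromBlocks_multiply, Matrix.fromBlocks_smul] at h2
    simp only [Matrix.one_mul, Matrix.zero_mul, Matrix.mul_one, Matrix.mul_zero,
      add_zero, zero_add] at h2
    rw [fromBlocks_inj] at h2
    obtain ⟨f1, f2, f3, f4⟩ := h2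
    by_cases hμ0 : μ r = 0
    · left
      rw [hμ0, zero_smul] at e2 e4 f2 f4
      rw [e4, Matrix.mul_zero, zero_add] at e2
      rw [hEr, e2, e4, f2, f4, my_fromBlocks_zero]
    · have hQ : Q = μ r • R := e4
      have hQ' : Q' = μ r • R := f4
      have hP : P = (μ r * μ r) • R := by rw [f2, hQ, smul_smul]
      set θ : ℝ := (μ r * μ r - 1) / μ r with hθ
      have hAR : A * R = θ • R := by
        have h3 : μ r • (A * R) + R = (μ r * μ r) • R := by
          have h3' := e2
          rw [hQ, Matrix.mul_smul, smul_smul] at h3'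
          exact h3'
        have h4 : μ r • (A * R) = (μ r * μ r - 1) • R := by
          rw [sub_smul, one_smul]; exact eq_sub_of_add_eq h3
        calc A * R = (μ r)⁻¹ • (μ r • (A * R)) := by
              rw [smul_smul, inv_mul_cancel₀ hμ0, one_smul]
          _ = (μ r)⁻¹ • ((μ r * μ r - 1) • R) := by rw [h4]
          _ = θ • R := by rw [smul_smul, hθ, div_eq_inv_mul]
      have hRA : R * A = θ • R := by
        have h3 : μ r • (R * A) + R = (μ r * μ r) • R := by
          have h3' := f3
          rw [hQ', Matrix.smul_mul, smul_smul] at h3'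
          exact h3'
        have h4 : μ r • (R * A) = (μ r * μ r - 1) • R := by
          rw [sub_smul, one_smul]; exact eq_sub_of_add_eq h3
        calc R * A = (μ r)⁻¹ • (μ r • (R * A)) := by
              rw [smul_smul, inv_mul_cancel₀ hμ0, one_smul]
          _ = (μ r)⁻¹ • ((μ r * μ r - 1) • R) := by rw [h4]
          _ = θ • R := by rw [smul_smul, hθ, div_eq_inv_mul]
      have horthL : ∀ j, lam j ≠ θ → F j * R = 0 := by
        intro j hj
        have h5 : lam j • (F j * R) = θ • (F j * R) := by
          calc lam j • (F j * R) = (lam j • F j) * R := (Matrix.smul_mul _ _ _).symm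
            _ = (F j * A) * R := by rw [hFA j]
            _ = F j * (A * R) := Matrix.mul_assoc _ _ _
            _ = F j * (θ • R) := by rw [hAR]
            _ = θ • (F j * R) := Matrix.mul_smul _ _ _
        have h6 : (lam j - θ) • (F j * R) = 0 := by rw [sub_smul, h5, sub_self]
        rcases smul_eq_zero.mp h6 with h | h
        · exact absurd (sub_eq_zero.mp h) hj
        · exact h
      have horthR : ∀ j, lam j ≠ θ → R * F j = 0 := by
        intro j hj
        have h5 : lam j • (R * F j) = θ • (R * F j) := by
          calc lam j • (R * F j) = R * (lam j • F j) := (Matrix.mul_smul _ _ _).symm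
            _ = R * (A * F j) := by rw [hAF j]
            _ = (R * A) * F j := (Matrix.mul_assoc _ _ _).symm
            _ = (θ • R) * F j := by rw [hRA]
            _ = θ • (R * F j) := Matrix.smul_mul _ _ _
        have h6 : (lam j - θ) • (R * F j) = 0 := by rw [sub_smul, h5, sub_self]
        rcases smul_eq_zero.mp h6 with h | h
        · exact absurd (sub_eq_zero.mp h) hj
        · exact h
      by_cases hex : ∃ i, lam i = θ
      · obtain ⟨i, hi⟩ := hex
        right
        have hRL : R = F i * R := by
          conv_lhs => rw [← Matrix.one_mul R, ← hFsum, Finset.sum_mul]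
          exact Finset.sum_eq_single i
            (fun j _ hj => horthL j (fun hlj => hj (hlam (hlj.trans hi.symm))))
            (fun h => absurd (Finset.mem_univ i) h)
        have hRR : R = R * F i := by
          conv_lhs => rw [← Matrix.mul_one R, ← hFsum, Finset.mul_sum]
          exact Finset.sum_eq_single i
            (fun j _ hj => horthR j (fun hlj => hj (hlam (hlj.trans hi.symm))))
            (fun h => absurd (Finset.mem_univ i) h)
        have hRFRF : R = F i * R * F i := by
          calc R = R * F i := hRR
            _ = (F i * R) * F i := by rw [← hRL]
        have hc : R = (w i ⬝ᵥ (R *ᵥ w i)) • F i := by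
          conv_lhs => rw [hRFRF]
          rw [hw i, my_conj_vecMulVec, ← hw i]
        refine ⟨i, μ r * μ r * (w i ⬝ᵥ (R *ᵥ w i)), μ r * (w i ⬝ᵥ (R *ᵥ w i)),
          w i ⬝ᵥ (R *ᵥ w i), ?_⟩
        rw [hEr, hP, hQ, hQ']
        conv_lhs => rw [hc]
        simp only [smul_smul]
      · left
        push_neg at hex
        have hR0 : R = 0 := by
          conv_lhs => rw [← Matrix.one_mul R, ← hFsum, Finset.sum_mul]
          exact Finset.sum_eq_zero fun j _ => horthL j (hex j)
        rw [hEr, hP, hQ, hQ', hR0]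
        simp [my_fromBlocks_zero]
  -- Hadamard squares of the F i are rank-one PSD
  have hFFvv : ∀ i, F i ⊙ F i =
      vecMulVec (fun a => w i a * w i a) (fun a => w i a * w i a) := by
    intro i
    ext a b
    rw [hw i]
    simp only [Matrix.hadamard_apply, vecMulVec_apply]
    ring
  have hkill : ∀ x : V → ℝ, (∑ i, F i ⊙ F i) *ᵥ x = 0 → ∀ i, (F i ⊙ F i) *ᵥ x = 0 := by
    intro x hx i
    have hFFmul : ∀ j, (F j ⊙ F j) *ᵥ x =
        ((fun a => w j a * w j a) ⬝ᵥ x) • (fun a => w j a * w j a) := by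
      intro j
      rw [hFFvv j, my_vecMulVec_mulVec]
    have hdotsum : ∑ j, ((fun a => w j a * w j a) ⬝ᵥ x) * ((fun a => w j a * w j a) ⬝ᵥ x) = 0 := by
      have h0 : x ⬝ᵥ ((∑ j, F j ⊙ F j) *ᵥ x) = 0 := by rw [hx, dotProduct_zero]
      rw [my_sum_mulVec] at h0
      rw [← h0]
      have hds : x ⬝ᵥ (∑ r : V, F r ⊙ F r *ᵥ x) = ∑ r : V, x ⬝ᵥ (F r ⊙ F r *ᵥ x) := by
        simp only [dotProduct, Finset.sum_apply, Finset.mul_sum]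
        rw [Finset.sum_comm]
      rw [hds]
      refine Finset.sum_congr rfl fun j _ => ?_
      rw [hFFmul j, dotProduct_smul, smul_eq_mul, dotProduct_comm]
    have hzero : ∀ j ∈ Finset.univ, ((fun a => w j a * w j a) ⬝ᵥ x) *
        ((fun a => w j a * w j a) ⬝ᵥ x) = 0 :=
      (Finset.sum_eq_zero_iff_of_nonneg (fun j _ => mul_self_nonneg _)).mp hdotsum
    have hz := mul_self_eq_zero.mp (hzero i (Finset.mem_univ i))
    rw [hFFmul i, hz, zero_smul]
  have hkillB : ∀ (x : V → ℝ), (∀ i, (F i ⊙ F i) *ᵥ x = 0) → ∀ r,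
      (E r ⊙ E r) *ᵥ Sum.elim x 0 = 0 ∧ (E r ⊙ E r) *ᵥ Sum.elim 0 x = 0 := by
    intro x hx r
    rcases key r with h0 | ⟨i, a, b, c, hEr⟩
    · rw [h0]
      constructor <;> simp
    · have hhad : E r ⊙ E r = fromBlocks ((a*a) • (F i ⊙ F i)) ((b*b) • (F i ⊙ F i))
          ((b*b) • (F i ⊙ F i)) ((c*c) • (F i ⊙ F i)) := by
        rw [hEr, my_hadamard_fromBlocks]
        simp only [Matrix.smul_hadamard, Matrix.hadamard_smul, smul_smul]
      rw [hhad]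
      constructor
      · rw [fromBlocks_mulVec]
        simp [Matrix.smul_mulVec, hx i]
      · rw [fromBlocks_mulVec]
        simp [Matrix.smul_mulVec, hx i]
  -- final dimension count
  set MA := ∑ i, F i ⊙ F i with hMAdef
  set MB := ∑ r, E r ⊙ E r with hMBdef
  have hrankMB : MB.rank + finrank ℝ ↥(LinearMap.ker MB.mulVecLin) = 2 * Fintype.card V := by
    have h := LinearMap.finrank_range_add_finrank_ker MB.mulVecLin
    rw [finrank_pi, Fintype.card_sum] at h
    rw [show MB.rank = finrank ℝ ↥(LinearMap.range MB.mulVecLin) from rfl]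
    omega
  have hrankMA : MA.rank + finrank ℝ ↥(LinearMap.ker MA.mulVecLin) = Fintype.card V := by
    have h := LinearMap.finrank_range_add_finrank_ker MA.mulVecLin
    rw [finrank_pi] at h
    rw [show MA.rank = finrank ℝ ↥(LinearMap.range MA.mulVecLin) from rfl]
    omega
  let L1 : (V → ℝ) →ₗ[ℝ] (V ⊕ V → ℝ) :=
    { toFun := fun x => Sum.elim x 0,
      map_add' := fun a b => by funext s; cases s <;> simp,
      map_smul' := fun t a => by funext s; cases s <;> simp }
  let L2 : (V → ℝ) →ₗ[ℝ] (V ⊕ V → ℝ) :=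
    { toFun := fun x => Sum.elim 0 x,
      map_add' := fun a b => by funext s; cases s <;> simp,
      map_smul' := fun t a => by funext s; cases s <;> simp }
  have hL1inj : Function.Injective L1 := by
    intro a b h
    funext v
    exact congrFun h (Sum.inl v)
  have hL2inj : Function.Injective L2 := by
    intro a b h
    funext v
    exact congrFun h (Sum.inr v)
  set K := LinearMap.ker MA.mulVecLin with hKdef
  have hmemK : ∀ x ∈ K, ∀ i, (F i ⊙ F i) *ᵥ x = 0 := by
    intro x hx
    exact hkill x (by simpa [hKdef, Matrix.mulVecLin_apply] using hx)
  have hsub1 : K.map L1 ≤ LinearMap.ker MB.mulVecLin := by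
    rintro y ⟨x, hx, rfl⟩
    rw [LinearMap.mem_ker]
    show MB *ᵥ (Sum.elim x 0) = 0
    rw [hMBdef, my_sum_mulVec]
    exact Finset.sum_eq_zero fun r _ => (hkillB x (hmemK x hx) r).1
  have hsub2 : K.map L2 ≤ LinearMap.ker MB.mulVecLin := by
    rintro y ⟨x, hx, rfl⟩
    rw [LinearMap.mem_ker]
    show MB *ᵥ (Sum.elim 0 x) = 0
    rw [hMBdef, my_sum_mulVec]
    exact Finset.sum_eq_zero fun r _ => (hkillB x (hmemK x hx) r).2
  have hfr1 : finrank ℝ ↥(K.map L1) = finrank ℝ ↥K :=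
    (LinearEquiv.finrank_eq (Submodule.equivMapOfInjective L1 hL1inj K)).symm
  have hfr2 : finrank ℝ ↥(K.map L2) = finrank ℝ ↥K :=
    (LinearEquiv.finrank_eq (Submodule.equivMapOfInjective L2 hL2inj K)).symm
  have hinf : K.map L1 ⊓ K.map L2 = ⊥ := by
    rw [Submodule.eq_bot_iff]
    rintro y ⟨hy1, hy2⟩
    obtain ⟨x1, hx1, h1⟩ := hy1
    obtain ⟨x2, hx2, h2⟩ := hy2
    funext s
    cases s with
    | inl v =>
      rw [← h2]
      show Sum.elim (0 : V → ℝ) x2 (Sum.inl v) = 0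
      rfl
    | inr v =>
      rw [← h1]
      show Sum.elim x1 (0 : V → ℝ) (Sum.inr v) = 0
      rfl
  have hsup := Submodule.finrank_sup_add_finrank_inf_eq (K.map L1) (K.map L2)
  rw [hinf, finrank_bot, add_zero, hfr1, hfr2] at hsup
  have hmono : finrank ℝ ↥(K.map L1 ⊔ K.map L2) ≤ finrank ℝ ↥(LinearMap.ker MB.mulVecLin) :=
    Submodule.finrank_mono (sup_le hsub1 hsub2)
  omega
end

section
/- If X is a bipartite finite simple graph on n vertices whose adjacency matrix has n distinct eigenvalues, then rank(M̂(X)) ≤ ⌈n/2⌉. -/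
open scoped Matrix

open Matrix

section AuxRank

variable {m : Type*} [Fintype m] [DecidableEq m]

private lemma aux_rank_add_le (A B : Matrix m m ℝ) : (A + B).rank ≤ A.rank + B.rank := by
  classical
  have hr : LinearMap.range (A + B).mulVecLin ≤
      LinearMap.range A.mulVecLin ⊔ LinearMap.range B.mulVecLin := by
    rw [Matrix.mulVecLin_add]
    rintro x ⟨y, rfl⟩
    exact Submodule.mem_sup.2 ⟨A.mulVecLin y, ⟨y, rfl⟩, B.mulVecLin y, ⟨y, rfl⟩, rfl⟩
  exact (Submodule.finrank_mono hr).trans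
    (Submodule.finrank_add_le_finrank_add_finrank _ _)

private lemma aux_rank_sum_le {ι : Type*} (s : Finset ι) (f : ι → Matrix m m ℝ) :
    (∑ r ∈ s, f r).rank ≤ ∑ r ∈ s, (f r).rank := by
  classical
  induction s using Finset.induction with
  | empty => simp
  | insert _ _ h ih =>
      rw [Finset.sum_insert h, Finset.sum_insert h]
      exact (aux_rank_add_le _ _).trans (add_le_add_right ih _)

private lemma aux_rank_smul_le (c : ℝ) (A : Matrix m m ℝ) : (c • A).rank ≤ A.rank := by
  have h : c • A = Matrix.diagonal (fun _ : m => c) * A := by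
    ext i j
    simp [Matrix.diagonal_mul]
  rw [h]
  exact Matrix.rank_mul_le_right _ _

private lemma aux_rank_vecMulVec_le (u v : m → ℝ) : (Matrix.vecMulVec u v).rank ≤ 1 := by
  rw [Matrix.vecMulVec_eq Unit]
  exact (Matrix.rank_mul_le_left _ _).trans
    ((Matrix.rank_le_card_width _).trans (by simp))

private lemma aux_one_le_rank {A : Matrix m m ℝ} (h : A ≠ 0) : 1 ≤ A.rank := by
  rcases Nat.eq_zero_or_pos A.rank with h0 | h1
  · exfalso
    apply h
    have hbot : LinearMap.range A.mulVecLin = ⊥ := Submodule.finrank_eq_zero.mp h0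
    have hz : A.mulVecLin = 0 := LinearMap.range_eq_bot.mp hbot
    ext i j
    have h1 : A.mulVecLin (Pi.single j 1) = 0 := by rw [hz]; rfl
    have h2 : A *ᵥ Pi.single j 1 = 0 := by rwa [Matrix.mulVecLin_apply] at h1
    have := congrFun h2 i
    simpa using this
  · exact h1

private lemma aux_trace_idem {A : Matrix m m ℝ} (h : A * A = A) :
    A.trace = (A.rank : ℝ) := by
  classical
  have hff : ∀ x, A.mulVecLin (A.mulVecLin x) = A.mulVecLin x := by
    intro x
    have := congrArg (fun M => Matrix.mulVecLin M x) h
    simpa [Matrix.mulVecLin_mul] using this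
  have hproj : LinearMap.IsProj (LinearMap.range A.mulVecLin) A.mulVecLin :=
    ⟨fun x => LinearMap.mem_range_self _ x, by rintro x ⟨y, rfl⟩; exact hff y⟩
  have h1 : LinearMap.trace ℝ (m → ℝ) A.mulVecLin =
      (Module.finrank ℝ (LinearMap.range A.mulVecLin) : ℝ) := hproj.trace
  have h2 : LinearMap.trace ℝ (m → ℝ) A.mulVecLin = A.trace := by
    rw [LinearMap.trace_eq_matrix_trace ℝ (Pi.basisFun ℝ m) A.mulVecLin]
    congr 1
    rw [LinearMap.toMatrix_eq_toMatrix']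
    have : A.mulVecLin = Matrix.toLin' A := (Matrix.toLin'_apply' A).symm
    rw [this, LinearMap.toMatrix'_toLin']
  rw [← h2, h1]
  rfl

end AuxRank

/-- If `X` is a bipartite graph on `n` vertices with `n` distinct
eigenvalues, then `rank M̂(X) ≤ ⌈n/2⌉`. -/
theorem rank_avgMixing_bipartite_le {V : Type*} [Fintype V] [DecidableEq V]
    (G : SimpleGraph V) [DecidableRel G.Adj]
    (hbip : G.Colorable 2)
    (A : Matrix V V ℝ) (hA : A = G.adjMatrix ℝ)
    (θ : Fin (Fintype.card V) → ℝ) (hθ : Function.Injective θ)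
    (E : Fin (Fintype.card V) → Matrix V V ℝ)
    (hsymm : ∀ r, (E r).IsSymm)
    (horth : ∀ r s, E r * E s = if r = s then E r else 0)
    (hne : ∀ r, E r ≠ 0)
    (hsum : ∑ r, E r = 1)
    (hdecomp : A = ∑ r, θ r • E r) :
    (∑ r, E r ⊙ E r).rank ≤ (Fintype.card V + 1) / 2 := by
  classical
  -- basic algebraic facts
  have hidem : ∀ r, E r * E r = E r := fun r => by simpa using horth r r
  have hAE : ∀ r, A * E r = θ r • E r := by
    intro r
    rw [hdecomp, Finset.sum_mul,
      Finset.sum_eq_single r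
        (fun s _ hs => by rw [smul_mul_assoc, horth, if_neg hs, smul_zero])
        (by simp), smul_mul_assoc, horth, if_pos rfl]
  have hEA : ∀ r, E r * A = θ r • E r := by
    intro r
    rw [hdecomp, Finset.mul_sum,
      Finset.sum_eq_single r
        (fun s _ hs => by rw [mul_smul_comm, horth, if_neg (Ne.symm hs), smul_zero])
        (by simp), mul_smul_comm, horth, if_pos rfl]
  -- the sign matrix from the 2-coloring
  obtain ⟨c⟩ := hbip
  set d : V → ℝ := fun v => if c v = 0 then 1 else -1 with hd
  set D : Matrix V V ℝ := Matrix.diagonal d with hD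
  have hd2 : ∀ v, d v * d v = 1 := by
    intro v
    by_cases h : c v = 0 <;> simp [hd, h]
  have hdadj : ∀ u v, G.Adj u v → d u * d v = -1 := by
    intro u v huv
    have hnecol := c.valid huv
    have h2 : ∀ x : Fin 2, x ≠ 0 → x = 1 := by decide
    by_cases h1 : c u = 0 <;> by_cases h2' : c v = 0
    · exact absurd (h1.trans h2'.symm) hnecol
    · simp [hd, h1, h2']
    · simp [hd, h1, h2']
    · exact absurd ((h2 _ h1).trans (h2 _ h2').symm) hnecol
  have hDD : D * D = 1 := by
    rw [hD, Matrix.diagonal_mul_diagonal]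
    have : (fun v => d v * d v) = fun _ => (1 : ℝ) := funext hd2
    rw [this, Matrix.diagonal_one]
  have hDAD : D * A * D = -A := by
    ext i j
    have he : (D * A * D) i j = d i * A i j * d j := by
      rw [hD, Matrix.mul_diagonal, Matrix.diagonal_mul]
    rw [he, hA]
    by_cases hadj : G.Adj i j
    · have := hdadj i j hadj
      simp only [SimpleGraph.adjMatrix_apply, if_pos hadj, Matrix.neg_apply]
      nlinarith [this]
    · simp [hadj]
  have hAD : A * D = -(D * A) := by
    calc A * D = 1 * (A * D) := (one_mul _).symm
      _ = (D * D) * (A * D) := by rw [hDD]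
      _ = D * (D * A * D) := by noncomm_ring
      _ = D * (-A) := by rw [hDAD]
      _ = -(D * A) := by noncomm_ring
  -- conjugated projections
  set Z : Fin (Fintype.card V) → Matrix V V ℝ := fun r => D * E r * D with hZ
  have hZsymm : ∀ r, (Z r)ᵀ = Z r := by
    intro r
    show (D * E r * D)ᵀ = D * E r * D
    rw [hD]
    simp [Matrix.transpose_mul, Matrix.diagonal_transpose, (hsymm r).eq, Matrix.mul_assoc]
  have hEZD : ∀ r, D * Z r * D = E r := by
    intro r
    rw [hZ]
    simp only [← mul_assoc]
    rw [hDD, one_mul, mul_assoc, hDD, mul_one]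
  have hAZ : ∀ r, A * Z r = -(θ r • Z r) := by
    intro r
    calc A * (D * E r * D) = (A * D) * E r * D := by noncomm_ring
      _ = (-(D * A)) * E r * D := by rw [hAD]
      _ = -(D * (A * E r) * D) := by noncomm_ring
      _ = -(D * (θ r • E r) * D) := by rw [hAE]
      _ = -(θ r • (D * E r * D)) := by rw [mul_smul_comm, smul_mul_assoc]
  have key : ∀ s r, θ s + θ r ≠ 0 → E s * Z r = 0 := by
    intro s r h
    have h1 : E s * (A * Z r) = θ s • (E s * Z r) := by
      rw [← mul_assoc, hEA s, smul_mul_assoc]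
    have h2 : E s * (A * Z r) = -(θ r • (E s * Z r)) := by
      rw [hAZ, mul_neg, mul_smul_comm]
    have h3 : (θ s + θ r) • (E s * Z r) = 0 := by
      rw [add_smul, ← h1, h2]
      exact neg_add_cancel _
    exact (smul_eq_zero.mp h3).resolve_left h
  have hZsum : ∑ r, Z r = 1 := by
    have h1 : ∑ r, Z r = D * (∑ r, E r) * D := by
      rw [Finset.mul_sum, Finset.sum_mul]
    rw [h1, hsum, mul_one, hDD]
  -- the pairing involution σ
  have hex : ∀ r, ∃ s, θ s = -θ r := by
    intro r
    by_contra hcon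
    push_neg at hcon
    have hall : ∀ s, E s * Z r = 0 := fun s =>
      key s r (fun h0 => hcon s (by linarith))
    have hZ0 : Z r = 0 := by
      have h1 : (∑ s, E s) * Z r = 0 := by
        rw [Finset.sum_mul]
        exact Finset.sum_eq_zero fun s _ => hall s
      rwa [hsum, one_mul] at h1
    apply hne r
    rw [← hEZD r, hZ0, mul_zero, zero_mul]
  choose σ hσ using hex
  have hσσ : ∀ r, σ (σ r) = r := fun r => hθ (by rw [hσ, hσ, neg_neg])
  have hZE : ∀ r, Z r = E (σ r) := by
    intro r
    have h1 : Z r = E (σ r) * Z r := by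
      conv_lhs => rw [← one_mul (Z r), ← hsum, Finset.sum_mul]
      refine Finset.sum_eq_single (σ r) (fun s _ hs => key s r ?_) (by simp)
      intro h0
      exact hs (hθ (by rw [hσ]; linarith))
    have h2 : E (σ r) = E (σ r) * Z r := by
      conv_lhs => rw [← mul_one (E (σ r)), ← hZsum, Finset.mul_sum]
      refine Finset.sum_eq_single r (fun s _ hs => key (σ r) s ?_) (by simp)
      intro h0
      have := hσ r
      exact hs (hθ (by linarith))
    exact h1.trans h2.symm
  -- Schur squares are σ-invariant
  set T : Fin (Fintype.card V) → Matrix V V ℝ := fun r => E r ⊙ E r with hT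
  have hTσ : ∀ r, T (σ r) = T r := by
    intro r
    have he : ∀ i j, E (σ r) i j = d i * E r i j * d j := by
      intro i j
      rw [← hZE r]
      show (D * E r * D) i j = _
      rw [hD, Matrix.mul_diagonal, Matrix.diagonal_mul]
    ext i j
    rw [hT]
    simp only [Matrix.hadamard_apply, he]
    calc d i * E r i j * d j * (d i * E r i j * d j)
        = (d i * d i) * ((d j * d j) * (E r i j * E r i j)) := by ring
      _ = E r i j * E r i j := by rw [hd2, hd2, one_mul, one_mul]
  -- each E r has rank one, hence each T r has rank at most one
  have htr : ∀ r, (E r).trace = ((E r).rank : ℝ) := fun r => aux_trace_idem (hidem r)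
  have hsumrank : ∑ r, (E r).rank = Fintype.card V := by
    have h1 : (∑ r, ((E r).rank : ℝ)) = (Fintype.card V : ℝ) := by
      calc (∑ r, ((E r).rank : ℝ)) = ∑ r, (E r).trace :=
            Finset.sum_congr rfl fun r _ => (htr r).symm
        _ = (∑ r, E r).trace := (Matrix.trace_sum _ _).symm
        _ = (1 : Matrix V V ℝ).trace := by rw [hsum]
        _ = (Fintype.card V : ℝ) := by simp [Matrix.trace_one]
    exact_mod_cast (by push_cast at h1 ⊢; exact h1 : ((∑ r, (E r).rank : ℕ) : ℝ) = (Fintype.card V : ℝ))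
  have hge : ∀ r, 1 ≤ (E r).rank := fun r => aux_one_le_rank (hne r)
  have hrank1 : ∀ r, (E r).rank = 1 := by
    intro r
    by_contra hne1
    have h2 : 2 ≤ (E r).rank := by
      have h1r := hge r
      omega
    have hlt : (∑ _s : Fin (Fintype.card V), 1) < ∑ s, (E s).rank :=
      Finset.sum_lt_sum (fun i _ => hge i) ⟨r, Finset.mem_univ r, by omega⟩
    rw [hsumrank] at hlt
    simp at hlt
  have hTrank : ∀ r, (T r).rank ≤ 1 := by
    intro r
    have h1 : Module.finrank ℝ (LinearMap.range (E r).mulVecLin) = 1 := hrank1 r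
    obtain ⟨u0, -, hu0⟩ := finrank_eq_one_iff'.mp h1
    set u : V → ℝ := (u0 : V → ℝ) with hu
    have hcol : ∀ j, ∃ cj : ℝ, ∀ i, E r i j = u i * cj := by
      intro j
      have hmem : (E r) *ᵥ Pi.single j 1 ∈ LinearMap.range (E r).mulVecLin :=
        ⟨Pi.single j 1, Matrix.mulVecLin_apply _ _⟩
      obtain ⟨cj, hcj⟩ := hu0 ⟨(E r) *ᵥ Pi.single j 1, hmem⟩
      refine ⟨cj, fun i => ?_⟩
      have := congrFun (congrArg (Subtype.val) hcj) i
      simp only [Submodule.coe_smul, Pi.smul_apply, smul_eq_mul] at this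
      rw [show ((E r) *ᵥ Pi.single j 1) i = E r i j by simp] at this
      rw [← this, hu]
      ring
    choose v hv using hcol
    have hEr : E r = Matrix.vecMulVec u v := by
      ext i j
      rw [Matrix.vecMulVec_apply, hv j i]
    have hTr : T r = Matrix.vecMulVec (fun i => u i * u i) (fun j => v j * v j) := by
      ext i j
      rw [hT]
      simp only [Matrix.hadamard_apply, hEr, Matrix.vecMulVec_apply]
      ring
    rw [hTr]
    exact aux_rank_vecMulVec_le _ _
  -- counting: the set of nonnegative eigenvalue indices
  set S : Finset (Fin (Fintype.card V)) := Finset.univ.filter (fun r => 0 ≤ θ r) with hS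
  set N : Finset (Fin (Fintype.card V)) := Finset.univ.filter (fun r => ¬ 0 ≤ θ r) with hN
  have hSN : S.card + N.card = Fintype.card V := by
    rw [hS, hN]
    rw [Finset.card_filter_add_card_filter_not]
    simp
  have hNS : N.card ≤ (Finset.univ.filter (fun r => 0 < θ r)).card := by
    apply Finset.card_le_card_of_injOn σ
    · intro r hr
      rw [hN, Finset.mem_coe, Finset.mem_filter] at hr
      rw [Finset.mem_coe, Finset.mem_filter]
      refine ⟨Finset.mem_univ _, ?_⟩
      rw [hσ]
      have := hr.2
      push_neg at this
      linarith
    · intro a _ b _ hab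
      have := congrArg σ hab
      rwa [hσσ, hσσ] at this
  have hZcard : (Finset.univ.filter (fun r => θ r = 0)).card ≤ 1 := by
    apply Finset.card_le_one.mpr
    intro a ha b hb
    rw [Finset.mem_filter] at ha hb
    exact hθ (ha.2.trans hb.2.symm)
  have hScard : S.card ≤ N.card + 1 := by
    have hsplit : S ⊆ Finset.univ.filter (fun r => 0 < θ r) ∪
        Finset.univ.filter (fun r => θ r = 0) := by
      intro r hr
      rw [hS, Finset.mem_filter] at hr
      rcases lt_or_eq_of_le hr.2 with h | h
      · exact Finset.mem_union_left _ (Finset.mem_filter.mpr ⟨Finset.mem_univ _, h⟩)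
      · exact Finset.mem_union_right _ (Finset.mem_filter.mpr ⟨Finset.mem_univ _, h.symm⟩)
    calc S.card ≤ (Finset.univ.filter (fun r => 0 < θ r) ∪
        Finset.univ.filter (fun r => θ r = 0)).card := Finset.card_le_card hsplit
      _ ≤ (Finset.univ.filter (fun r => 0 < θ r)).card +
          (Finset.univ.filter (fun r => θ r = 0)).card := Finset.card_union_le _ _
      _ ≤ (Finset.univ.filter (fun r => 0 < θ r)).card + 1 := by omega
      _ ≤ N.card + 1 := by
          have hPN : (Finset.univ.filter (fun r => 0 < θ r)).card ≤ N.card := by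
            apply Finset.card_le_card_of_injOn σ
            · intro r hr
              rw [Finset.mem_coe, Finset.mem_filter] at hr
              rw [hN, Finset.mem_coe, Finset.mem_filter]
              refine ⟨Finset.mem_univ _, ?_⟩
              rw [hσ]
              push_neg
              linarith [hr.2]
            · intro a _ b _ hab
              have := congrArg σ hab
              rwa [hσσ, hσσ] at this
          omega
  have hcard2 : 2 * S.card ≤ Fintype.card V + 1 := by omega
  -- rewrite the sum over representatives
  have hNimg : N.image σ ⊆ S := by
    intro s hs
    obtain ⟨r, hr, rfl⟩ := Finset.mem_image.mp hs
    rw [hN, Finset.mem_filter] at hr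
    rw [hS, Finset.mem_filter]
    refine ⟨Finset.mem_univ _, ?_⟩
    rw [hσ]
    have := hr.2
    push_neg at this
    linarith
  have hinj : Set.InjOn σ N := by
    intro a _ b _ hab
    have := congrArg σ hab
    rwa [hσσ, hσσ] at this
  have hsplitsum : ∑ r, T r = ∑ r ∈ S, T r + ∑ r ∈ N, T r := by
    rw [hS, hN]
    exact (Finset.sum_filter_add_sum_filter_not _ _ _).symm
  have hNsum : ∑ r ∈ N, T r = ∑ s ∈ N.image σ, T s := by
    rw [Finset.sum_image hinj]
    exact Finset.sum_congr rfl fun r _ => (hTσ r).symm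
  have himgsum : ∑ s ∈ N.image σ, T s = ∑ r ∈ S, if r ∈ N.image σ then T r else 0 := by
    rw [Finset.sum_ite_mem, Finset.inter_eq_right.mpr hNimg]
  have htotal : ∑ r, T r = ∑ r ∈ S, (T r + if r ∈ N.image σ then T r else 0) := by
    rw [hsplitsum, hNsum, himgsum, Finset.sum_add_distrib]
  -- final rank bound
  have hterm : ∀ r ∈ S, (T r + if r ∈ N.image σ then T r else 0).rank ≤ 1 := by
    intro r _
    by_cases h : r ∈ N.image σ
    · rw [if_pos h, ← two_smul ℝ (T r)]
      exact (aux_rank_smul_le _ _).trans (hTrank r)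
    · rw [if_neg h, add_zero]
      exact hTrank r
  calc (∑ r, T r).rank
      = (∑ r ∈ S, (T r + if r ∈ N.image σ then T r else 0)).rank := by rw [htotal]
    _ ≤ ∑ r ∈ S, (T r + if r ∈ N.image σ then T r else 0).rank := aux_rank_sum_le _ _
    _ ≤ ∑ _r ∈ S, 1 := Finset.sum_le_sum hterm
    _ = S.card := by simp
    _ ≤ (Fintype.card V + 1) / 2 := by omega
end

section
/- Let X be a finite simple graph on n vertices whose adjacency matrix A has n distinct eigenvalues θ_1,…,θ_n. Let C be the n × n coefficient matrix of X, let V be the n × n Vandermonde matrix with (i,j)-entry θ_j^{i−1}, and let Δ be the n × n diagonal matrix whose r-th diagonal entry is φ′(X, θ_r), the derivative of the characteristic polynomial of A evaluated at θ_r. Then M̂(X) = C V Δ^{−2} V^T C^T. -/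
open scoped Matrix

open Polynomial Finset

section Aux

variable {n : Type*} [Fintype n] [DecidableEq n]

/-- equiv splitting off one element -/
def neEquiv (u : n) : ({x : n // x ≠ u} ⊕ Unit) ≃ n where
  toFun := Sum.elim Subtype.val (fun _ => u)
  invFun x := if h : x = u then Sum.inr () else Sum.inl ⟨x, h⟩
  left_inv := by
    rintro (⟨x, hx⟩ | ⟨⟩)
    · simp [hx]
    · simp
  right_inv := fun x => by by_cases h : x = u <;> simp [h]

lemma adjugate_diag {R : Type*} [CommRing R] (B : Matrix n n R) (u : n) :
    B.adjugate u u
      = (B.submatrix (Subtype.val : {x : n // x ≠ u} → n) Subtype.val).det := by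
  rw [Matrix.adjugate_apply, ← Matrix.det_submatrix_equiv_self (neEquiv u)]
  have h : (B.updateRow u (Pi.single u 1)).submatrix (neEquiv u) (neEquiv u)
      = Matrix.fromBlocks (B.submatrix Subtype.val Subtype.val)
          (Matrix.of fun i (_ : Unit) => B i.1 u) 0 1 := by
    ext i j
    cases i with
    | inl i =>
      cases j with
      | inl j => simp [neEquiv, Matrix.updateRow_ne i.2]
      | inr j => simp [neEquiv, Matrix.updateRow_ne i.2]
    | inr i =>
      cases j with
      | inl j => simp [neEquiv, Pi.single_eq_of_ne j.2]
      | inr j => simp [neEquiv, Matrix.one_apply]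
  rw [h, Matrix.det_fromBlocks_zero₂₁, Matrix.det_one, mul_one]

lemma charmatrix_submatrix' {R : Type*} [CommRing R] {m : Type*} [Fintype m] [DecidableEq m]
    (B : Matrix n n R) (f : m → n) (hf : Function.Injective f) :
    (Matrix.charmatrix B).submatrix f f = Matrix.charmatrix (B.submatrix f f) := by
  ext i j
  simp [Matrix.charmatrix_apply, Matrix.diagonal_apply, hf.eq_iff]

lemma derivative_finset_prod' {R : Type*} [CommRing R] {ι : Type*} [DecidableEq ι]
    (s : Finset ι) (f : ι → Polynomial R) :
    Polynomial.derivative (∏ i ∈ s, f i)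
      = ∑ i ∈ s, (∏ j ∈ s.erase i, f j) * Polynomial.derivative (f i) := by
  induction s using Finset.induction_on with
  | empty => simp
  | @insert a s ha ih =>
    rw [Finset.prod_insert ha, Polynomial.derivative_mul, ih, Finset.sum_insert ha,
      Finset.erase_insert ha, Finset.mul_sum]
    congr 1
    · exact mul_comm _ _
    · apply Finset.sum_congr rfl
      intro i hi
      have hai : a ≠ i := fun h => ha (h ▸ hi)
      rw [Finset.erase_insert_of_ne hai, Finset.prod_insert (fun hmem => ha (Finset.mem_of_mem_erase hmem))]
      ring

end Aux

/-- The coefficient matrix of a graph with adjacency matrix `A`: its `(u, r)` entry is the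
coefficient of `t^r` (i.e. of `t^{(r+1)-1}`) in the characteristic polynomial of the matrix
obtained from `A` by deleting the row and column of the vertex `u`. -/
noncomputable def coeffMatrix {V : Type*} [Fintype V] [DecidableEq V]
    (A : Matrix V V ℝ) : Matrix V (Fin (Fintype.card V)) ℝ :=
  Matrix.of fun u r =>
    (Matrix.charpoly (A.submatrix (Subtype.val : {x : V // x ≠ u} → V)
      (Subtype.val : {x : V // x ≠ u} → V))).coeff (r : ℕ)

/-- For a graph `X` on `n` vertices with `n` distinct eigenvalues
`θ_1, …, θ_n`, coefficient matrix `C`, Vandermonde matrix `V` with `(i,j)` entry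
`θ_j^{i−1}`, and `Δ = diag(φ'(X, θ_r))`, one has `M̂(X) = C V Δ⁻² Vᵀ Cᵀ`. -/
theorem avgMixing_eq_coeffMatrix_formula {V : Type*} [Fintype V] [DecidableEq V]
    (G : SimpleGraph V) [DecidableRel G.Adj]
    (A : Matrix V V ℝ) (hA : A = G.adjMatrix ℝ)
    (θ : Fin (Fintype.card V) → ℝ) (hθ : Function.Injective θ)
    (E : Fin (Fintype.card V) → Matrix V V ℝ)
    (hsymm : ∀ r, (E r).IsSymm)
    (horth : ∀ r s, E r * E s = if r = s then E r else 0)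
    (hne : ∀ r, E r ≠ 0)
    (hsum : ∑ r, E r = 1)
    (hdecomp : A = ∑ r, θ r • E r) :
    ∑ r, E r ⊙ E r =
      coeffMatrix A *
        (Matrix.of fun i j : Fin (Fintype.card V) => θ j ^ (i : ℕ)) *
        ((Matrix.diagonal fun r => Polynomial.eval (θ r) (Polynomial.derivative A.charpoly)) ^ 2)⁻¹ *
        (Matrix.of fun i j : Fin (Fintype.card V) => θ j ^ (i : ℕ))ᵀ *
        (coeffMatrix A)ᵀ := by
  rcases isEmpty_or_nonempty V with hV | hV
  · ext u v; exact hV.elim u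
  have hEE : ∀ r, E r * E r = E r := by intro r; simpa using horth r r
  have hAE : ∀ r, A * E r = θ r • E r := by
    intro r
    rw [hdecomp, Finset.sum_mul]
    rw [Finset.sum_eq_single r]
    · rw [Matrix.smul_mul, hEE r]
    · intro s _ hs
      rw [Matrix.smul_mul, horth s r, if_neg hs, smul_zero]
    · intro h; exact absurd (Finset.mem_univ r) h
  have hdet : ∀ r, (θ r • (1 : Matrix V V ℝ) - A).det = 0 := by
    intro r
    by_contra hne0
    have h0 : (θ r • (1 : Matrix V V ℝ) - A) * E r = 0 := by
      rw [Matrix.sub_mul, hAE r, Matrix.smul_mul, Matrix.one_mul, sub_self]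
    apply hne r
    calc E r = ((θ r • (1 : Matrix V V ℝ) - A)⁻¹ * (θ r • (1 : Matrix V V ℝ) - A)) * E r := by
          rw [Matrix.nonsing_inv_mul _ (isUnit_iff_ne_zero.mpr hne0), Matrix.one_mul]
    _ = (θ r • (1 : Matrix V V ℝ) - A)⁻¹ * ((θ r • (1 : Matrix V V ℝ) - A) * E r) := by
          rw [Matrix.mul_assoc]
    _ = 0 := by rw [h0, Matrix.mul_zero]
  have hroot : ∀ r, (A.charpoly).eval (θ r) = 0 := by
    intro r
    have h1 : (A.charpoly).eval (θ r)
        = ((Matrix.charmatrix A).map (Polynomial.evalRingHom (θ r))).det := by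
      rw [Matrix.charpoly, ← Polynomial.coe_evalRingHom, RingHom.map_det, RingHom.mapMatrix_apply]
    have h2 : (Matrix.charmatrix A).map (Polynomial.evalRingHom (θ r))
        = θ r • (1 : Matrix V V ℝ) - A := by
      ext i j
      by_cases h : i = j
      · subst h
        simp [Matrix.charmatrix_apply, Matrix.diagonal_apply]
      · simp [Matrix.charmatrix_apply, Matrix.diagonal_apply, h]
    rw [h1, h2, hdet r]
  have hprodmonic : (∏ s, (X - C (θ s))).Monic :=
    monic_prod_of_monic _ _ fun s _ => monic_X_sub_C _
  have hproddeg : (∏ s, (X - C (θ s))).natDegree = Fintype.card V := by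
    rw [natDegree_prod _ _ fun s _ => X_sub_C_ne_zero _]
    simp
  have hchar : A.charpoly = ∏ s, (X - C (θ s)) := by
    by_cases hz : A.charpoly - ∏ s, (X - C (θ s)) = 0
    · exact sub_eq_zero.mp hz
    exfalso
    apply hz
    refine Polynomial.eq_zero_of_natDegree_lt_card_of_eval_eq_zero _ hθ (fun r => ?_) ?_
    · rw [Polynomial.eval_sub, hroot r, Polynomial.eval_prod]
      rw [Finset.prod_eq_zero (Finset.mem_univ r) (by simp)]
      ring
    · have hdlt : (A.charpoly - ∏ s, (X - C (θ s))).degree < (Fintype.card V : ℕ) := by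
        have hdd : A.charpoly.degree = (∏ s, (X - C (θ s))).degree := by
          rw [Polynomial.degree_eq_natDegree A.charpoly_monic.ne_zero,
            Polynomial.degree_eq_natDegree hprodmonic.ne_zero,
            Matrix.charpoly_natDegree_eq_dim, hproddeg]
        have h3 := Polynomial.degree_sub_lt hdd A.charpoly_monic.ne_zero
          (by rw [A.charpoly_monic.leadingCoeff, hprodmonic.leadingCoeff])
        refine lt_of_lt_of_le h3 ?_
        rw [Polynomial.degree_eq_natDegree A.charpoly_monic.ne_zero,
          Matrix.charpoly_natDegree_eq_dim]
      rw [Fintype.card_fin]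
      exact (Polynomial.natDegree_lt_iff_degree_lt hz).mpr (by exact_mod_cast hdlt)
  have hderiv : ∀ r, (Polynomial.derivative A.charpoly).eval (θ r)
      = ∏ s ∈ Finset.univ.erase r, (θ r - θ s) := by
    intro r
    rw [hchar, derivative_finset_prod']
    rw [Polynomial.eval_finset_sum]
    rw [Finset.sum_eq_single r]
    · simp [Polynomial.eval_prod]
    · intro b _ hb
      rw [Polynomial.eval_mul, Polynomial.eval_prod]
      rw [Finset.prod_eq_zero (Finset.mem_erase.mpr ⟨Ne.symm hb, Finset.mem_univ r⟩) (by simp)]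
      ring
    · intro h; exact absurd (Finset.mem_univ r) h
  have hΔne : ∀ r, (Polynomial.derivative A.charpoly).eval (θ r) ≠ 0 := by
    intro r
    rw [hderiv r]
    apply Finset.prod_ne_zero_iff.mpr
    intro s hs
    exact sub_ne_zero.mpr fun h => (Finset.mem_erase.mp hs).1 (hθ h.symm)
  -- the adjugate of the characteristic matrix
  have hmapsmul : ∀ (r : Fin (Fintype.card V)), ((θ r • E r).map (Polynomial.C))
      = Polynomial.C (θ r) • ((E r).map Polynomial.C) := by
    intro r
    ext i j
    simp [Matrix.map_apply, Matrix.smul_apply, smul_eq_mul]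
  have hBmul : ∀ r, Matrix.charmatrix A * ((E r).map Polynomial.C)
      = (X - C (θ r)) • ((E r).map Polynomial.C) := by
    intro r
    rw [Matrix.charmatrix, Matrix.sub_mul, sub_smul]
    congr 1
    · rw [Matrix.scalar_apply, ← Matrix.smul_eq_diagonal_mul]
    · rw [RingHom.mapMatrix_apply, ← Matrix.map_mul, hAE r, hmapsmul r]
  have hmapone : (∑ r, (E r).map (Polynomial.C : ℝ →+* ℝ[X]))
      = (1 : Matrix V V ℝ[X]) := by
    ext i j
    rw [Matrix.sum_apply]
    simp only [Matrix.map_apply]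
    rw [← map_sum (Polynomial.C : ℝ →+* ℝ[X]) (fun r => E r i j) Finset.univ]
    have h1 : (∑ r, E r) i j = ∑ r, E r i j := Matrix.sum_apply i j _ _
    rw [hsum] at h1
    rw [← h1]
    by_cases h : i = j <;> simp [Matrix.one_apply, h]
  have hmul2 : Matrix.charmatrix A
        * (∑ r, (∏ s ∈ Finset.univ.erase r, (X - C (θ s))) • ((E r).map Polynomial.C))
      = A.charpoly • (1 : Matrix V V ℝ[X]) := by
    rw [Finset.mul_sum]
    have h1 : ∀ r : Fin (Fintype.card V),
        Matrix.charmatrix A * ((∏ s ∈ Finset.univ.erase r, (X - C (θ s))) • ((E r).map Polynomial.C))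
          = A.charpoly • ((E r).map Polynomial.C) := by
      intro r
      rw [Matrix.mul_smul, hBmul r, smul_smul, hchar,
        ← Finset.prod_erase_mul Finset.univ _ (Finset.mem_univ r)]
    simp_rw [h1]
    rw [← Finset.smul_sum, hmapone]
  have hadj : (Matrix.charmatrix A).adjugate
      = ∑ r, (∏ s ∈ Finset.univ.erase r, (X - C (θ s))) • ((E r).map Polynomial.C) := by
    have hBadj : Matrix.charmatrix A * (Matrix.charmatrix A).adjugate
        = A.charpoly • (1 : Matrix V V ℝ[X]) := by
      rw [Matrix.mul_adjugate]; rfl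
    have hadjB : (Matrix.charmatrix A).adjugate * Matrix.charmatrix A
        = A.charpoly • (1 : Matrix V V ℝ[X]) := by
      rw [Matrix.adjugate_mul]; rfl
    have key : A.charpoly • (Matrix.charmatrix A).adjugate
        = A.charpoly • (∑ r, (∏ s ∈ Finset.univ.erase r, (X - C (θ s))) • ((E r).map Polynomial.C)) := by
      calc A.charpoly • (Matrix.charmatrix A).adjugate
          = (A.charpoly • (1 : Matrix V V ℝ[X])) * (Matrix.charmatrix A).adjugate := by
            rw [Matrix.smul_mul, Matrix.one_mul]
      _ = ((Matrix.charmatrix A).adjugate * Matrix.charmatrix A) * (Matrix.charmatrix A).adjugate := by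
            rw [hadjB]
      _ = (Matrix.charmatrix A).adjugate * (Matrix.charmatrix A * (Matrix.charmatrix A).adjugate) := by
            rw [Matrix.mul_assoc]
      _ = (Matrix.charmatrix A).adjugate * (Matrix.charmatrix A
            * (∑ r, (∏ s ∈ Finset.univ.erase r, (X - C (θ s))) • ((E r).map Polynomial.C))) := by
            rw [hBadj, ← hmul2]
      _ = A.charpoly • (∑ r, (∏ s ∈ Finset.univ.erase r, (X - C (θ s))) • ((E r).map Polynomial.C)) := by
            rw [← Matrix.mul_assoc, hadjB, Matrix.smul_mul, Matrix.one_mul]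
    apply Matrix.ext
    intro i j
    have h2 := congrFun (congrFun key i) j
    simp only [Matrix.smul_apply, smul_eq_mul] at h2
    exact mul_left_cancel₀ A.charpoly_monic.ne_zero h2
  have heval : ∀ r (u v : V), Polynomial.eval (θ r) ((Matrix.charmatrix A).adjugate u v)
      = (Polynomial.derivative A.charpoly).eval (θ r) * E r u v := by
    intro r u v
    rw [hadj]
    have h1 : (∑ r', (∏ s ∈ Finset.univ.erase r', (X - C (θ s))) • ((E r').map Polynomial.C)) u v
        = ∑ r', (∏ s ∈ Finset.univ.erase r', (X - C (θ s))) * Polynomial.C (E r' u v) := by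
      rw [Matrix.sum_apply]
      simp [Matrix.smul_apply, smul_eq_mul, Matrix.map_apply]
    rw [h1, Polynomial.eval_finset_sum]
    rw [Finset.sum_eq_single r]
    · rw [Polynomial.eval_mul, Polynomial.eval_C, hderiv r]
      simp [Polynomial.eval_prod]
    · intro b _ hb
      rw [Polynomial.eval_mul, Polynomial.eval_prod,
        Finset.prod_eq_zero (Finset.mem_erase.mpr ⟨Ne.symm hb, Finset.mem_univ r⟩) (by simp),
        zero_mul]
    · intro h; exact absurd (Finset.mem_univ r) h
  have hdiag : ∀ (u : V) r,
      Polynomial.eval (θ r)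
          (Matrix.charpoly (A.submatrix (Subtype.val : {x : V // x ≠ u} → V) Subtype.val))
        = (Polynomial.derivative A.charpoly).eval (θ r) * E r u u := by
    intro u r
    have h1 : Matrix.charpoly (A.submatrix (Subtype.val : {x : V // x ≠ u} → V) Subtype.val)
        = (Matrix.charmatrix A).adjugate u u := by
      rw [adjugate_diag, charmatrix_submatrix' A _ Subtype.val_injective]
      rfl
    rw [h1, heval r u u]
  have hcv : coeffMatrix A * (Matrix.of fun i j : Fin (Fintype.card V) => θ j ^ (i : ℕ))
      = Matrix.of (fun (u : V) (r : Fin (Fintype.card V)) =>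
          (Polynomial.derivative A.charpoly).eval (θ r) * E r u u) := by
    apply Matrix.ext
    intro u r
    have hdeg : (Matrix.charpoly (A.submatrix (Subtype.val : {x : V // x ≠ u} → V)
        Subtype.val)).natDegree < Fintype.card V := by
      rw [Matrix.charpoly_natDegree_eq_dim]
      exact Fintype.card_subtype_lt (x := u) (by simp)
    rw [Matrix.mul_apply, Matrix.of_apply, ← hdiag u r,
      Polynomial.eval_eq_sum_range' hdeg (θ r), ← Fin.sum_univ_eq_sum_range]
    rfl
  have hproj : ∀ r, LinearMap.IsProj (LinearMap.range (E r).mulVecLin) (E r).mulVecLin := by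
    intro r
    refine ⟨fun x => LinearMap.mem_range_self _ x, ?_⟩
    rintro x ⟨y, rfl⟩
    show (E r).mulVec ((E r).mulVec y) = (E r).mulVec y
    rw [Matrix.mulVec_mulVec, hEE r]
  have htr : ∀ r, Matrix.trace (E r)
      = (Module.finrank ℝ (LinearMap.range (E r).mulVecLin) : ℝ) := by
    intro r
    rw [← (hproj r).trace]
    rw [LinearMap.trace_eq_matrix_trace ℝ (Pi.basisFun ℝ V), LinearMap.toMatrix_eq_toMatrix']
    congr 1
    apply Matrix.ext
    intro i j
    simp [LinearMap.toMatrix'_apply, Matrix.mulVecLin_apply, Matrix.mulVec, dotProduct,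
      mul_ite, Pi.single_apply]
  have hcard : ∑ r, Module.finrank ℝ (LinearMap.range (E r).mulVecLin) = Fintype.card V := by
    have h1 : ((∑ r, Module.finrank ℝ (LinearMap.range (E r).mulVecLin) : ℕ) : ℝ)
        = ((Fintype.card V : ℕ) : ℝ) := by
      push_cast
      rw [← Finset.sum_congr rfl (fun r _ => (htr r))]
      rw [← Matrix.trace_sum, hsum, Matrix.trace_one]
    exact_mod_cast h1
  have hrpos : ∀ r, 1 ≤ Module.finrank ℝ (LinearMap.range (E r).mulVecLin) := by
    intro r
    by_contra h
    push_neg at h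
    have h0 : Module.finrank ℝ (LinearMap.range (E r).mulVecLin) = 0 := by omega
    rw [Submodule.finrank_eq_zero] at h0
    apply hne r
    apply Matrix.ext
    intro i j
    have hm : (E r).mulVecLin (Pi.single j 1) ∈ LinearMap.range (E r).mulVecLin :=
      LinearMap.mem_range_self _ _
    rw [h0, Submodule.mem_bot] at hm
    have h2 := congrFun hm i
    simpa [Matrix.mulVecLin_apply] using h2
  have hr1 : ∀ r, Module.finrank ℝ (LinearMap.range (E r).mulVecLin) = 1 := by
    by_contra h
    push_neg at h
    obtain ⟨r, hr⟩ := h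
    have hlt : ∑ _r : Fin (Fintype.card V), 1
        < ∑ r, Module.finrank ℝ (LinearMap.range (E r).mulVecLin) :=
      Finset.sum_lt_sum (fun i _ => hrpos i)
        ⟨r, Finset.mem_univ r, lt_of_le_of_ne (hrpos r) (Ne.symm hr)⟩
    rw [hcard] at hlt
    simp at hlt
  have hrank1 : ∀ r (u v : V), E r u v * E r u v = E r u u * E r v v := by
    intro r u v
    obtain ⟨x, hx0, hxall⟩ := finrank_eq_one_iff'.mp (hr1 r)
    have hcol : ∀ j : V, ∃ c : ℝ, ∀ i, E r i j = c * (x : V → ℝ) i := by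
      intro j
      obtain ⟨c, hc⟩ := hxall ⟨(E r).mulVecLin (Pi.single j 1), LinearMap.mem_range_self _ _⟩
      refine ⟨c, fun i => ?_⟩
      have h2 := congrFun (congrArg Subtype.val hc) i
      simpa [Matrix.mulVecLin_apply] using h2.symm
    obtain ⟨cu, hcu⟩ := hcol u
    obtain ⟨cv, hcv2⟩ := hcol v
    have hs : E r u v = E r v u := ((hsymm r).apply u v).symm
    have h3 : E r u v = cv * (x : V → ℝ) u := hcv2 u
    have h4 : E r v u = cu * (x : V → ℝ) v := hcu v
    have h5 : E r u u = cu * (x : V → ℝ) u := hcu u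
    have h6 : E r v v = cv * (x : V → ℝ) v := hcv2 v
    have h8 : E r u v = cu * (x : V → ℝ) v := hs.trans h4
    calc E r u v * E r u v = (cv * (x : V → ℝ) u) * (cu * (x : V → ℝ) v) := by
          rw [← h3, ← h8]
    _ = (cu * (x : V → ℝ) u) * (cv * (x : V → ℝ) v) := by ring
    _ = E r u u * E r v v := by rw [h5, h6]
  have hD : ((Matrix.diagonal fun r =>
        Polynomial.eval (θ r) (Polynomial.derivative A.charpoly)) ^ 2)⁻¹
      = Matrix.diagonal
          (fun r => (Polynomial.eval (θ r) (Polynomial.derivative A.charpoly) ^ 2)⁻¹) := by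
    apply Matrix.inv_eq_right_inv
    rw [sq, Matrix.diagonal_mul_diagonal, Matrix.diagonal_mul_diagonal]
    have h9 : (fun r => Polynomial.eval (θ r) (Polynomial.derivative A.charpoly)
          * Polynomial.eval (θ r) (Polynomial.derivative A.charpoly)
          * (Polynomial.eval (θ r) (Polynomial.derivative A.charpoly) ^ 2)⁻¹)
        = fun _ : Fin (Fintype.card V) => (1 : ℝ) := by
      funext r
      rw [← sq]
      exact mul_inv_cancel₀ (pow_ne_zero 2 (hΔne r))
    rw [h9, Matrix.diagonal_one]
  rw [hD, Matrix.mul_assoc _ (Matrix.of fun i j : Fin (Fintype.card V) => θ j ^ (i : ℕ))ᵀ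
    (coeffMatrix A)ᵀ, ← Matrix.transpose_mul, hcv]
  apply Matrix.ext
  intro u v
  rw [Matrix.mul_apply, Matrix.sum_apply]
  refine Finset.sum_congr rfl fun r _ => ?_
  rw [Matrix.mul_diagonal, Matrix.transpose_apply, Matrix.of_apply, Matrix.of_apply,
    Matrix.hadamard_apply, hrank1 r u v]
  have hd := hΔne r
  field_simp
end

section
/- If M is a real symmetric n × n matrix of rank r, then there is a set S of r indices such that the principal submatrix of M with rows and columns indexed by S is invertible. -/
open Matrix


/-- A real symmetric matrix of rank `r` has an invertible `r × r`
principal submatrix. -/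
theorem exists_principal_submatrix_invertible {n : Type*} [Fintype n] [DecidableEq n]
    (M : Matrix n n ℝ) (hM : M.IsSymm) (r : ℕ) (hr : M.rank = r) :
    ∃ S : Finset n, S.card = r ∧
      IsUnit (M.submatrix (fun i : S => (i : n)) (fun i : S => (i : n))).det := by
  classical
  -- columns of M
  set col : n → (n → ℝ) := fun j => Mᵀ j with hcol
  obtain ⟨b, hbs, hbspan, hbli⟩ := exists_linearIndependent ℝ (Set.range col)
  have hbfin : b.Finite := (Set.finite_range col).subset hbs
  haveI : Fintype b := hbfin.fintype
  -- choose an index for each chosen column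
  have hsec : ∀ x : b, ∃ j : n, col j = (x : n → ℝ) := fun x => hbs x.2
  choose f hf using hsec
  have hfinj : Function.Injective f := by
    intro x y hxy
    apply Subtype.ext
    rw [← hf x, ← hf y, hxy]
  set S : Finset n := Finset.univ.image f with hS
  -- every element of S gives a column in b
  have hmem : ∀ s : n, s ∈ S → ∃ x : b, f x = s := by
    intro s hs
    simpa [hS] using hs
  have hScol : ∀ s : n, s ∈ S → col s ∈ b := by
    intro s hs
    obtain ⟨x, hx⟩ := hmem s hs
    rw [← hx, hf x]; exact x.2
  -- columns of `S` are pairwise distinct as vectors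
  have hcolinj : ∀ s t : S, col (s : n) = col (t : n) → s = t := by
    rintro ⟨s, hs⟩ ⟨t, ht⟩ h
    obtain ⟨x, hx⟩ := hmem s hs
    obtain ⟨y, hy⟩ := hmem t ht
    have : x = y := by
      apply Subtype.ext
      rw [← hf x, ← hf y, hx, hy]; exact h
    subst hx; subst hy
    simp [this]
  -- cardinality
  have hcardb : Fintype.card b = r := by
    have h1 : M.rank = Module.finrank ℝ (Submodule.span ℝ (Set.range col)) :=
      Matrix.rank_eq_finrank_span_cols M
    have h2 : Module.finrank ℝ (Submodule.span ℝ b) = b.toFinset.card :=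
      finrank_span_set_eq_card hbli
    have h3 : b.toFinset.card = Fintype.card b := Set.toFinset_card b
    rw [← hr, h1, ← hbspan, h2, h3]
  have hcard : S.card = r := by
    rw [hS, Finset.card_image_of_injective _ hfinj, Finset.card_univ, hcardb]
  refine ⟨S, hcard, ?_⟩
  -- the S-indexed column family is linearly independent
  have hli : LinearIndependent ℝ (fun s : S => col (s : n)) := by
    have : (fun s : S => col (s : n)) =
        ((↑) : b → (n → ℝ)) ∘ (fun s : S => (⟨col (s : n), hScol s s.2⟩ : b)) := rfl
    rw [this]
    apply hbli.comp
    intro s t hst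
    exact hcolinj s t (congrArg Subtype.val hst)
  -- every column lies in the span of S-columns
  have hspan : ∀ i : n, col i ∈ Submodule.span ℝ (Set.range (fun s : S => col (s : n))) := by
    intro i
    have hb_sub : b ⊆ Set.range (fun s : S => col (s : n)) := by
      intro x hx
      refine ⟨⟨f ⟨x, hx⟩, by simp [hS]⟩, ?_⟩
      exact hf ⟨x, hx⟩
    have h1 : col i ∈ Submodule.span ℝ (Set.range col) :=
      Submodule.subset_span ⟨i, rfl⟩
    rw [← hbspan] at h1
    exact Submodule.span_mono hb_sub h1
  -- finish: show mulVec injective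
  rw [← Matrix.isUnit_iff_isUnit_det, ← Matrix.mulVec_injective_iff_isUnit]
  set A : Matrix S S ℝ := M.submatrix (fun i : S => (i : n)) (fun i : S => (i : n)) with hA
  have key : ∀ v : S → ℝ, A.mulVec v = 0 → v = 0 := by
    intro v hv
    -- extend v by zero
    set x : n → ℝ := fun i => if h : i ∈ S then v ⟨i, h⟩ else 0 with hx
    set y : n → ℝ := M.mulVec x with hy
    have hyrep : y = ∑ s : S, v s • col (s : n) := by
      funext i
      rw [hy, Matrix.mulVec, dotProduct, Finset.sum_apply]
      have h4 : ∑ j : n, M i j * x j = ∑ j ∈ S, M i j * x j :=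
        (Finset.sum_subset (Finset.subset_univ S)
          (by intro j _ hj; simp [hx, hj])).symm
      have h5 : ∑ j ∈ S, M i j * x j = ∑ s ∈ S.attach, M i (s : n) * x (s : n) :=
        (Finset.sum_attach S (fun j => M i j * x j)).symm
      rw [h4, h5, Finset.univ_eq_attach]
      apply Finset.sum_congr rfl
      intro s _
      have hxs : x (s : n) = v s := by simp [hx, s.2]
      have hcoli : col (s : n) i = M i (s : n) := by
        simp only [hcol, Matrix.transpose_apply]
      rw [hxs, Pi.smul_apply, hcoli, smul_eq_mul, mul_comm]
    -- y vanishes on S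
    have hyS : ∀ s : S, y (s : n) = 0 := by
      intro s
      have heq : A.mulVec v s = y (s : n) := by
        rw [hA, hy, Matrix.mulVec, Matrix.mulVec, dotProduct, dotProduct]
        have h4 : ∑ j : n, M (s : n) j * x j = ∑ j ∈ S, M (s : n) j * x j :=
          (Finset.sum_subset (Finset.subset_univ S)
            (by intro j _ hj; simp [hx, hj])).symm
        have h5 : ∑ j ∈ S, M (s : n) j * x j
            = ∑ t ∈ S.attach, M (s : n) (t : n) * x (t : n) :=
          (Finset.sum_attach S (fun j => M (s : n) j * x j)).symm
        rw [h4, h5, Finset.univ_eq_attach]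
        apply Finset.sum_congr rfl
        intro t _
        have hxt : x (t : n) = v t := by simp [hx, t.2]
        simp [Matrix.submatrix_apply, hxt]
      rw [← heq, hv]; rfl
    -- y vanishes everywhere, using symmetry and the span property
    have hyzero : y = 0 := by
      funext i
      -- y i = col i ⬝ᵥ x
      have h1 : y i = dotProduct (col i) x := by
        rw [hy, Matrix.mulVec, dotProduct, dotProduct]
        apply Finset.sum_congr rfl
        intro j _
        have : col i j = M i j := by
          simp only [hcol, Matrix.transpose_apply]
          exact (Matrix.IsSymm.apply hM i j).symm ▸ rfl
        rw [show col i j = Mᵀ i j from rfl, Matrix.transpose_apply, hM.apply j i]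
      have h2 : ∀ w ∈ Submodule.span ℝ (Set.range (fun s : S => col (s : n))),
          dotProduct w x = 0 := by
        intro w hw
        induction hw using Submodule.span_induction with
        | mem w hw =>
          obtain ⟨s, rfl⟩ := hw
          have h3 : dotProduct (col (s : n)) x = y (s : n) := by
            rw [hy, Matrix.mulVec, dotProduct, dotProduct]
            apply Finset.sum_congr rfl
            intro j _
            rw [show col (s:n) j = Mᵀ (s:n) j from rfl, Matrix.transpose_apply,
              hM.apply j (s : n)]
          rw [h3, hyS s]
        | zero => simp
        | add w₁ w₂ _ _ h₁ h₂ => rw [add_dotProduct, h₁, h₂, add_zero]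
        | smul c w _ h₁ => rw [smul_dotProduct, h₁, smul_zero]
      rw [h1, h2 (col i) (hspan i)]
      rfl
    -- linear independence kills v
    have := Fintype.linearIndependent_iff.mp hli v (by rw [← hyrep, hyzero])
    funext s
    exact this s
  intro v w hvw
  have : A.mulVec (v - w) = 0 := by
    rw [Matrix.mulVec_sub, hvw, sub_self]
  have := key _ this
  exact sub_eq_zero.mp this
end

section
/- If T is a finite tree whose adjacency matrix has |V(T)| distinct eigenvalues, then either T has a perfect matching, or there exists a vertex v such that the graph T∖v obtained by deleting v has a perfect matching. -/
open scoped Matrix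
open SimpleGraph Finset

namespace TreePMaux

variable {V : Type*}

/-- Walk following the iterates of `σ`. -/
def iterWalk (G : SimpleGraph V) (σ : V → V) (hadj : ∀ i, G.Adj i (σ i)) (a : V) :
    (m : ℕ) → G.Walk a (σ^[m] a)
  | 0 => SimpleGraph.Walk.nil
  | (m+1) => (iterWalk G σ hadj a m).concat
      (by rw [Function.iterate_succ_apply']; exact hadj _)

lemma iterWalk_support (G : SimpleGraph V) (σ : V → V) (hadj : ∀ i, G.Adj i (σ i)) (a : V) :
    ∀ m, (iterWalk G σ hadj a m).support = (List.range (m+1)).map (fun i => σ^[i] a)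
  | 0 => by simp [iterWalk]
  | (m+1) => by
      rw [iterWalk, SimpleGraph.Walk.support_concat, iterWalk_support G σ hadj a m,
        List.range_succ (n := m+1)]
      simp

lemma iterWalk_length (G : SimpleGraph V) (σ : V → V) (hadj : ∀ i, G.Adj i (σ i)) (a : V) :
    ∀ m, (iterWalk G σ hadj a m).length = m
  | 0 => rfl
  | (m+1) => by rw [iterWalk, SimpleGraph.Walk.length_concat, iterWalk_length G σ hadj a m]

lemma sigma_invol [Fintype V] [DecidableEq V] (G : SimpleGraph V) (hac : G.IsAcyclic)
    (σ : Equiv.Perm V) (hadj : ∀ i, G.Adj i (σ i)) (a : V) : σ (σ a) = a := by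
  by_contra h2
  have h1 : σ a ≠ a := (hadj a).ne'
  have hex : ∃ n, 0 < n ∧ σ^[n] a = a := by
    refine ⟨orderOf σ, orderOf_pos σ, ?_⟩
    have : σ ^ (orderOf σ) = 1 := pow_orderOf_eq_one σ
    calc σ^[orderOf σ] a = (σ ^ orderOf σ) a := by
          rw [← Equiv.Perm.iterate_eq_pow]
      _ = a := by rw [this]; rfl
  classical
  set k := Nat.find hex with hkdef
  obtain ⟨hkpos, hkfix⟩ : 0 < k ∧ σ^[k] a = a := Nat.find_spec hex
  have hmin : ∀ m, m < k → ¬(0 < m ∧ σ^[m] a = a) := fun m hm => Nat.find_min hex hm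
  have hk3 : 3 ≤ k := by
    rcases Nat.lt_or_ge k 3 with h | h
    · interval_cases k
      · exact absurd hkfix h1
      · exact absurd hkfix (by simpa [Function.iterate_succ_apply'] using h2)
    · exact h
  have hinj : ∀ i j, i < k → j < k → σ^[i] a = σ^[j] a → i = j := by
    have key : ∀ i j, i ≤ j → j < k → σ^[i] a = σ^[j] a → i = j := by
      intro i j hij hj h
      by_contra hne
      have hlt : 0 < j - i := by omega
      have : σ^[i] (σ^[j-i] a) = σ^[i] a := by
        rw [← Function.iterate_add_apply, Nat.add_sub_cancel' hij, h]
      have hfix : σ^[j-i] a = a := (σ.injective.iterate i) this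
      exact hmin (j - i) (by omega) ⟨hlt, hfix⟩
    intro i j hi hj h
    rcases Nat.le_total i j with hij | hij
    · exact key i j hij hj h
    · exact (key j i hij hi h.symm).symm
  have hstep : σ (σ^[k-1] a) = a := by
    have h := (Function.iterate_succ_apply' (⇑σ) (k-1) a).symm
    rw [h]
    have hk1 : (k - 1).succ = k := by omega
    rw [hk1, hkfix]
  have hadj' : G.Adj a (σ^[k-1] a) := by
    have := hadj (σ^[k-1] a)
    rw [hstep] at this
    exact this.symm
  have hQpath : (iterWalk G σ hadj a (k-1)).IsPath := by
    rw [SimpleGraph.Walk.isPath_def, iterWalk_support]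
    have : k - 1 + 1 = k := by omega
    rw [this]
    refine List.Nodup.map_on ?_ List.nodup_range
    intro i hi j hj h
    exact hinj i j (List.mem_range.mp hi) (List.mem_range.mp hj) h
  have := (SimpleGraph.isAcyclic_iff_path_unique.mp hac)
    (SimpleGraph.Path.singleton hadj') ⟨iterWalk G σ hadj a (k-1), hQpath⟩
  have hlen : (SimpleGraph.Path.singleton hadj').1.length
      = (iterWalk G σ hadj a (k-1)).length := by rw [this]
  rw [iterWalk_length] at hlen
  have : (SimpleGraph.Path.singleton hadj').1.length = 1 := rfl
  omega

lemma pm_of_invol [Fintype V] (G : SimpleGraph V) (σ : Equiv.Perm V)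
    (hadj : ∀ i, G.Adj i (σ i)) (hinv : ∀ i, σ (σ i) = i) :
    ∃ M : G.Subgraph, M.IsPerfectMatching := by
  refine ⟨{ verts := Set.univ
            Adj := fun a b => G.Adj a b ∧ σ a = b
            adj_sub := fun h => h.1
            edge_vert := fun _ => trivial
            symm := ?_ }, ?_, fun v => trivial⟩
  · refine ⟨?_⟩
    rintro a b ⟨h, rfl⟩
    exact ⟨h.symm, hinv a⟩
  · intro v _
    exact ⟨σ v, ⟨hadj v, rfl⟩, fun w hw => hw.2.symm⟩

lemma pm_of_det_ne_zero [Fintype V] [DecidableEq V] (G : SimpleGraph V) [DecidableRel G.Adj]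
    (hac : G.IsAcyclic) (hdet : (G.adjMatrix ℝ).det ≠ 0) :
    ∃ M : G.Subgraph, M.IsPerfectMatching := by
  rw [Matrix.det_apply] at hdet
  obtain ⟨σ, -, hσ⟩ := Finset.exists_ne_zero_of_sum_ne_zero hdet
  have hprod : ∏ i, G.adjMatrix ℝ (σ i) i ≠ 0 := by
    intro h; rw [h] at hσ; exact hσ (smul_zero _)
  have hadj : ∀ i, G.Adj i (σ i) := by
    intro i
    have hne := Finset.prod_ne_zero_iff.mp hprod i (Finset.mem_univ i)
    have h : G.Adj (σ i) i := by
      by_contra hcon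
      rw [SimpleGraph.adjMatrix_apply, if_neg hcon] at hne
      exact hne rfl
    exact h.symm
  exact pm_of_invol G σ hadj (sigma_invol G hac σ hadj)

lemma induce_acyclic (G : SimpleGraph V) (hac : G.IsAcyclic) (s : Set V) :
    (G.induce s).IsAcyclic := by
  rw [SimpleGraph.isAcyclic_iff_path_unique]
  intro v w p q
  have huniq := SimpleGraph.isAcyclic_iff_path_unique.mp hac
  have := huniq (p.mapEmbedding (SimpleGraph.Embedding.induce s))
    (q.mapEmbedding (SimpleGraph.Embedding.induce s))
  exact SimpleGraph.Path.mapEmbedding_injective (SimpleGraph.Embedding.induce s) v w this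

variable [Fintype V] [DecidableEq V]

omit [DecidableEq V] in
lemma row_sq (E : Matrix V V ℝ) (hs : ∀ i j, E i j = E j i)
    (hm : ∀ i j, ∑ k, E i k * E k j = E i j) (i : V) :
    ∑ k, (E i k) ^ 2 = E i i := by
  rw [← hm i i]
  exact Finset.sum_congr rfl fun k _ => by rw [hs k i, sq]

omit [DecidableEq V] in
lemma trace_ge_one (E : Matrix V V ℝ) (hs : ∀ i j, E i j = E j i)
    (hm : ∀ i j, ∑ k, E i k * E k j = E i j) (hne : ∃ a b, E a b ≠ 0) :
    1 ≤ ∑ i, E i i := by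
  obtain ⟨a, b, hab⟩ := hne
  set x : V → ℝ := fun i => E i b with hx
  have hfix : ∀ i, ∑ k, E i k * x k = x i := fun i => hm i b
  have hS : 0 < ∑ i, (x i) ^ 2 := by
    have h1 : (x a) ^ 2 ≤ ∑ i, (x i) ^ 2 :=
      Finset.single_le_sum (f := fun i => (x i)^2) (fun i _ => sq_nonneg _) (Finset.mem_univ a)
    have hxa : x a ≠ 0 := hab
    have h0 : 0 < x a ^ 2 := by positivity
    linarith
  have key : ∑ i, (x i) ^ 2 ≤ (∑ i, E i i) * ∑ i, (x i) ^ 2 := by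
    calc ∑ i, (x i) ^ 2 = ∑ i, (∑ k, E i k * x k) ^ 2 := by
          refine Finset.sum_congr rfl fun i _ => ?_; rw [hfix]
      _ ≤ ∑ i, (E i i) * ∑ k, (x k) ^ 2 := by
          refine Finset.sum_le_sum fun i _ => ?_
          have hcs := Finset.sum_mul_sq_le_sq_mul_sq Finset.univ (fun k => E i k) x
          calc (∑ k, E i k * x k) ^ 2 ≤ (∑ k, (E i k) ^ 2) * ∑ k, (x k) ^ 2 := hcs
            _ = (E i i) * ∑ k, (x k) ^ 2 := by rw [row_sq E hs hm]
      _ = (∑ i, E i i) * ∑ i, (x i) ^ 2 := by rw [← Finset.sum_mul]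
  nlinarith [key, hS]

lemma rank_one (E : Matrix V V ℝ) (hs : ∀ i j, E i j = E j i)
    (hm : ∀ i j, ∑ k, E i k * E k j = E i j) (htr : ∑ i, E i i = 1) :
    ∃ u : V → ℝ, u ≠ 0 ∧ ∀ i j, E i j = u i * u j := by
  have hne : ∃ a b, E a b ≠ 0 := by
    by_contra h
    push_neg at h
    rw [Finset.sum_congr rfl (fun i _ => h i i)] at htr
    simp at htr
  obtain ⟨a, b, hab⟩ := hne
  set c : ℝ := E b b with hc
  have hcolsq : ∑ k, (E k b)^2 = c := by
    rw [hc, ← hm b b]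
    exact Finset.sum_congr rfl fun k _ => by rw [hs b k, sq]
  have hcpos : 0 < c := by
    have h3 : (E a b)^2 ≤ ∑ k, (E k b)^2 :=
      Finset.single_le_sum (f := fun k => (E k b)^2) (fun k _ => sq_nonneg _) (Finset.mem_univ a)
    have h0 : 0 < (E a b)^2 := by positivity
    linarith [hcolsq]
  have hdiag_le : ∀ i, (E i b)^2 ≤ E i i * c := by
    intro i
    have hcs := Finset.sum_mul_sq_le_sq_mul_sq Finset.univ (fun k => E i k) (fun k => E k b)
    rw [hm i b, row_sq E hs hm, hcolsq] at hcs
    exact hcs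
  have htrF : ∑ i, (E i i * c - (E i b)^2) = 0 := by
    rw [Finset.sum_sub_distrib, ← Finset.sum_mul, htr, hcolsq, one_mul, sub_self]
  have hdiag : ∀ i, E i i * c = (E i b)^2 := by
    intro i
    have h := (Finset.sum_eq_zero_iff_of_nonneg
      (fun i _ => sub_nonneg.mpr (hdiag_le i))).mp htrF i (Finset.mem_univ i)
    linarith [h]
  have hpsd : ∀ x : V → ℝ,
      0 ≤ c * (∑ p, x p * ∑ q, x q * E p q) - (∑ p, x p * E p b)^2 := by
    intro x
    set y : V → ℝ := fun k => ∑ i, x i * E i k with hy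
    have hQ : ∑ p, x p * ∑ q, x q * E p q = ∑ k, (y k)^2 := by
      calc ∑ p, x p * ∑ q, x q * E p q
          = ∑ p, ∑ q, x p * (x q * E p q) := by
            exact Finset.sum_congr rfl fun p _ => Finset.mul_sum _ _ _
        _ = ∑ p, ∑ q, x p * (x q * ∑ k, E p k * E k q) := by
            refine Finset.sum_congr rfl fun p _ => Finset.sum_congr rfl fun q _ => ?_
            rw [hm p q]
        _ = ∑ p, ∑ q, ∑ k, (x p * E p k) * (x q * E k q) := by
            refine Finset.sum_congr rfl fun p _ => Finset.sum_congr rfl fun q _ => ?_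
            rw [Finset.mul_sum, Finset.mul_sum]
            exact Finset.sum_congr rfl fun k _ => by ring
        _ = ∑ p, ∑ k, ∑ q, (x p * E p k) * (x q * E k q) :=
            Finset.sum_congr rfl fun p _ => Finset.sum_comm
        _ = ∑ k, ∑ p, ∑ q, (x p * E p k) * (x q * E k q) := Finset.sum_comm
        _ = ∑ k, (∑ p, x p * E p k) * (∑ q, x q * E k q) := by
            refine Finset.sum_congr rfl fun k _ => ?_
            rw [Finset.sum_mul_sum]
        _ = ∑ k, (y k)^2 := by
            refine Finset.sum_congr rfl fun k _ => ?_
            have : ∑ q, x q * E k q = y k := by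
              refine Finset.sum_congr rfl fun q _ => by rw [hs k q]
            rw [this, hy, sq]
    have hL : ∑ p, x p * E p b = ∑ k, y k * E k b := by
      calc ∑ p, x p * E p b = ∑ p, x p * ∑ k, E p k * E k b := by
            refine Finset.sum_congr rfl fun p _ => by rw [hm p b]
        _ = ∑ p, ∑ k, (x p * E p k) * E k b := by
            refine Finset.sum_congr rfl fun p _ => ?_
            rw [Finset.mul_sum]
            exact Finset.sum_congr rfl fun k _ => by ring
        _ = ∑ k, ∑ p, (x p * E p k) * E k b := Finset.sum_comm
        _ = ∑ k, y k * E k b := by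
            refine Finset.sum_congr rfl fun k _ => ?_
            rw [hy, ← Finset.sum_mul]
    have hcs := Finset.sum_mul_sq_le_sq_mul_sq Finset.univ y (fun k => E k b)
    rw [hcolsq] at hcs
    rw [hQ, hL]
    nlinarith [hcs]
  have hoff : ∀ i j, E i j * c = E i b * E j b := by
    intro i j
    rcases eq_or_ne i j with rfl | hij
    · rw [hdiag i]; ring
    · have key : ∀ s : ℝ,
          0 ≤ c * (E i i + 2 * s * E i j + s^2 * E j j) - (E i b + s * E j b)^2 := by
        intro s
        set x : V → ℝ := fun p => (if p = i then 1 else 0) + (if p = j then s else 0) with hxdef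
        have hsum1 : ∀ f : V → ℝ, ∑ p, x p * f p = f i + s * f j := by
          intro f
          have : ∀ p, x p * f p =
              (if p = i then f p else 0) + (if p = j then s * f p else 0) := by
            intro p
            simp only [hxdef]
            by_cases h1 : p = i
            · have h2 : p ≠ j := by rw [h1]; exact hij
              rw [if_pos h1, if_neg h2, if_pos h1, if_neg h2]; ring
            · by_cases h2 : p = j
              · rw [if_neg h1, if_pos h2, if_neg h1, if_pos h2]; ring
              · rw [if_neg h1, if_neg h2, if_neg h1, if_neg h2]; ring
          rw [Finset.sum_congr rfl fun p _ => this p, Finset.sum_add_distrib,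
            Finset.sum_ite_eq' Finset.univ i f,
            Finset.sum_ite_eq' Finset.univ j (fun p => s * f p)]
          simp
        have hQx : ∑ p, x p * ∑ q, x q * E p q
            = E i i + 2 * s * E i j + s^2 * E j j := by
          have hinner : ∀ p, ∑ q, x q * E p q = E p i + s * E p j := fun p => hsum1 _
          rw [Finset.sum_congr rfl fun p _ => by rw [hinner p]]
          rw [hsum1 (fun p => E p i + s * E p j)]
          have h1 : E j i = E i j := hs j i
          rw [h1]; ring
        have hLx : ∑ p, x p * E p b = E i b + s * E j b := hsum1 _
        have := hpsd x
        rw [hQx, hLx] at this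
        exact this
      have k1 := key 1
      have k2 := key (-1)
      have d1 := hdiag i
      have d2 := hdiag j
      nlinarith [k1, k2, d1, d2]
  refine ⟨fun i => E i b / Real.sqrt c, ?_, ?_⟩
  · intro h
    have hb : E b b / Real.sqrt c = 0 := congrFun h b
    have hsq : Real.sqrt c ≠ 0 := ne_of_gt (Real.sqrt_pos.mpr hcpos)
    rw [div_eq_zero_iff] at hb
    rcases hb with h1 | h2
    · exact (ne_of_gt hcpos) (hc ▸ h1.symm ▸ rfl)
    · exact hsq h2
  · intro i j
    have hss : Real.sqrt c * Real.sqrt c = c := Real.mul_self_sqrt hcpos.le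
    have h := hoff i j
    field_simp
    rw [Real.sq_sqrt hcpos.le]
    nlinarith [h, hss]

lemma det_minor (M : Matrix V V ℝ) (v : V) :
    (M.updateRow v (Pi.single v 1)).det
      = (M.submatrix (Subtype.val : {u | u ≠ v} → V) Subtype.val).det := by
  classical
  set s : Set V := {u | u ≠ v} with hsdef
  set N := M.updateRow v (Pi.single v 1) with hN
  rw [← Matrix.det_submatrix_equiv_self (Equiv.sumCompl (fun x => x ∈ s)) N]
  haveI : Unique {x // ¬ x ∈ s} := by
    refine ⟨⟨⟨v, by simp [hsdef]⟩⟩, ?_⟩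
    rintro ⟨x, hx⟩
    have : x = v := by simpa [hsdef] using hx
    exact Subtype.ext this
  have hblock : N.submatrix (Equiv.sumCompl (fun x => x ∈ s))
        (Equiv.sumCompl (fun x => x ∈ s)) =
      Matrix.fromBlocks (M.submatrix (Subtype.val : {x // x ∈ s} → V) Subtype.val)
        (Matrix.of fun (p : {x // x ∈ s}) (q : {x // ¬ x ∈ s}) => M p.1 q.1)
        0 (Matrix.of fun _ _ => (1 : ℝ)) := by
    ext i j
    have hval : ∀ q : {x // ¬ x ∈ s}, q.1 = v := fun q => by
      have := q.2; simpa [hsdef] using this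
    cases i with
    | inl p =>
        have hp : p.1 ≠ v := p.2
        cases j with
        | inl q =>
            simp only [Matrix.submatrix_apply, Equiv.sumCompl_apply_inl,
              Matrix.fromBlocks_apply₁₁, hN]
            rw [Matrix.updateRow_ne hp]
        | inr q =>
            simp only [Matrix.submatrix_apply, Equiv.sumCompl_apply_inl,
              Equiv.sumCompl_apply_inr, Matrix.fromBlocks_apply₁₂, Matrix.of_apply, hN]
            rw [Matrix.updateRow_ne hp]
    | inr p =>
        have hp : p.1 = v := hval p
        cases j with
        | inl q =>
            have hq : q.1 ≠ v := q.2
            simp only [Matrix.submatrix_apply, Equiv.sumCompl_apply_inl,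
              Equiv.sumCompl_apply_inr, Matrix.fromBlocks_apply₂₁, Matrix.zero_apply, hN]
            rw [Matrix.updateRow_apply, if_pos hp]
            exact Pi.single_eq_of_ne hq 1
        | inr q =>
            have hq : q.1 = v := hval q
            simp only [Matrix.submatrix_apply, Equiv.sumCompl_apply_inr,
              Matrix.fromBlocks_apply₂₂, Matrix.of_apply, hN]
            rw [Matrix.updateRow_apply, if_pos hp, hq]
            exact Pi.single_eq_same v 1
  rw [hblock, Matrix.det_fromBlocks_zero₂₁]
  have h1 : (Matrix.of fun (_ _ : {x // ¬ x ∈ s}) => (1:ℝ)).det = 1 := by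
    rw [Matrix.det_unique]; rfl
  rw [h1, mul_one]

end TreePMaux

/-- If `T` is a tree whose adjacency matrix has `|V(T)|` distinct
eigenvalues, then either `T` has a perfect matching, or `T ∖ v` has a perfect matching for
some vertex `v`. -/
theorem tree_perfectMatching_or_deleted {V : Type*} [Fintype V] [DecidableEq V]
    (T : SimpleGraph V) [DecidableRel T.Adj] (hT : T.IsTree)
    (θ : Fin (Fintype.card V) → ℝ) (hθ : Function.Injective θ)
    (E : Fin (Fintype.card V) → Matrix V V ℝ)
    (hsymm : ∀ r, (E r).IsSymm)
    (horth : ∀ r s, E r * E s = if r = s then E r else 0)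
    (hne : ∀ r, E r ≠ 0)
    (hsum : ∑ r, E r = 1)
    (hdecomp : T.adjMatrix ℝ = ∑ r, θ r • E r) :
    (∃ M : T.Subgraph, M.IsPerfectMatching) ∨
      ∃ v : V, ∃ M : (T.induce {u | u ≠ v}).Subgraph, M.IsPerfectMatching := by
  classical
  by_cases h0 : ∀ r, θ r ≠ 0
  · -- all eigenvalues nonzero : A is invertible, T has a perfect matching
    left
    have hAB : T.adjMatrix ℝ * (∑ s, (θ s)⁻¹ • E s) = 1 := by
      rw [hdecomp, Finset.sum_mul_sum]
      have hterm : ∀ r, ∑ s, (θ r • E r) * ((θ s)⁻¹ • E s) = E r := by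
        intro r
        have h1 : ∀ s, (θ r • E r) * ((θ s)⁻¹ • E s)
            = (θ r * (θ s)⁻¹) • (E r * E s) := by
          intro s
          rw [Matrix.smul_mul, Matrix.mul_smul, smul_smul]
        rw [Finset.sum_congr rfl fun s _ => h1 s]
        rw [Finset.sum_eq_single r
          (fun s _ hs => by rw [horth r s, if_neg (Ne.symm hs), smul_zero])
          (fun h => absurd (Finset.mem_univ r) h)]
        rw [horth r r, if_pos rfl, mul_inv_cancel₀ (h0 r), one_smul]
      rw [Finset.sum_congr rfl fun r _ => hterm r, hsum]
    exact TreePMaux.pm_of_det_ne_zero T hT.IsAcyclic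
      (Matrix.det_ne_zero_of_right_inverse hAB)
  · -- some eigenvalue is zero
    right
    push_neg at h0
    obtain ⟨r0, hr0⟩ := h0
    -- basic consequences of the hypotheses
    have hEsymm : ∀ r (i j : V), E r i j = E r j i := fun r i j =>
      ((hsymm r).apply j i)
    have hEE : ∀ r (i j : V), ∑ k, E r i k * E r k j = E r i j := by
      intro r i j
      have h := horth r r
      rw [if_pos rfl] at h
      calc ∑ k, E r i k * E r k j = (E r * E r) i j := (Matrix.mul_apply).symm
        _ = E r i j := by rw [h]
    have hEne : ∀ r, ∃ a b, E r a b ≠ 0 := by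
      intro r
      by_contra h
      push_neg at h
      exact hne r (by ext a b; exact h a b)
    -- traces are all equal to one
    have htrsum : ∑ r, ∑ i, E r i i = (Fintype.card V : ℝ) := by
      rw [Finset.sum_comm]
      have : ∀ i, ∑ r, E r i i = 1 := by
        intro i
        calc ∑ r, E r i i = (∑ r, E r) i i := (Matrix.sum_apply i i _ _).symm
          _ = (1 : Matrix V V ℝ) i i := by rw [hsum]
          _ = 1 := Matrix.one_apply_eq i
      rw [Finset.sum_congr rfl fun i _ => this i]
      simp
    have htrge : ∀ r, 1 ≤ ∑ i, E r i i := fun r =>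
      TreePMaux.trace_ge_one (E r) (hEsymm r) (hEE r) (hEne r)
    have htr1 : ∀ r, ∑ i, E r i i = 1 := by
      intro r
      by_contra hcon
      have hgt : 1 < ∑ i, E r i i := lt_of_le_of_ne (htrge r) (Ne.symm hcon)
      have : ∑ (r : Fin (Fintype.card V)), (1 : ℝ) < ∑ r, ∑ i, E r i i :=
        Finset.sum_lt_sum (fun s _ => htrge s) ⟨r, Finset.mem_univ r, hgt⟩
      rw [htrsum] at this
      simp at this
    -- rank one decomposition of each E r
    have hu : ∀ r, ∃ u : V → ℝ, u ≠ 0 ∧ ∀ i j, E r i j = u i * u j := fun r =>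
      TreePMaux.rank_one (E r) (hEsymm r) (hEE r) (htr1 r)
    choose u hu0 huE using hu
    have huex : ∀ r, ∃ i, u r i ≠ 0 := fun r => Function.ne_iff.mp (hu0 r)
    -- normalization and orthogonality
    have hnorm : ∀ r, ∑ k, (u r k)^2 = 1 := by
      intro r
      obtain ⟨i, hi⟩ := huex r
      have h := hEE r i i
      have h2 : ∑ k, (u r i * u r k) * (u r k * u r i) = u r i * u r i := by
        rw [Finset.sum_congr rfl fun k _ => by rw [← huE r i k, ← huE r k i], h, huE r i i]
      have h3 : (u r i * u r i) * ∑ k, (u r k)^2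
          = ∑ k, (u r i * u r k) * (u r k * u r i) := by
        rw [Finset.mul_sum]
        exact Finset.sum_congr rfl fun k _ => by ring
      have h4 : (u r i * u r i) * ∑ k, (u r k)^2 = (u r i * u r i) * 1 := by
        rw [h3, h2, mul_one]
      exact mul_left_cancel₀ (mul_ne_zero hi hi) h4
    have horthu : ∀ r s, r ≠ s → ∑ k, u r k * u s k = 0 := by
      intro r s hrs
      obtain ⟨i, hi⟩ := huex r
      obtain ⟨j, hj⟩ := huex s
      have h := horth r s
      rw [if_neg hrs] at h
      have h2 : ∑ k, E r i k * E s k j = 0 := by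
        calc ∑ k, E r i k * E s k j = (E r * E s) i j := (Matrix.mul_apply).symm
          _ = 0 := by rw [h]; rfl
      have h3 : (u r i * u s j) * ∑ k, u r k * u s k = 0 := by
        rw [Finset.mul_sum, ← h2]
        refine Finset.sum_congr rfl fun k _ => ?_
        rw [huE r i k, huE s k j]
        ring
      exact (mul_eq_zero.mp h3).resolve_left (mul_ne_zero hi hj)
    -- the orthogonal matrix U
    let φ : V ≃ Fin (Fintype.card V) := Fintype.equivFin V
    set U : Matrix V V ℝ := Matrix.of (fun i w => u (φ w) i) with hUdef
    have hUtU : Uᵀ * U = 1 := by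
      ext w w'
      rw [Matrix.mul_apply]
      rcases eq_or_ne w w' with rfl | hww
      · rw [Matrix.one_apply_eq]
        calc ∑ i, Uᵀ w i * U i w = ∑ i, (u (φ w) i)^2 :=
              Finset.sum_congr rfl fun i _ => by
                rw [Matrix.transpose_apply]; simp [hUdef, sq]
          _ = 1 := hnorm (φ w)
      · rw [Matrix.one_apply_ne hww]
        calc ∑ i, Uᵀ w i * U i w' = ∑ i, u (φ w) i * u (φ w') i :=
              Finset.sum_congr rfl fun i _ => by
                rw [Matrix.transpose_apply]; simp [hUdef]
          _ = 0 := horthu _ _ (fun hc => hww (φ.injective hc))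
    have hUUt : U * Uᵀ = 1 := mul_eq_one_comm.mp hUtU
    -- entries of U * diagonal d * Uᵀ
    have hUDU : ∀ (d : V → ℝ) (i j : V),
        (U * Matrix.diagonal d * Uᵀ) i j = ∑ w, d w * (U i w * U j w) := by
      intro d i j
      rw [Matrix.mul_apply]
      refine Finset.sum_congr rfl fun w _ => ?_
      rw [Matrix.mul_diagonal, Matrix.transpose_apply]
      ring
    -- A = U D Uᵀ
    set D : Matrix V V ℝ := Matrix.diagonal (fun w => θ (φ w)) with hDdef
    have hAU : T.adjMatrix ℝ = U * D * Uᵀ := by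
      ext i j
      rw [hdecomp, hDdef, hUDU]
      rw [Matrix.sum_apply]
      have h1 : ∀ r, (θ r • E r) i j = θ r * (u r i * u r j) := by
        intro r
        rw [Matrix.smul_apply, huE r i j]
        rfl
      rw [Finset.sum_congr rfl fun r _ => h1 r]
      have h2 : ∀ w : V, θ (φ w) * (U i w * U j w)
          = (fun r => θ r * (u r i * u r j)) (φ w) := by
        intro w; simp [hUdef]
      rw [Finset.sum_congr rfl fun w _ => h2 w]
      exact (Equiv.sum_comp φ _).symm
    -- adjugate computations
    have hdetsq : U.det * U.det = 1 := by
      calc U.det * U.det = U.det * Uᵀ.det := by rw [Matrix.det_transpose]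
        _ = (U * Uᵀ).det := (Matrix.det_mul _ _).symm
        _ = 1 := by rw [hUUt, Matrix.det_one]
    have hadjU : U.adjugate = U.det • Uᵀ := by
      calc U.adjugate = U.adjugate * (U * Uᵀ) := by rw [hUUt, Matrix.mul_one]
        _ = (U.adjugate * U) * Uᵀ := by rw [Matrix.mul_assoc]
        _ = (U.det • 1) * Uᵀ := by rw [Matrix.adjugate_mul]
        _ = U.det • Uᵀ := by rw [Matrix.smul_mul, Matrix.one_mul]
    have hadjUt : Uᵀ.adjugate = U.det • U := by
      calc Uᵀ.adjugate = Uᵀ.adjugate * (Uᵀ * U) := by rw [hUtU, Matrix.mul_one]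
        _ = (Uᵀ.adjugate * Uᵀ) * U := by rw [Matrix.mul_assoc]
        _ = (Uᵀ.det • 1) * U := by rw [Matrix.adjugate_mul]
        _ = U.det • U := by rw [Matrix.det_transpose, Matrix.smul_mul, Matrix.one_mul]
    have hadjA : (T.adjMatrix ℝ).adjugate = U * D.adjugate * Uᵀ := by
      calc (T.adjMatrix ℝ).adjugate = (U * D * Uᵀ).adjugate := by rw [hAU]
        _ = Uᵀ.adjugate * (U * D).adjugate := Matrix.adjugate_mul_distrib _ _
        _ = Uᵀ.adjugate * (D.adjugate * U.adjugate) := by rw [Matrix.adjugate_mul_distrib]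
        _ = (U.det • U) * (D.adjugate * (U.det • Uᵀ)) := by rw [hadjUt, hadjU]
        _ = (U.det * U.det) • (U * (D.adjugate * Uᵀ)) := by
            rw [Matrix.smul_mul, Matrix.mul_smul, Matrix.mul_smul, smul_smul]
        _ = U * D.adjugate * Uᵀ := by rw [hdetsq, one_smul, Matrix.mul_assoc]
    have hadjD : D.adjugate
        = Matrix.diagonal (fun w => ∏ w' ∈ Finset.univ.erase w, θ (φ w')) := by
      rw [hDdef, Matrix.adjugate_diagonal]
    -- the vertex to delete
    set w0 : V := φ.symm r0 with hw0
    have hφw0 : φ w0 = r0 := φ.apply_symm_apply r0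
    obtain ⟨v, hv⟩ := huex r0
    have hUvw0 : U v w0 = u r0 v := by simp [hUdef, hφw0]
    -- the diagonal entry of the adjugate is nonzero
    have hentry : (T.adjMatrix ℝ).adjugate v v
        = (∏ w' ∈ Finset.univ.erase w0, θ (φ w')) * (u r0 v * u r0 v) := by
      rw [hadjA, hadjD, hUDU]
      rw [Finset.sum_eq_single w0 ?h1 ?h2]
      · rw [hUvw0]
      case h1 =>
        intro w _ hw
        have hmem : w0 ∈ Finset.univ.erase w := Finset.mem_erase.mpr ⟨Ne.symm hw, Finset.mem_univ _⟩
        rw [Finset.prod_eq_zero hmem (by rw [hφw0, hr0]), zero_mul]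
      case h2 =>
        intro h
        exact absurd (Finset.mem_univ w0) h
    have hprodne : (∏ w' ∈ Finset.univ.erase w0, θ (φ w')) ≠ 0 := by
      rw [Finset.prod_ne_zero_iff]
      intro w' hw'
      have hw'ne : w' ≠ w0 := (Finset.mem_erase.mp hw').1
      intro hzero
      apply hw'ne
      have : θ (φ w') = θ r0 := by rw [hzero, hr0]
      have := hθ this
      rw [← hφw0] at this
      exact φ.injective this
    have hadjvv : (T.adjMatrix ℝ).adjugate v v ≠ 0 := by
      rw [hentry]
      exact mul_ne_zero hprodne (mul_ne_zero hv hv)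
    -- conclude
    refine ⟨v, ?_⟩
    haveI hdec : DecidableRel (T.induce {u | u ≠ v}).Adj := fun a b =>
      decidable_of_iff (T.Adj a b) (by rw [SimpleGraph.comap_adj]; rfl)
    have hsub : (T.induce {u | u ≠ v}).adjMatrix ℝ
        = (T.adjMatrix ℝ).submatrix (Subtype.val : {u | u ≠ v} → V) Subtype.val := by
      ext i j
      rw [Matrix.submatrix_apply, SimpleGraph.adjMatrix_apply, SimpleGraph.adjMatrix_apply]
      congr 1
    have hdet : ((T.induce {u | u ≠ v}).adjMatrix ℝ).det ≠ 0 := by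
      rw [hsub, ← TreePMaux.det_minor, ← Matrix.adjugate_apply]
      exact hadjvv
    exact TreePMaux.pm_of_det_ne_zero _ (TreePMaux.induce_acyclic T hT.IsAcyclic _) hdet
end
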